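/- arXiv:1909.03381 — 7 statements merged into one kernel-verified Lean document; each statement's English description precedes it below -/
import Mathlib

section
/- Let T be a tree on n vertices and x a vertex of T. Then x is in the median of T (i.e., the status of x is minimum among all vertices) if and only if the branch-weight of x is at most n/2, where the branch-weight of x is the maximum number of vertices in a component of T - x. -/
open SimpleGraph

variable {V : Type*}

/-- The status of a vertex: sum of distances to all other vertices. -/
noncomputable def status [Fintype V] (G : SimpleGraph V) (u : V) : ℕ :=
  ∑ v : V, G.dist u v

/-- The minimum status of a graph. -/
noncomputable def minStatus [Fintype V] (G : SimpleGraph V) : ℕ :=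
  sInf (Set.range (status G))

/-- The matching number: maximum cardinality of a matching. -/
noncomputable def matchingNumber (G : SimpleGraph V) : ℕ :=
  sSup {k | ∃ M : G.Subgraph, M.IsMatching ∧ M.edgeSet.ncard = k}

/-- The domination number: minimum cardinality of a dominating set. -/
noncomputable def domNumber (G : SimpleGraph V) : ℕ :=
  sInf {k | ∃ S : Set V, (∀ v ∉ S, ∃ u ∈ S, G.Adj u v) ∧ S.ncard = k}

/-- The dumbbell `D_n(p,q)`: a path on `n - p - q` vertices `0, …, n-p-q-1`,
with `p` pendant vertices attached to vertex `0` and `q` pendant vertices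
attached to vertex `n-p-q-1`. -/
def dumbbell (n p q : ℕ) : SimpleGraph (Fin n) :=
  SimpleGraph.fromRel (fun a b =>
    ((a : ℕ) + 1 = (b : ℕ) ∧ (b : ℕ) < n - p - q) ∨
    ((a : ℕ) = 0 ∧ n - p - q ≤ (b : ℕ) ∧ (b : ℕ) < n - q) ∨
    ((a : ℕ) = n - p - q - 1 ∧ n - q ≤ (b : ℕ)))

/-- The tree `A_{n,m}`: a star with center `0` and leaves `1, …, n-m`, with one
pendant vertex `n-m+i` attached to leaf `i` for each `i = 1, …, m-1`. -/
def treeA (n m : ℕ) : SimpleGraph (Fin n) :=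
  SimpleGraph.fromRel (fun a b =>
    ((a : ℕ) = 0 ∧ 1 ≤ (b : ℕ) ∧ (b : ℕ) ≤ n - m) ∨
    (1 ≤ (a : ℕ) ∧ (a : ℕ) ≤ m - 1 ∧ (b : ℕ) = n - m + (a : ℕ)))

/-- The caterpillar `C_n(p,q)`: a path on vertices `0, …, n-p-q-1`; pendant
vertex `n-p-q+j` is attached to path vertex `j` for `j = 0, …, p-1`, and pendant
vertex `n-q+j` is attached to path vertex `n-p-2q+j` for `j = 0, …, q-1`. -/
def caterpillar (n p q : ℕ) : SimpleGraph (Fin n) :=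
  SimpleGraph.fromRel (fun a b =>
    ((a : ℕ) + 1 = (b : ℕ) ∧ (b : ℕ) < n - p - q) ∨
    (n - p - q ≤ (b : ℕ) ∧ (b : ℕ) < n - q ∧ (a : ℕ) = (b : ℕ) - (n - p - q)) ∨
    (n - q ≤ (b : ℕ) ∧ (a : ℕ) = (b : ℕ) - p - q))

/-- The branch-weight of a vertex `x` in a tree: the maximum number of vertices
of a component of `T - x`. -/
noncomputable def branchWeight [Fintype V] (T : SimpleGraph V) (x : V) : ℕ :=
  sSup {k | ∃ c : (T.induce {v : V | v ≠ x}).ConnectedComponent, c.supp.ncard = k}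


section MedianHelpers

variable [DecidableEq V] {T : SimpleGraph V}

/-- In a tree, every path realizes the distance between its endpoints. -/
private lemma tree_path_length_eq_dist (hT : T.IsTree) {a b : V} {p : T.Walk a b}
    (hp : p.IsPath) : p.length = T.dist a b := by
  obtain ⟨q, hq⟩ := hT.isConnected.exists_walk_length_eq_dist a b
  have h1 : q.bypass.length ≤ q.length := Walk.length_bypass_le q
  have h2 : T.dist a b ≤ q.bypass.length := dist_le _
  have huniq := isAcyclic_iff_path_unique.mp hT.IsAcyclic ⟨p, hp⟩ q.toPath
  have hpe : p = q.bypass := congrArg Subtype.val huniq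
  rw [hpe]; omega

/-- Existence of the (geodesic) path between two vertices of a tree. -/
private lemma tree_exists_path (hT : T.IsTree) (a b : V) :
    ∃ p : T.Walk a b, p.IsPath ∧ p.length = T.dist a b := by
  obtain ⟨q, _⟩ := hT.isConnected.exists_walk_length_eq_dist a b
  exact ⟨q.bypass, q.bypass_isPath, tree_path_length_eq_dist hT q.bypass_isPath⟩

/-- If `x` lies on the path from `a` to `b` in a tree, distances add up. -/
private lemma tree_dist_add_of_mem (hT : T.IsTree) {a b x : V} {p : T.Walk a b}
    (hp : p.IsPath) (hx : x ∈ p.support) :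
    T.dist a b = T.dist a x + T.dist x b := by
  have h1 := tree_path_length_eq_dist hT (hp.takeUntil hx)
  have h2 := tree_path_length_eq_dist hT (hp.dropUntil hx)
  have h3 : ((p.takeUntil x hx).append (p.dropUntil x hx)).length = p.length := by
    rw [Walk.take_spec]
  rw [Walk.length_append] at h3
  have h4 := tree_path_length_eq_dist hT hp
  omega

/-- For an edge `uv` of a tree, each vertex is strictly closer to exactly one of `u, v`. -/
private lemma tree_dist_dichotomy (hT : T.IsTree) {u v : V} (h : T.Adj u v) (w : V) :
    T.dist u w = T.dist v w + 1 ∨ T.dist v w = T.dist u w + 1 := by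
  obtain ⟨p, hp, hlen⟩ := tree_exists_path hT u w
  by_cases hv : v ∈ p.support
  · left
    have hadd := tree_dist_add_of_mem hT hp hv
    have hd1 : T.dist u v = 1 := dist_eq_one_iff_adj.mpr h
    omega
  · right
    have hcons : (Walk.cons h.symm p).IsPath := hp.cons hv
    have := tree_path_length_eq_dist hT hcons
    rw [Walk.length_cons] at this
    omega

variable [Fintype V]

/-- The set of vertices strictly closer to `v` than to `u` (for an edge `uv`). -/
private noncomputable def side (T : SimpleGraph V) (u v : V) : Finset V :=
  @Finset.filter _ (fun w => T.dist u w = T.dist v w + 1) (Classical.decPred _) Finset.univ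

private lemma mem_side {u v w : V} :
    w ∈ side T u v ↔ T.dist u w = T.dist v w + 1 := by
  simp [side]

private lemma side_compl (hT : T.IsTree) {u v : V} (h : T.Adj u v) :
    (side T u v)ᶜ = side T v u := by
  ext w
  rcases tree_dist_dichotomy hT h w with h1 | h1 <;>
    simp only [Finset.mem_compl, mem_side] <;> omega

private lemma side_card_add (hT : T.IsTree) {u v : V} (h : T.Adj u v) :
    (side T u v).card + (side T v u).card = Fintype.card V := by
  rw [← side_compl hT h, Finset.card_add_card_compl]

/-- Status difference along an edge of a tree. -/
private lemma status_sub (hT : T.IsTree) {u v : V} (h : T.Adj u v) :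
    (status T u : ℤ) - status T v = (side T u v).card - (side T v u).card := by
  have key : ∀ w : V, (T.dist u w : ℤ) - T.dist v w =
      if w ∈ side T u v then 1 else -1 := by
    intro w
    by_cases hw : w ∈ side T u v
    · rw [if_pos hw]
      have := mem_side.mp hw
      omega
    · rw [if_neg hw]
      rcases tree_dist_dichotomy hT h w with h1 | h1
      · exact absurd (mem_side.mpr h1) hw
      · omega
  have h0 : (status T u : ℤ) - status T v
      = ∑ w : V, ((T.dist u w : ℤ) - T.dist v w) := by
    rw [Finset.sum_sub_distrib]
    simp [status]
  rw [h0]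
  calc ∑ w : V, ((T.dist u w : ℤ) - T.dist v w)
      = ∑ w : V, (if w ∈ side T u v then (1 : ℤ) else -1) :=
        Finset.sum_congr rfl fun w _ => key w
    _ = ∑ w ∈ side T u v, (1 : ℤ) + ∑ w ∈ (side T u v)ᶜ, (-1 : ℤ) := by
        rw [← Finset.sum_add_sum_compl (side T u v)
          (fun w => if w ∈ side T u v then (1 : ℤ) else -1)]
        congr 1
        · exact Finset.sum_congr rfl fun w hw => if_pos hw
        · exact Finset.sum_congr rfl fun w hw => if_neg (Finset.mem_compl.mp hw)
    _ = (side T u v).card - (side T v u).card := by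
        rw [← side_compl hT h]
        simp [sub_eq_add_neg]

/-- A walk avoiding the complement of `s` gives reachability in the induced graph. -/
private lemma reachable_induce_of_walk {s : Set V} :
    ∀ {a b : V} (p : T.Walk a b) (hs : ∀ v ∈ p.support, v ∈ s),
      (T.induce s).Reachable ⟨a, hs a p.start_mem_support⟩ ⟨b, hs b p.end_mem_support⟩ := by
  intro a b p
  induction p with
  | nil => exact fun hs => Reachable.refl _
  | @cons a c b h q ih =>
    intro hs
    have hc : c ∈ s := hs c (by simp)
    have ha : a ∈ s := hs a (by simp)
    have hadj : (T.induce s).Adj ⟨a, ha⟩ ⟨c, hc⟩ := by simpa using h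
    exact hadj.reachable.trans (ih fun v hv => hs v (by simp [hv]))

/-- Reachability in an induced graph gives a path avoiding the complement. -/
private lemma exists_path_avoiding {s : Set V} {a b : s}
    (h : (T.induce s).Reachable a b) :
    ∃ p : T.Walk a b, p.IsPath ∧ ∀ v ∈ p.support, v ∈ s := by
  obtain ⟨q⟩ := h
  have hq := q.map (Embedding.induce s).toHom
  refine ⟨(q.map (Embedding.induce s).toHom).toPath.1,
    (q.map (Embedding.induce s).toHom).toPath.2, fun v hv => ?_⟩
  have hv' := Walk.support_toPath_subset _ hv
  erw [Walk.support_map] at hv'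
  obtain ⟨u, _, rfl⟩ := List.mem_map.mp hv'
  exact u.2

/-- For an edge `xy` of a tree, the side of `y` is the component of `y` in `T - x`. -/
private lemma side_eq_component (hT : T.IsTree) {x y : V} (hxy : T.Adj x y) (w : V) :
    w ∈ side T x y ↔ ∃ hw : w ≠ x,
      (T.induce {v : V | v ≠ x}).connectedComponentMk ⟨w, hw⟩ =
        (T.induce {v : V | v ≠ x}).connectedComponentMk ⟨y, hxy.ne'⟩ := by
  constructor
  · intro hws
    have hd := mem_side.mp hws
    have hwx : w ≠ x := by
      rintro rfl
      rw [SimpleGraph.dist_self] at hd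
      omega
    obtain ⟨p, hp, hlen⟩ := tree_exists_path hT y w
    have hx : x ∉ p.support := by
      intro hx
      have hadd := tree_dist_add_of_mem hT hp hx
      have h1 : T.dist y x = 1 := dist_eq_one_iff_adj.mpr hxy.symm
      have h2 : T.dist x w = T.dist y w + 1 := hd
      omega
    have hr := reachable_induce_of_walk (s := {v : V | v ≠ x}) p
      (fun v hv => show v ∈ {u : V | u ≠ x} from fun hvx => hx (hvx ▸ hv))
    exact ⟨hwx, ConnectedComponent.sound hr.symm⟩
  · rintro ⟨hw, hc⟩
    have hr := ConnectedComponent.exact hc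
    obtain ⟨p, hp, hsup⟩ := exists_path_avoiding hr
    have hxns : x ∉ p.support := fun hx => (hsup x hx) rfl
    have hconcat : (p.concat hxy.symm).IsPath := by
      rw [Walk.isPath_def, Walk.support_concat]
      rw [List.nodup_append]
      refine ⟨hp.support_nodup, List.nodup_singleton x, ?_⟩
      intro v hv b hb heq
      rw [List.mem_singleton] at hb
      subst hb; subst heq
      exact hxns hv
    have hlc := tree_path_length_eq_dist hT hconcat
    rw [Walk.length_concat] at hlc
    have hlp := tree_path_length_eq_dist hT hp
    have hlc' : p.length + 1 = T.dist w x := hlc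
    have hlp' : p.length = T.dist w y := hlp
    rw [mem_side, dist_comm (u := x), dist_comm (u := y)]
    omega

/-- The cardinality of the component of `y` in `T - x` equals the side of `y`. -/
private lemma component_card (hT : T.IsTree) {x y : V} (hxy : T.Adj x y) :
    (((T.induce {v : V | v ≠ x}).connectedComponentMk ⟨y, hxy.ne'⟩).supp).ncard
      = (side T x y).card := by
  have him : Subtype.val ''
      ((T.induce {v : V | v ≠ x}).connectedComponentMk ⟨y, hxy.ne'⟩).supp
      = ↑(side T x y) := by
    ext w
    simp only [Set.mem_image, Finset.mem_coe]
    rw [side_eq_component hT hxy w]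
    constructor
    · rintro ⟨u, hu, rfl⟩
      exact ⟨u.2, (ConnectedComponent.mem_supp_iff _ _).mp hu⟩
    · rintro ⟨hw, hc⟩
      exact ⟨⟨w, hw⟩, (ConnectedComponent.mem_supp_iff _ _).mpr hc, rfl⟩
  rw [← Set.ncard_image_of_injective _ Subtype.val_injective, him, Set.ncard_coe_finset]

/-- Every component of `T - x` is the side of some neighbour `z` of `x`. -/
private lemma component_exists_side (hT : T.IsTree) {x : V}
    (c : (T.induce {v : V | v ≠ x}).ConnectedComponent) :
    ∃ z, T.Adj x z ∧ c.supp.ncard = (side T x z).card := by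
  obtain ⟨⟨w, hw⟩, hrep⟩ := c.exists_rep
  have hrep' : (T.induce {v : V | v ≠ x}).connectedComponentMk ⟨w, hw⟩ = c := hrep
  obtain ⟨p, hp, hlen⟩ := tree_exists_path hT x w
  have hw' : w ≠ x := hw
  have hd0 : T.dist x w ≠ 0 := by
    simp only [ne_eq, hT.isConnected.dist_eq_zero_iff]
    exact fun h => hw' h.symm
  have hnil : ¬ p.Nil := by rw [Walk.nil_iff_length_eq]; omega
  obtain ⟨z, hxz, q, rfl⟩ := Walk.not_nil_iff.mp hnil
  rw [Walk.cons_isPath_iff] at hp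
  have hreach : (T.induce {v : V | v ≠ x}).Reachable ⟨z, hxz.ne'⟩ ⟨w, hw⟩ :=
    reachable_induce_of_walk q
      (fun v hv => show v ∈ {u : V | u ≠ x} from fun hvx => hp.2 (hvx ▸ hv))
  have hcc : (T.induce {v : V | v ≠ x}).connectedComponentMk ⟨w, hw⟩ =
      (T.induce {v : V | v ≠ x}).connectedComponentMk ⟨z, hxz.ne'⟩ :=
    ConnectedComponent.sound hreach.symm
  rw [← hrep', hcc]
  exact ⟨z, hxz, component_card hT hxz⟩

private lemma bw_bddAbove (T : SimpleGraph V) (x : V) :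
    BddAbove {k | ∃ c : (T.induce {v : V | v ≠ x}).ConnectedComponent,
      c.supp.ncard = k} := by
  refine ⟨Fintype.card V, ?_⟩
  rintro k ⟨c, rfl⟩
  calc c.supp.ncard ≤ (Set.univ : Set {v : V | v ≠ x}).ncard :=
        Set.ncard_le_ncard (Set.subset_univ _) Set.finite_univ
    _ = Fintype.card {v : V | v ≠ x} := by rw [Set.ncard_univ, Nat.card_eq_fintype_card]
    _ ≤ Fintype.card V := Fintype.card_subtype_le _

end MedianHelpers

/-- A vertex of a tree is in the median iff its branch-weight is at most `n/2`. -/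
theorem stmt0 [Fintype V] (T : SimpleGraph V) (hT : T.IsTree) (x : V) :
    (∀ y : V, status T x ≤ status T y) ↔
      2 * branchWeight T x ≤ Fintype.card V := by
  classical
  constructor
  · intro hmed
    rcases Set.eq_empty_or_nonempty
        {k | ∃ c : (T.induce {v : V | v ≠ x}).ConnectedComponent, c.supp.ncard = k}
      with hBe | hBne
    · rw [branchWeight, hBe, csSup_empty]
      simp
    · have hmem := Nat.sSup_mem hBne (bw_bddAbove T x)
      obtain ⟨c, hc⟩ := hmem
      obtain ⟨z, hxz, hcard⟩ := component_exists_side hT c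
      have hsum := side_card_add hT hxz
      have hdiff := status_sub hT hxz.symm
      have hle : (status T x : ℤ) ≤ status T z := by exact_mod_cast hmed z
      have hbw : branchWeight T x = (side T x z).card := by
        rw [branchWeight]; exact hc.symm.trans hcard
      rw [hbw]
      omega
  · intro hbw y
    suffices H : ∀ d (y : V), T.dist x y = d → status T x ≤ status T y from H _ y rfl
    intro d
    induction d with
    | zero =>
      intro y hy
      have hxy : x = y := (hT.isConnected.dist_eq_zero_iff).mp hy
      rw [hxy]
    | succ d ih =>
      intro y hy
      obtain ⟨p, hp, hlen⟩ := tree_exists_path hT y x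
      rw [dist_comm, hy] at hlen
      have hnil : ¬ p.Nil := by rw [Walk.nil_iff_length_eq]; omega
      obtain ⟨z, hyz, q, rfl⟩ := Walk.not_nil_iff.mp hnil
      rw [Walk.cons_isPath_iff] at hp
      rw [Walk.length_cons] at hlen
      have hzx : T.dist z x = d := by
        rw [← tree_path_length_eq_dist hT hp.1]; omega
      have hdz : T.dist x z = d := by rw [dist_comm]; exact hzx
      have h1 : status T x ≤ status T z := ih z hdz
      have hyx : y ≠ x := by
        rintro rfl
        rw [SimpleGraph.dist_self] at hy
        omega
      have hsub : (↑(side T z y) : Set V) ⊆ Subtype.val ''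
          ((T.induce {v : V | v ≠ x}).connectedComponentMk ⟨y, hyx⟩).supp := by
        intro w hwmem
        have hd := mem_side.mp (Finset.mem_coe.mp hwmem)
        have hyx' : T.dist y x = d + 1 := by rw [dist_comm]; exact hy
        have hwx : w ≠ x := by
          rintro rfl
          rw [dist_comm (u := z)] at hd
          rw [dist_comm (u := y)] at hd
          omega
        obtain ⟨pw, hpw, hpwlen⟩ := tree_exists_path hT y w
        have hxs : x ∉ pw.support := by
          intro hx
          have hadd := tree_dist_add_of_mem hT hpw hx
          have htri := hT.isConnected.dist_triangle (u := z) (v := x) (w := w)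
          omega
        have hr := reachable_induce_of_walk (s := {v : V | v ≠ x}) pw
          (fun v hv => show v ∈ {u : V | u ≠ x} from fun hvx => hxs (hvx ▸ hv))
        exact ⟨⟨w, hwx⟩,
          (ConnectedComponent.mem_supp_iff _ _).mpr (ConnectedComponent.sound hr.symm), rfl⟩
      have hcardle : (side T z y).card ≤ branchWeight T x := by
        calc (side T z y).card = (↑(side T z y) : Set V).ncard :=
              (Set.ncard_coe_finset _).symm
          _ ≤ (Subtype.val ''
              ((T.induce {v : V | v ≠ x}).connectedComponentMk ⟨y, hyx⟩).supp).ncard :=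
              Set.ncard_le_ncard hsub (Set.toFinite _)
          _ = (((T.induce {v : V | v ≠ x}).connectedComponentMk ⟨y, hyx⟩).supp).ncard :=
              Set.ncard_image_of_injective _ Subtype.val_injective
          _ ≤ branchWeight T x := le_csSup (bw_bddAbove T x) ⟨_, rfl⟩
      have hdiff := status_sub hT hyz
      have hsum := side_card_add hT hyz
      have h2 : status T z ≤ status T y := by
        have hzy : (status T z : ℤ) ≤ status T y := by omega
        exact_mod_cast hzy
      exact le_trans h1 h2
end

section
/- Let G be a connected graph and uv a non-pendant cut edge of G (i.e., a cut edge neither of whose endpoints has degree one). Let G_{uv} be the graph obtained from G by contracting the edge uv to a single vertex u and attaching a new pendant vertex v to u. Then the minimum status of G is strictly greater than the minimum status of G_{uv}. -/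
open SimpleGraph

variable {V : Type*}

private lemma walkMap_aux {G H : SimpleGraph V} {φ : V → V}
    (hφ : ∀ ⦃x y : V⦄, G.Adj x y → H.Adj (φ x) (φ y) ∨ φ x = φ y) :
    ∀ {a b : V} (W : G.Walk a b), ∃ W' : H.Walk (φ a) (φ b), W'.length ≤ W.length := by
  intro a b W
  induction W with
  | nil => exact ⟨SimpleGraph.Walk.nil, le_rfl⟩
  | cons h W ih =>
    obtain ⟨W', hW'⟩ := ih
    rcases hφ h with h' | h'
    · exact ⟨SimpleGraph.Walk.cons h' W', by simpa using Nat.succ_le_succ hW'⟩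
    · exact ⟨W'.copy h'.symm rfl, by simpa using Nat.le_succ_of_le hW'⟩

private lemma distMap_aux {G H : SimpleGraph V} (hG : G.Connected) {φ : V → V}
    (hφ : ∀ ⦃x y : V⦄, G.Adj x y → H.Adj (φ x) (φ y) ∨ φ x = φ y) (a b : V) :
    H.dist (φ a) (φ b) ≤ G.dist a b := by
  obtain ⟨W, hW⟩ := hG.exists_walk_length_eq_dist a b
  obtain ⟨W', hW'⟩ := walkMap_aux hφ W
  calc H.dist (φ a) (φ b) ≤ W'.length := SimpleGraph.dist_le W'
    _ ≤ W.length := hW'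
    _ = G.dist a b := hW

private lemma crossWalk_aux {G : SimpleGraph V} (hG : G.Connected) {u v : V}
    (hbridge : G.IsBridge s(u, v)) :
    ∀ {a b : V} (W : G.Walk a b), (G \ fromEdgeSet {s(u, v)}).Reachable u a →
      (G \ fromEdgeSet {s(u, v)}).Reachable v b →
      G.dist a u + 1 + G.dist v b ≤ W.length := by
  intro a b W
  induction W with
  | nil =>
    intro ha hb
    exact absurd (ha.trans hb.symm) hbridge
  | @cons x c b h W ih =>
    intro ha hb
    by_cases hxc : s(x, c) = s(u, v)
    · rcases Sym2.eq_iff.mp hxc with ⟨hx, hc⟩ | ⟨hx, hc⟩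
      · subst hx; subst hc
        simp only [SimpleGraph.dist_self, SimpleGraph.Walk.length_cons, zero_add]
        have := SimpleGraph.dist_le W
        omega
      · subst hx
        exact absurd ha hbridge
    · have hGm : (G \ fromEdgeSet {s(u, v)}).Adj x c := by
        rw [SimpleGraph.sdiff_adj]
        exact ⟨h, fun hc => hxc (by simpa using hc.1)⟩
      have ih' := ih (ha.trans hGm.reachable) hb
      have h1 : G.dist x u ≤ G.dist x c + G.dist c u := hG.dist_triangle
      have h2 : G.dist x c ≤ 1 := (SimpleGraph.dist_eq_one_iff_adj.mpr h).le
      simp only [SimpleGraph.Walk.length_cons]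
      omega

private lemma crossDist_aux {G : SimpleGraph V} (hG : G.Connected) {u v : V}
    (hbridge : G.IsBridge s(u, v)) {a b : V}
    (ha : (G \ fromEdgeSet {s(u, v)}).Reachable u a)
    (hb : (G \ fromEdgeSet {s(u, v)}).Reachable v b) :
    G.dist a u + 1 + G.dist v b ≤ G.dist a b := by
  obtain ⟨W, hW⟩ := hG.exists_walk_length_eq_dist a b
  exact hW ▸ crossWalk_aux hG hbridge W ha hb

private lemma cover_aux {G : SimpleGraph V} {u v : V} :
    ∀ {x y : V}, G.Walk x y →
      ((G \ fromEdgeSet {s(u, v)}).Reachable u x ∨ (G \ fromEdgeSet {s(u, v)}).Reachable v x) →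
      ((G \ fromEdgeSet {s(u, v)}).Reachable u y ∨ (G \ fromEdgeSet {s(u, v)}).Reachable v y) := by
  intro x y W
  induction W with
  | nil => exact id
  | @cons x c _ h W ih =>
    intro hx
    apply ih
    by_cases hxc : s(x, c) = s(u, v)
    · rcases Sym2.eq_iff.mp hxc with ⟨hx1, hc1⟩ | ⟨hx1, hc1⟩
      · exact Or.inr (hc1 ▸ SimpleGraph.Reachable.refl _)
      · exact Or.inl (hc1 ▸ SimpleGraph.Reachable.refl _)
    · have hGm : (G \ fromEdgeSet {s(u, v)}).Adj x c := by
        rw [SimpleGraph.sdiff_adj]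
        exact ⟨h, fun hc => hxc (by simpa using hc.1)⟩
      rcases hx with h' | h'
      · exact Or.inl (h'.trans hGm.reachable)
      · exact Or.inr (h'.trans hGm.reachable)

/-- Contracting a non-pendant cut edge `uv` and attaching the pendant vertex `v`
back at `u` strictly decreases the minimum status. -/
theorem stmt1 [Fintype V] (G : SimpleGraph V) (hG : G.Connected) (u v : V)
    (huv : G.Adj u v) (hbridge : G.IsBridge s(u, v))
    (hu : 2 ≤ (G.neighborSet u).ncard) (hv : 2 ≤ (G.neighborSet v).ncard) :
    minStatus (SimpleGraph.fromRel (fun a b =>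
      (a = v ∧ b = u) ∨
      (a ≠ v ∧ b ≠ v ∧ (G.Adj a b ∨ (a = u ∧ G.Adj v b) ∨ (b = u ∧ G.Adj a v)))))
      < minStatus G := by
  classical
  set H : SimpleGraph V := SimpleGraph.fromRel (fun a b =>
      (a = v ∧ b = u) ∨
      (a ≠ v ∧ b ≠ v ∧ (G.Adj a b ∨ (a = u ∧ G.Adj v b) ∨ (b = u ∧ G.Adj a v)))) with hHdef
  set Gm : SimpleGraph V := G \ fromEdgeSet {s(u, v)} with hGmdef
  have hune : u ≠ v := huv.ne
  set φ : V → V := fun x => if x = v then u else x with hφdef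
  have hφv : φ v = u := if_pos rfl
  have hφx : ∀ x, x ≠ v → φ x = x := fun x hx => if_neg hx
  have hφu : φ u = u := hφx u hune
  have hHuv : H.Adj u v := by
    rw [hHdef, SimpleGraph.fromRel_adj]
    exact ⟨hune, Or.inr (Or.inl ⟨rfl, rfl⟩)⟩
  have hhom : ∀ ⦃x y : V⦄, G.Adj x y → H.Adj (φ x) (φ y) ∨ φ x = φ y := by
    intro x y hxy
    by_cases hx : x = v
    · have hyv : y ≠ v := fun h => hxy.ne (hx.trans h.symm)
      by_cases hyu : y = u
      · right; rw [hx, hyu, hφv, hφu]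
      · left
        rw [hx, hφv, hφx y hyv, hHdef, SimpleGraph.fromRel_adj]
        refine ⟨fun h => hyu h.symm, Or.inl (Or.inr ⟨hune, hyv, Or.inr (Or.inl ⟨rfl, ?_⟩)⟩)⟩
        rw [← hx]; exact hxy
    · by_cases hy : y = v
      · by_cases hxu : x = u
        · right; rw [hy, hxu, hφv, hφu]
        · left
          rw [hy, hφv, hφx x hx, hHdef, SimpleGraph.fromRel_adj]
          refine ⟨hxu, Or.inr (Or.inr ⟨hune, hx, Or.inr (Or.inl ⟨rfl, ?_⟩)⟩)⟩
          rw [← hy]; exact hxy.symm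
      · left
        rw [hφx x hx, hφx y hy, hHdef, SimpleGraph.fromRel_adj]
        exact ⟨hxy.ne, Or.inl (Or.inr ⟨hx, hy, Or.inl hxy⟩)⟩
  have hreachu : ∀ b, H.Reachable u b := by
    intro b
    by_cases hb : b = v
    · exact hb ▸ hHuv.reachable
    · obtain ⟨W⟩ := hG.preconnected u b
      obtain ⟨W', _⟩ := walkMap_aux hhom W
      exact ⟨W'.copy hφu (hφx b hb)⟩
  have hHconn : H.Connected := (SimpleGraph.connected_iff H).mpr
    ⟨fun a b => (hreachu a).symm.trans (hreachu b), hG.nonempty⟩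
  have hdmap : ∀ a b : V, H.dist (φ a) (φ b) ≤ G.dist a b := fun a b => distMap_aux hG hhom a b
  have hdisj : ∀ x, Gm.Reachable u x → Gm.Reachable v x → False := fun x h1 h2 =>
    (SimpleGraph.isBridge_iff.mp hbridge) (h1.trans h2.symm)
  have hcover : ∀ x : V, Gm.Reachable u x ∨ Gm.Reachable v x := by
    intro x
    obtain ⟨W⟩ := hG.preconnected u x
    exact cover_aux W (Or.inl (SimpleGraph.Reachable.refl u))
  have hcross : ∀ {a b : V}, Gm.Reachable u a → Gm.Reachable v b →
      G.dist a u + 1 + G.dist v b ≤ G.dist a b := fun ha hb => crossDist_aux hG hbridge ha hb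
  -- a pendant-side neighbor of v other than u, and one of u other than v
  obtain ⟨x, hxmem, hxu⟩ :=
    Set.exists_ne_of_one_lt_ncard (show 1 < (G.neighborSet v).ncard by omega) u
  have hvx : G.Adj v x := hxmem
  have hxv : x ≠ v := fun h => G.loopless.irrefl v (h ▸ hvx)
  have hGmvx : Gm.Adj v x := by
    rw [hGmdef, SimpleGraph.sdiff_adj]
    refine ⟨hvx, fun hc => ?_⟩
    rw [SimpleGraph.fromEdgeSet_adj, Set.mem_singleton_iff] at hc
    rcases Sym2.eq_iff.mp hc.1 with ⟨h1, _⟩ | ⟨_, h2⟩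
    · exact hune h1.symm
    · exact hxu h2
  obtain ⟨y, hymem, hyv⟩ :=
    Set.exists_ne_of_one_lt_ncard (show 1 < (G.neighborSet u).ncard by omega) v
  have huy : G.Adj u y := hymem
  have hyu : y ≠ u := fun h => G.loopless.irrefl u (h ▸ huy)
  have hGmuy : Gm.Adj u y := by
    rw [hGmdef, SimpleGraph.sdiff_adj]
    refine ⟨huy, fun hc => ?_⟩
    rw [SimpleGraph.fromEdgeSet_adj, Set.mem_singleton_iff] at hc
    rcases Sym2.eq_iff.mp hc.1 with ⟨_, h2⟩ | ⟨h1, _⟩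
    · exact hyv h2
    · exact hune h1
  -- the minimizing vertex
  have hVne : Nonempty V := hG.nonempty
  have hmem : minStatus G ∈ Set.range (status G) := Nat.sInf_mem (Set.range_nonempty _)
  obtain ⟨a, ha⟩ := hmem
  have hle : minStatus H ≤ status H (φ a) := Nat.sInf_le ⟨φ a, rfl⟩
  refine lt_of_le_of_lt hle ?_
  rw [← ha]
  have hdφu : H.dist (φ a) u ≤ G.dist a u := by have := hdmap a u; rwa [hφu] at this
  have hdφav : H.dist (φ a) u ≤ G.dist a v := by have := hdmap a v; rwa [hφv] at this
  rcases hcover a with haSu | haSv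
  · -- a on the u-side
    have hav : a ≠ v := fun h => hdisj v (h ▸ haSu) (SimpleGraph.Reachable.refl v)
    have hφa : φ a = a := hφx a hav
    have hpt : ∀ b : V, H.dist (φ a) b ≤ G.dist a b := by
      intro b
      by_cases hb : b = v
      · rw [hb]
        have t1 : H.dist (φ a) v ≤ H.dist (φ a) u + H.dist u v := hHconn.dist_triangle (v := u)
        have t2 : H.dist u v = 1 := SimpleGraph.dist_eq_one_iff_adj.mpr hHuv
        have t4 : G.dist a u + 1 + G.dist v v ≤ G.dist a v :=
          hcross haSu (SimpleGraph.Reachable.refl v)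
        rw [SimpleGraph.dist_self] at t4
        omega
      · have := hdmap a b; rwa [hφx b hb] at this
    have hstrict : H.dist (φ a) x < G.dist a x := by
      have hHux : H.Adj u x := by
        rw [hHdef, SimpleGraph.fromRel_adj]
        exact ⟨fun h => hxu h.symm, Or.inl (Or.inr ⟨hune, hxv, Or.inr (Or.inl ⟨rfl, hvx⟩)⟩)⟩
      have t1 : H.dist (φ a) x ≤ H.dist (φ a) u + H.dist u x := hHconn.dist_triangle (v := u)
      have t2 : H.dist u x = 1 := SimpleGraph.dist_eq_one_iff_adj.mpr hHux
      have t4 : G.dist a u + 1 + G.dist v x ≤ G.dist a x := hcross haSu hGmvx.reachable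
      have t5 : 0 < G.dist v x := hG.pos_dist_of_ne (fun h => hxv h.symm)
      omega
    simp only [status]
    exact Finset.sum_lt_sum (fun b _ => hpt b) ⟨x, Finset.mem_univ x, hstrict⟩
  · -- a on the v-side
    have hpt : ∀ b : V, b ≠ v → H.dist (φ a) b ≤ G.dist a b := by
      intro b hb
      have := hdmap a b; rwa [hφx b hb] at this
    have hHuy : H.Adj u y := by
      rw [hHdef, SimpleGraph.fromRel_adj]
      exact ⟨fun h => hyu h.symm, Or.inl (Or.inr ⟨hune, hyv, Or.inl huy⟩)⟩
    have f_v : H.dist (φ a) v ≤ G.dist a v + 1 := by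
      have t1 : H.dist (φ a) v ≤ H.dist (φ a) u + H.dist u v := hHconn.dist_triangle (v := u)
      have t2 : H.dist u v = 1 := SimpleGraph.dist_eq_one_iff_adj.mpr hHuv
      omega
    have f_y : H.dist (φ a) y ≤ G.dist a v + 1 := by
      have t1 : H.dist (φ a) y ≤ H.dist (φ a) u + H.dist u y := hHconn.dist_triangle (v := u)
      have t2 : H.dist u y = 1 := SimpleGraph.dist_eq_one_iff_adj.mpr hHuy
      omega
    have d_u : G.dist a v + 1 ≤ G.dist a u := by
      have h1 := hcross (SimpleGraph.Reachable.refl u) haSv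
      rw [SimpleGraph.dist_self, show G.dist v a = G.dist a v from SimpleGraph.dist_comm,
        show G.dist u a = G.dist a u from SimpleGraph.dist_comm] at h1
      omega
    have d_y : G.dist a v + 2 ≤ G.dist a y := by
      have h1 := hcross hGmuy.reachable haSv
      have h2 : 0 < G.dist y u := hG.pos_dist_of_ne hyu
      rw [show G.dist v a = G.dist a v from SimpleGraph.dist_comm,
        show G.dist y a = G.dist a y from SimpleGraph.dist_comm] at h1
      omega
    have huy' : u ≠ y := fun h => hyu h.symm
    have hvy' : v ≠ y := fun h => hyv h.symm
    have hsub : ({u, v, y} : Finset V) ⊆ Finset.univ := Finset.subset_univ _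
    have key : ∑ b ∈ ({u, v, y} : Finset V), H.dist (φ a) b
        < ∑ b ∈ ({u, v, y} : Finset V), G.dist a b := by
      rw [Finset.sum_insert (by simp [hune, huy']), Finset.sum_insert (by simp [hvy']),
        Finset.sum_singleton, Finset.sum_insert (by simp [hune, huy']),
        Finset.sum_insert (by simp [hvy']), Finset.sum_singleton]
      omega
    have key2 : ∑ b ∈ Finset.univ \ ({u, v, y} : Finset V), H.dist (φ a) b
        ≤ ∑ b ∈ Finset.univ \ ({u, v, y} : Finset V), G.dist a b := by
      refine Finset.sum_le_sum fun b hb => hpt b ?_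
      rcases Finset.mem_sdiff.mp hb with ⟨_, hbs⟩
      intro hbv
      exact hbs (by simp [hbv])
    simp only [status]
    calc ∑ b : V, H.dist (φ a) b
        = (∑ b ∈ Finset.univ \ ({u, v, y} : Finset V), H.dist (φ a) b)
          + ∑ b ∈ ({u, v, y} : Finset V), H.dist (φ a) b := (Finset.sum_sdiff hsub).symm
      _ < (∑ b ∈ Finset.univ \ ({u, v, y} : Finset V), G.dist a b)
          + ∑ b ∈ ({u, v, y} : Finset V), G.dist a b := add_lt_add_of_le_of_lt key2 key
      _ = ∑ b : V, G.dist a b := Finset.sum_sdiff hsub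
end

section
/- Let T be a tree of order n with a vertex u having neighbors u_1,...,u_k where k >= 3, and let B_i be the component of T - u containing u_i. Suppose |V(B_1)| >= |V(B_2)|. For a vertex w in B_2 and an integer t with 3 <= t <= k, let T' be the tree obtained from T by deleting the edges u u_i and adding edges w u_i for 3 <= i <= t. Then the minimum status of T' is strictly greater than the minimum status of T. -/
open SimpleGraph

variable {V : Type*}

private lemma pot_lemma (G : SimpleGraph V) (g : V → ℤ)
    (hg : ∀ a b, G.Adj a b → |g a - g b| ≤ 1) {x y : V} (h : G.Reachable x y) :
    |g x - g y| ≤ (G.dist x y : ℤ) := by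
  obtain ⟨p, hp⟩ := h.exists_walk_length_eq_dist
  rw [← hp]
  clear hp
  induction p with
  | nil => simp
  | @cons a b c hadj q ih =>
    have h1 : |g a - g c| ≤ |g a - g b| + |g b - g c| := abs_sub_le _ _ _
    have h2 := hg a b hadj
    have h3 := ih ⟨q⟩
    rw [Walk.length_cons]
    push_cast
    linarith

private lemma through_vertex {G : SimpleGraph V} {x y u : V} [DecidableEq V]
    (p : G.Walk x y) (h : u ∈ p.support) : G.dist x u + G.dist u y ≤ p.length := by
  have hl := congrArg Walk.length (p.take_spec h)
  rw [Walk.length_append] at hl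
  have h1 := SimpleGraph.dist_le (p.takeUntil u h)
  have h2 := SimpleGraph.dist_le (p.dropUntil u h)
  omega

/-- Moving branches `B_3, …, B_t` at `u` onto a vertex `w` of `B_2`, when
`|B_1| ≥ |B_2|`, strictly increases the minimum status.  The neighbors of `u`
are `f 0, …, f (k-1)` (so `u_i = f (i-1)`), and `branch i` is the branch of
`T` at `u` containing `f i`. -/
theorem stmt2 [Fintype V] (T : SimpleGraph V) (hT : T.IsTree) (u : V) (k : ℕ)
    (hk : 3 ≤ k) (f : Fin k → V) (hinj : Function.Injective f)
    (hrange : Set.range f = T.neighborSet u)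
    (branch : Fin k → Set V)
    (hbranch : ∀ i : Fin k,
      branch i = {v : V | ∃ p : T.Walk (f i) v, u ∉ p.support})
    (h12 : (branch ⟨1, by omega⟩).ncard ≤ (branch ⟨0, by omega⟩).ncard)
    (w : V) (hw : w ∈ branch ⟨1, by omega⟩)
    (t : ℕ) (ht3 : 3 ≤ t) (htk : t ≤ k) :
    minStatus T < minStatus (SimpleGraph.fromRel (fun a b =>
      (T.Adj a b ∧ ¬ ∃ i : Fin k, 2 ≤ (i : ℕ) ∧ (i : ℕ) < t ∧
        ((a = u ∧ b = f i) ∨ (a = f i ∧ b = u))) ∨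
      (∃ i : Fin k, 2 ≤ (i : ℕ) ∧ (i : ℕ) < t ∧ a = w ∧ b = f i))) := by
  classical
  set T' := SimpleGraph.fromRel (fun a b =>
      (T.Adj a b ∧ ¬ ∃ i : Fin k, 2 ≤ (i : ℕ) ∧ (i : ℕ) < t ∧
        ((a = u ∧ b = f i) ∨ (a = f i ∧ b = u))) ∨
      (∃ i : Fin k, 2 ≤ (i : ℕ) ∧ (i : ℕ) < t ∧ a = w ∧ b = f i)) with hT'def
  have hconn : T.Connected := hT.isConnected
  have hlt0 : 0 < k := by omega
  have hlt1 : 1 < k := by omega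
  have hlt2 : 2 < k := by omega
  have hw1 : w ∈ branch ⟨1, hlt1⟩ := hw
  have h12' : (branch ⟨1, hlt1⟩).ncard ≤ (branch ⟨0, hlt0⟩).ncard := h12
  -- basic adjacency facts
  have hadjf : ∀ i : Fin k, T.Adj u (f i) := by
    intro i
    have h : f i ∈ Set.range f := ⟨i, rfl⟩
    rw [hrange] at h
    exact h
  have hfu : ∀ i, f i ≠ u := fun i => (hadjf i).ne'
  have hfmem : ∀ i, f i ∈ branch i := by
    intro i; rw [hbranch]
    exact ⟨Walk.nil, by simp [Ne.symm (hfu i)]⟩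
  have hunotb : ∀ i, u ∉ branch i := by
    intro i hmem; rw [hbranch] at hmem
    obtain ⟨p, hp⟩ := hmem
    exact hp p.end_mem_support
  have hstep : ∀ (i : Fin k) (a b : V), a ∈ branch i → T.Adj a b → b ≠ u → b ∈ branch i := by
    intro i a b ha hab hbu
    rw [hbranch] at ha ⊢
    obtain ⟨p, hp⟩ := ha
    refine ⟨p.append (Walk.cons hab Walk.nil), ?_⟩
    rw [Walk.mem_support_append_iff]
    rintro (h | h)
    · exact hp h
    · simp only [Walk.support_cons, Walk.support_nil, List.mem_cons, List.mem_singleton] at h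
      rcases h with h | h | h
      · exact hp (h ▸ p.end_mem_support)
      · exact hbu h.symm
      · exact absurd h List.not_mem_nil
  have hwalkmem : ∀ (i : Fin k) {x y : V} (p : T.Walk x y),
      x ∈ branch i → u ∉ p.support → y ∈ branch i := by
    intro i x y p
    induction p with
    | nil => exact fun h _ => h
    | @cons a b c hadj q ih =>
      intro ha hu
      rw [Walk.support_cons] at hu
      have hbu : b ≠ u := by
        intro h
        exact hu (List.mem_cons_of_mem _ (h ▸ q.start_mem_support))
      exact ih (hstep i a b ha hadj hbu) (fun h => hu (List.mem_cons_of_mem _ h))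
  have hdisj : ∀ (i j : Fin k), i ≠ j → ∀ v, v ∈ branch i → v ∈ branch j → False := by
    intro i j hij v hvi hvj
    rw [hbranch] at hvi hvj
    obtain ⟨p, hp⟩ := hvi; obtain ⟨q, hq⟩ := hvj
    have hpi : (Walk.cons (hadjf i) p.bypass).IsPath :=
      Walk.IsPath.cons p.bypass_isPath (fun h => hp (p.support_bypass_subset h))
    have hpj : (Walk.cons (hadjf j) q.bypass).IsPath :=
      Walk.IsPath.cons q.bypass_isPath (fun h => hq (q.support_bypass_subset h))
    obtain ⟨P, -, hPu⟩ := hT.existsUnique_path u v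
    have e1 := hPu _ hpi
    have e2 := hPu _ hpj
    rw [← e2] at e1
    have hs := congrArg Walk.support e1
    rw [Walk.support_cons, Walk.support_cons] at hs
    have hs' : (Walk.bypass p).support = (Walk.bypass q).support := List.tail_eq_of_cons_eq hs
    rw [p.bypass.support_eq_cons, q.bypass.support_eq_cons] at hs'
    exact hij (hinj (List.head_eq_of_cons_eq hs'))
  -- the moved set S
  set S : Set V := {v | ∃ i : Fin k, (2 ≤ (i : ℕ) ∧ (i : ℕ) < t) ∧ v ∈ branch i} with hSdef
  have hfS : ∀ i : Fin k, 2 ≤ (i : ℕ) → (i : ℕ) < t → f i ∈ S :=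
    fun i h1 h2 => ⟨i, ⟨h1, h2⟩, hfmem i⟩
  have hbS : ∀ (j : Fin k), (j : ℕ) < 2 → ∀ v, v ∈ branch j → v ∉ S := by
    intro j hj v hv hvS
    obtain ⟨i, hi, hvi⟩ := hvS
    refine hdisj j i (fun h => ?_) v hv hvi
    rw [h] at hj; omega
  have hwS : w ∉ S := hbS ⟨1, hlt1⟩ (by norm_num) w hw1
  have huS : u ∉ S := fun h => by obtain ⟨i, _, h⟩ := h; exact hunotb i h
  have hwu : w ≠ u := fun h => hunotb ⟨1, hlt1⟩ (h ▸ hw1)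
  -- key distance identity in T
  have hD2 : ∀ (i : Fin k) (x y : V), x ∈ branch i → y ∉ branch i →
      T.dist x y = T.dist x u + T.dist u y := by
    intro i x y hx hy
    refine le_antisymm hconn.dist_triangle ?_
    obtain ⟨p, hp⟩ := hconn.exists_walk_length_eq_dist x y
    have hu : u ∈ p.support := by
      by_contra h
      exact hy (hwalkmem i p hx h)
    calc T.dist x u + T.dist u y ≤ p.length := through_vertex p hu
      _ = _ := hp
  have hLip : ∀ z a b : V, T.Adj a b → T.dist z a ≤ T.dist z b + 1 := by
    intro z a b h
    have h1 := hconn.dist_triangle (u := z) (v := b) (w := a)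
    have h2 : T.dist b a = 1 := dist_eq_one_iff_adj.mpr h.symm
    omega
  have hd1 : 1 ≤ T.dist u w := hconn.pos_dist_of_ne (Ne.symm hwu)
  have hdfi : ∀ i, T.dist u (f i) = 1 := fun i => dist_eq_one_iff_adj.mpr (hadjf i)
  -- T' adjacency
  have hkeep : ∀ a b : V, T.Adj a b →
      (¬ ∃ i : Fin k, 2 ≤ (i : ℕ) ∧ (i : ℕ) < t ∧ ((a = u ∧ b = f i) ∨ (a = f i ∧ b = u))) →
      T'.Adj a b := by
    intro a b hab hrem
    rw [hT'def, fromRel_adj]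
    exact ⟨hab.ne, Or.inl (Or.inl ⟨hab, hrem⟩)⟩
  have hnew : ∀ i : Fin k, 2 ≤ (i : ℕ) → (i : ℕ) < t → T'.Adj w (f i) := by
    intro i h1 h2
    rw [hT'def, fromRel_adj]
    refine ⟨fun h => hdisj ⟨1, hlt1⟩ i (fun hh => by rw [← hh] at h1; simp at h1) w hw1
      (h ▸ hfmem i), Or.inl (Or.inr ⟨i, h1, h2, rfl, rfl⟩)⟩
  have hT'cases : ∀ a b : V, T'.Adj a b →
      (T.Adj a b ∧ ¬ ∃ i : Fin k, 2 ≤ (i : ℕ) ∧ (i : ℕ) < t ∧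
        ((a = u ∧ b = f i) ∨ (a = f i ∧ b = u))) ∨
      (∃ i : Fin k, 2 ≤ (i : ℕ) ∧ (i : ℕ) < t ∧ ((a = w ∧ b = f i) ∨ (b = w ∧ a = f i))) := by
    intro a b hab
    rw [hT'def, fromRel_adj] at hab
    obtain ⟨hne, h | h⟩ := hab
    · rcases h with ⟨h1, h2⟩ | ⟨i, h1, h2, h3, h4⟩
      · exact Or.inl ⟨h1, h2⟩
      · exact Or.inr ⟨i, h1, h2, Or.inl ⟨h3, h4⟩⟩
    · rcases h with ⟨h1, h2⟩ | ⟨i, h1, h2, h3, h4⟩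
      · refine Or.inl ⟨h1.symm, ?_⟩
        rintro ⟨i, hi1, hi2, hc⟩
        exact h2 ⟨i, hi1, hi2, by tauto⟩
      · exact Or.inr ⟨i, h1, h2, Or.inr ⟨h3, h4⟩⟩
  -- kept edges respect S
  have hkeptS : ∀ a b : V, T.Adj a b →
      (¬ ∃ i : Fin k, 2 ≤ (i : ℕ) ∧ (i : ℕ) < t ∧ ((a = u ∧ b = f i) ∨ (a = f i ∧ b = u))) →
      a ∈ S → b ∈ S := by
    rintro a b hab hrem ⟨i, hi, hai⟩
    by_cases hbu : b = u
    · exfalso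
      subst hbu
      have hmem : a ∈ Set.range f := by rw [hrange]; exact hab.symm
      obtain ⟨j, hj⟩ := hmem
      have hij : j = i := by
        by_contra hne
        exact hdisj j i hne a (hj ▸ hfmem j) hai
      exact hrem ⟨i, hi.1, hi.2, Or.inr ⟨by rw [← hj, hij], rfl⟩⟩
    · exact ⟨i, hi, hstep i a b hai hab hbu⟩
  -- T' is connected
  have hreach_uw : T'.Reachable u w := by
    have hw' := hw1
    rw [hbranch] at hw'
    obtain ⟨p, hp⟩ := hw'
    have hpe : ∀ e ∈ p.edges, e ∈ T'.edgeSet := by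
      intro e he
      induction e with
      | _ a b =>
        have hab : T.Adj a b := p.edges_subset_edgeSet he
        have ha : a ∈ p.support := p.fst_mem_support_of_mem_edges he
        have hb : b ∈ p.support := p.snd_mem_support_of_mem_edges he
        refine hkeep a b hab ?_
        rintro ⟨i, -, -, ⟨h1, -⟩ | ⟨-, h2⟩⟩
        · exact hp (h1 ▸ ha)
        · exact hp (h2 ▸ hb)
    have hadj1 : T'.Adj u (f ⟨1, hlt1⟩) := by
      refine hkeep _ _ (hadjf ⟨1, hlt1⟩) ?_
      rintro ⟨i, hi1, -, ⟨-, h2⟩ | ⟨h1, -⟩⟩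
      · have : (⟨1, hlt1⟩ : Fin k) = i := hinj h2
        rw [← this] at hi1; simp at hi1
      · exact hfu i h1.symm
    exact hadj1.reachable.trans ⟨p.transfer T' hpe⟩
  have hreach_adjT : ∀ a b : V, T.Adj a b → T'.Reachable a b := by
    intro a b hab
    by_cases hrem : ∃ i : Fin k, 2 ≤ (i : ℕ) ∧ (i : ℕ) < t ∧
        ((a = u ∧ b = f i) ∨ (a = f i ∧ b = u))
    · obtain ⟨i, h1, h2, hc⟩ := hrem
      have hufi : T'.Reachable u (f i) := hreach_uw.trans (hnew i h1 h2).reachable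
      rcases hc with ⟨ha, hb⟩ | ⟨ha, hb⟩
      · rw [ha, hb]; exact hufi
      · rw [ha, hb]; exact hufi.symm
    · exact (hkeep a b hab hrem).reachable
  have hreachT : ∀ {x y : V} (p : T.Walk x y), T'.Reachable x y := by
    intro x y p
    induction p with
    | nil => exact Reachable.refl _
    | cons h q ih => exact (hreach_adjT _ _ h).trans ih
  have hT'conn : T'.Connected := by
    rw [connected_iff]
    refine ⟨fun x y => ?_, ⟨u⟩⟩
    obtain ⟨p⟩ := hconn x y
    exact hreachT p
  have hpot : ∀ (g : V → ℤ), (∀ a b, T'.Adj a b → |g a - g b| ≤ 1) →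
      ∀ x y : V, |g x - g y| ≤ (T'.dist x y : ℤ) :=
    fun g hg x y => pot_lemma T' g hg (hT'conn.preconnected x y)
  -- the two potential families
  set A : V → V → ℤ := fun z v =>
    if v ∈ S then (T.dist z w : ℤ) + (T.dist u v : ℤ) else (T.dist z v : ℤ) with hAdef
  set B : V → V → ℤ := fun z v =>
    if v ∈ S then (T.dist z v : ℤ) else (T.dist u z : ℤ) + (T.dist w v : ℤ) with hBdef
  have hSiff : ∀ a b : V, T.Adj a b →
      (¬ ∃ i : Fin k, 2 ≤ (i : ℕ) ∧ (i : ℕ) < t ∧ ((a = u ∧ b = f i) ∨ (a = f i ∧ b = u))) →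
      (a ∈ S ↔ b ∈ S) := by
    intro a b hab hrem
    constructor
    · exact hkeptS a b hab hrem
    · refine hkeptS b a hab.symm ?_
      rintro ⟨i, hi1, hi2, hc⟩
      exact hrem ⟨i, hi1, hi2, by tauto⟩
  have hALip : ∀ z a b : V, T'.Adj a b → |A z a - A z b| ≤ 1 := by
    intro z a b hab
    rcases hT'cases a b hab with ⟨hTab, hrem⟩ | ⟨i, h1, h2, hc⟩
    · have hiff := hSiff a b hTab hrem
      by_cases haS : a ∈ S
      · have hbSm : b ∈ S := hiff.mp haS
        simp only [hAdef, if_pos haS, if_pos hbSm]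
        have l1 := hLip u a b hTab
        have l2 := hLip u b a hTab.symm
        rw [abs_sub_le_iff]
        constructor <;> push_cast <;> omega
      · have hbSm : b ∉ S := fun h => haS (hiff.mpr h)
        simp only [hAdef, if_neg haS, if_neg hbSm]
        have l1 := hLip z a b hTab
        have l2 := hLip z b a hTab.symm
        rw [abs_sub_le_iff]
        constructor <;> push_cast <;> omega
    · have hfiS : f i ∈ S := hfS i h1 h2
      rcases hc with ⟨ha, hb⟩ | ⟨hb, ha⟩
      · subst ha; subst hb
        simp only [hAdef, if_neg hwS, if_pos hfiS, hdfi i]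
        rw [abs_sub_le_iff]
        constructor <;> push_cast <;> omega
      · subst ha; subst hb
        simp only [hAdef, if_neg hwS, if_pos hfiS, hdfi i]
        rw [abs_sub_le_iff]
        constructor <;> push_cast <;> omega
  have hBLip : ∀ z a b : V, T'.Adj a b → |B z a - B z b| ≤ 1 := by
    intro z a b hab
    rcases hT'cases a b hab with ⟨hTab, hrem⟩ | ⟨i, h1, h2, hc⟩
    · have hiff := hSiff a b hTab hrem
      by_cases haS : a ∈ S
      · have hbSm : b ∈ S := hiff.mp haS
        simp only [hBdef, if_pos haS, if_pos hbSm]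
        have l1 := hLip z a b hTab
        have l2 := hLip z b a hTab.symm
        rw [abs_sub_le_iff]
        constructor <;> push_cast <;> omega
      · have hbSm : b ∉ S := fun h => haS (hiff.mpr h)
        simp only [hBdef, if_neg haS, if_neg hbSm]
        have l1 := hLip w a b hTab
        have l2 := hLip w b a hTab.symm
        rw [abs_sub_le_iff]
        constructor <;> push_cast <;> omega
    · have hfiS : f i ∈ S := hfS i h1 h2
      have l1 := hLip z u (f i) (hadjf i)
      have l2 := hLip z (f i) u (hadjf i).symm
      have hc1 : T.dist u z = T.dist z u := dist_comm
      have hc2 : T.dist z (f i) = T.dist (f i) z := dist_comm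
      rcases hc with ⟨ha, hb⟩ | ⟨hb, ha⟩
      · subst ha; subst hb
        simp only [hBdef, if_neg hwS, if_pos hfiS, SimpleGraph.dist_self, hc1]
        rw [abs_sub_le_iff]
        constructor <;> push_cast <;> omega
      · subst ha; subst hb
        simp only [hBdef, if_neg hwS, if_pos hfiS, SimpleGraph.dist_self, hc1]
        rw [abs_sub_le_iff]
        constructor <;> push_cast <;> omega
  -- distance lower bounds in T'
  have hb1 : ∀ x y : V, x ∉ S → y ∉ S → (T.dist x y : ℤ) ≤ (T'.dist x y : ℤ) := by
    intro x y hx hy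
    have h := hpot (A x) (hALip x) x y
    simp only [hAdef, if_neg hx, if_neg hy, SimpleGraph.dist_self] at h
    rw [Nat.cast_zero, zero_sub, abs_neg, abs_of_nonneg (by positivity)] at h
    exact h
  have hb2 : ∀ x y : V, x ∉ S → y ∈ S →
      (T.dist x w : ℤ) + (T.dist u y : ℤ) ≤ (T'.dist x y : ℤ) := by
    intro x y hx hy
    have h := hpot (A x) (hALip x) x y
    simp only [hAdef, if_neg hx, if_pos hy, SimpleGraph.dist_self] at h
    rw [Nat.cast_zero, zero_sub, abs_neg, abs_of_nonneg (by positivity)] at h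
    exact h
  have hb3 : ∀ x y : V, x ∈ S → y ∈ S → (T.dist x y : ℤ) ≤ (T'.dist x y : ℤ) := by
    intro x y hx hy
    have h := hpot (B x) (hBLip x) x y
    simp only [hBdef, if_pos hx, if_pos hy, SimpleGraph.dist_self] at h
    rw [Nat.cast_zero, zero_sub, abs_neg, abs_of_nonneg (by positivity)] at h
    exact h
  have hb4 : ∀ x y : V, x ∈ S → y ∉ S →
      (T.dist u x : ℤ) + (T.dist w y : ℤ) ≤ (T'.dist x y : ℤ) := by
    intro x y hx hy
    have h := hpot (B x) (hBLip x) x y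
    simp only [hBdef, if_pos hx, if_neg hy, SimpleGraph.dist_self] at h
    rw [Nat.cast_zero, zero_sub, abs_neg, abs_of_nonneg (by positivity)] at h
    exact h
  -- cardinality comparison
  have hcard : (Finset.univ.filter (fun y : V => ¬y ∈ S ∧ y ∈ branch ⟨1, hlt1⟩)).card + 1 ≤
      (Finset.univ.filter (fun y : V => ¬y ∈ S ∧ ¬y ∈ branch ⟨1, hlt1⟩)).card := by
    have e1 : Finset.univ.filter (fun y : V => ¬y ∈ S ∧ y ∈ branch ⟨1, hlt1⟩)
        = (branch ⟨1, hlt1⟩).toFinset := by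
      ext y
      simp only [Finset.mem_filter, Finset.mem_univ, true_and, Set.mem_toFinset]
      exact ⟨fun h => h.2, fun h => ⟨hbS ⟨1, hlt1⟩ (by norm_num) y h, h⟩⟩
    have hsub : Finset.univ.filter (fun y : V => y ∈ branch ⟨0, hlt0⟩ ∨ y = u)
        ⊆ Finset.univ.filter (fun y : V => ¬y ∈ S ∧ ¬y ∈ branch ⟨1, hlt1⟩) := by
      intro y hy
      simp only [Finset.mem_filter, Finset.mem_univ, true_and] at hy ⊢
      rcases hy with hy | rfl
      · refine ⟨hbS ⟨0, hlt0⟩ (by norm_num) y hy, fun h => ?_⟩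
        exact hdisj ⟨0, hlt0⟩ ⟨1, hlt1⟩ (by simp) y hy h
      · exact ⟨huS, hunotb _⟩
    have e3 : (Finset.univ.filter (fun y : V => y ∈ branch ⟨0, hlt0⟩ ∨ y = u)).card
        = (branch ⟨0, hlt0⟩).toFinset.card + 1 := by
      have hd : Disjoint (Finset.univ.filter (fun y : V => y ∈ branch ⟨0, hlt0⟩))
          (Finset.univ.filter (fun y : V => y = u)) := by
        rw [Finset.disjoint_left]
        intro y hy1 hy2
        simp only [Finset.mem_filter, Finset.mem_univ, true_and] at hy1 hy2
        exact hunotb ⟨0, hlt0⟩ (hy2 ▸ hy1)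
      have hfeq : Finset.univ.filter (fun y : V => y = u) = {u} := by
        ext y; simp
      have hfeq0 : Finset.univ.filter (fun y : V => y ∈ branch ⟨0, hlt0⟩)
          = (branch ⟨0, hlt0⟩).toFinset := by
        ext y; simp
      rw [Finset.filter_or, Finset.card_union_of_disjoint hd, hfeq, hfeq0,
        Finset.card_singleton]
    have hn1 : (branch ⟨1, hlt1⟩).ncard = (branch ⟨1, hlt1⟩).toFinset.card :=
      Set.ncard_eq_toFinset_card' _
    have hn0 : (branch ⟨0, hlt0⟩).ncard = (branch ⟨0, hlt0⟩).toFinset.card :=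
      Set.ncard_eq_toFinset_card' _
    have hle := Finset.card_le_card hsub
    rw [e1]
    omega
  -- lower bound for the correction sum
  have hsumH : ∀ c : ℤ, 1 ≤ c →
      1 ≤ ∑ y : V, (if y ∈ S then (0 : ℤ) else
        if y ∈ branch ⟨1, hlt1⟩ then -c else c) := by
    intro c hc
    rw [← Finset.sum_filter_add_sum_filter_not Finset.univ (fun y : V => y ∈ S)]
    have hz : (∑ y ∈ Finset.univ.filter (fun y : V => y ∈ S),
        (if y ∈ S then (0 : ℤ) else if y ∈ branch ⟨1, hlt1⟩ then -c else c)) = 0 := by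
      apply Finset.sum_eq_zero
      intro y hy
      exact if_pos (Finset.mem_filter.mp hy).2
    rw [hz, zero_add]
    have hc2 : (∑ y ∈ Finset.univ.filter (fun y : V => ¬y ∈ S),
        (if y ∈ S then (0 : ℤ) else if y ∈ branch ⟨1, hlt1⟩ then -c else c))
        = ∑ y ∈ Finset.univ.filter (fun y : V => ¬y ∈ S),
        (if y ∈ branch ⟨1, hlt1⟩ then -c else c) := by
      apply Finset.sum_congr rfl
      intro y hy
      exact if_neg (Finset.mem_filter.mp hy).2
    rw [hc2, ← Finset.sum_filter_add_sum_filter_not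
      (Finset.univ.filter (fun y : V => ¬y ∈ S)) (fun y : V => y ∈ branch ⟨1, hlt1⟩)]
    rw [Finset.sum_congr rfl (fun y hy => if_pos ((Finset.mem_filter.mp hy).2)),
      Finset.sum_congr rfl (fun y (hy : y ∈ _) => if_neg ((Finset.mem_filter.mp hy).2)),
      Finset.sum_const, Finset.sum_const, Finset.filter_filter, Finset.filter_filter]
    have hcard' := hcard
    set c1 := (Finset.univ.filter (fun y : V => ¬y ∈ S ∧ y ∈ branch ⟨1, hlt1⟩)).card
    set c2 := (Finset.univ.filter (fun y : V => ¬y ∈ S ∧ ¬y ∈ branch ⟨1, hlt1⟩)).card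
    rw [nsmul_eq_mul, nsmul_eq_mul]
    have h5 : (1 : ℤ) * 1 ≤ ((c2 : ℤ) - c1) * c := by
      apply mul_le_mul
      · have : (c1 : ℤ) + 1 ≤ (c2 : ℤ) := by exact_mod_cast hcard'
        linarith
      · exact hc
      · norm_num
      · have : (c1 : ℤ) + 1 ≤ (c2 : ℤ) := by exact_mod_cast hcard'
        linarith
    linarith [h5]
  have hcast : ∀ (G : SimpleGraph V) (z : V), (status G z : ℤ) = ∑ y : V, (G.dist z y : ℤ) := by
    intro G z
    simp [status]
  -- the main pointwise bound
  have main : ∀ x : V, minStatus T < status T' x := by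
    intro x
    by_cases hxS : x ∈ S
    · -- Case (a) : x in a moved branch
      have key : (status T x : ℤ) < (status T' x : ℤ) := by
        have hsum1 : ∑ y : V, (if y ∈ S then (T.dist x y : ℤ)
            else (T.dist u x : ℤ) + (T.dist w y : ℤ)) ≤ (status T' x : ℤ) := by
          rw [hcast]
          apply Finset.sum_le_sum
          intro y _
          by_cases hy : y ∈ S
          · rw [if_pos hy]; exact hb3 x y hxS hy
          · rw [if_neg hy]; exact hb4 x y hxS hy
        have hterm : ∀ y ∈ (Finset.univ : Finset V),
            (if y ∈ S then (0 : ℤ) else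
              if y ∈ branch ⟨1, hlt1⟩ then -(T.dist u w : ℤ) else (T.dist u w : ℤ)) ≤
            (if y ∈ S then (T.dist x y : ℤ)
              else (T.dist u x : ℤ) + (T.dist w y : ℤ)) - (T.dist x y : ℤ) := by
          intro y _
          by_cases hy : y ∈ S
          · simp [if_pos hy]
          · simp only [if_neg hy]
            have htr : T.dist x y ≤ T.dist x u + T.dist u y := hconn.dist_triangle
            have hcx : T.dist u x = T.dist x u := dist_comm
            by_cases hy1 : y ∈ branch ⟨1, hlt1⟩
            · rw [if_pos hy1]
              have htr2 : T.dist u y ≤ T.dist u w + T.dist w y := hconn.dist_triangle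
              push_cast
              omega
            · rw [if_neg hy1]
              have hD := hD2 ⟨1, hlt1⟩ w y hw1 hy1
              have hcw : T.dist w u = T.dist u w := dist_comm
              push_cast
              omega
        have hsum2 := Finset.sum_le_sum hterm
        rw [Finset.sum_sub_distrib] at hsum2
        have hsum3 := hsumH (T.dist u w : ℤ) (by exact_mod_cast hd1)
        have hx2 : (status T x : ℤ) = ∑ y : V, (T.dist x y : ℤ) := hcast T x
        linarith
      have h1 : minStatus T ≤ status T x := Nat.sInf_le ⟨x, rfl⟩
      have h2 : status T x < status T' x := by exact_mod_cast key
      omega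
    · by_cases hxb1 : x ∈ branch ⟨1, hlt1⟩
      · -- Case (b) : x in branch 1
        have hxu : x ≠ u := fun h => hunotb ⟨1, hlt1⟩ (h ▸ hxb1)
        have hxu1 : 1 ≤ T.dist x u := hconn.pos_dist_of_ne hxu
        have key : (status T u : ℤ) < (status T' x : ℤ) := by
          have hsum1 : ∑ y : V, (if y ∈ S then (T.dist u y : ℤ)
              else (T.dist x y : ℤ)) ≤ (status T' x : ℤ) := by
            rw [hcast]
            apply Finset.sum_le_sum
            intro y _
            by_cases hy : y ∈ S
            · rw [if_pos hy]
              have := hb2 x y hxS hy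
              have h0 : (0 : ℤ) ≤ (T.dist x w : ℤ) := by positivity
              linarith
            · rw [if_neg hy]; exact hb1 x y hxS hy
          have hterm : ∀ y ∈ (Finset.univ : Finset V),
              (if y ∈ S then (0 : ℤ) else
                if y ∈ branch ⟨1, hlt1⟩ then -(T.dist x u : ℤ) else (T.dist x u : ℤ)) ≤
              (if y ∈ S then (T.dist u y : ℤ)
                else (T.dist x y : ℤ)) - (T.dist u y : ℤ) := by
            intro y _
            by_cases hy : y ∈ S
            · simp [if_pos hy]
            · simp only [if_neg hy]
              have hcx : T.dist u x = T.dist x u := dist_comm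
              by_cases hy1 : y ∈ branch ⟨1, hlt1⟩
              · rw [if_pos hy1]
                have htr : T.dist u y ≤ T.dist u x + T.dist x y := hconn.dist_triangle
                push_cast
                omega
              · rw [if_neg hy1]
                have hD := hD2 ⟨1, hlt1⟩ x y hxb1 hy1
                push_cast
                omega
          have hsum2 := Finset.sum_le_sum hterm
          rw [Finset.sum_sub_distrib] at hsum2
          have hsum3 := hsumH (T.dist x u : ℤ) (by exact_mod_cast hxu1)
          have hx2 : (status T u : ℤ) = ∑ y : V, (T.dist u y : ℤ) := hcast T u
          linarith
        have h1 : minStatus T ≤ status T u := Nat.sInf_le ⟨u, rfl⟩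
        have h2 : status T u < status T' x := by exact_mod_cast key
        omega
      · -- Case (c) : x outside branch 1 and outside S
        have hxw : T.dist x w = T.dist x u + T.dist u w := by
          have hD := hD2 ⟨1, hlt1⟩ w x hw1 hxb1
          have h1 : T.dist x w = T.dist w x := dist_comm
          have h2 : T.dist w u = T.dist u w := dist_comm
          have h3 : T.dist u x = T.dist x u := dist_comm
          omega
        have key : status T x < status T' x := by
          unfold status
          apply Finset.sum_lt_sum
          · intro y _
            by_cases hy : y ∈ S
            · have hB := hb2 x y hxS hy
              have hgoal : (T.dist x y : ℤ) ≤ (T'.dist x y : ℤ) := by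
                have hxw' : (T.dist x w : ℤ) = (T.dist x u : ℤ) + (T.dist u w : ℤ) := by
                  exact_mod_cast hxw
                have hd1' : (1 : ℤ) ≤ (T.dist u w : ℤ) := by exact_mod_cast hd1
                have htr' : (T.dist x y : ℤ) ≤ (T.dist x u : ℤ) + (T.dist u y : ℤ) := by
                  exact_mod_cast hconn.dist_triangle (v := u)
                linarith
              exact_mod_cast hgoal
            · have := hb1 x y hxS hy
              exact_mod_cast this
          · refine ⟨f ⟨2, hlt2⟩, Finset.mem_univ _, ?_⟩
            have hy2S : f ⟨2, hlt2⟩ ∈ S := hfS ⟨2, hlt2⟩ (by norm_num) (by show (2:ℕ) < t; omega)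
            have hB := hb2 x _ hxS hy2S
            have hgoal : (T.dist x (f ⟨2, hlt2⟩) : ℤ) < (T'.dist x (f ⟨2, hlt2⟩) : ℤ) := by
              have hxw' : (T.dist x w : ℤ) = (T.dist x u : ℤ) + (T.dist u w : ℤ) := by
                exact_mod_cast hxw
              have hd1' : (1 : ℤ) ≤ (T.dist u w : ℤ) := by exact_mod_cast hd1
              have htr' : (T.dist x (f ⟨2, hlt2⟩) : ℤ) ≤
                  (T.dist x u : ℤ) + (T.dist u (f ⟨2, hlt2⟩) : ℤ) := by
                exact_mod_cast hconn.dist_triangle (v := u)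
              linarith
            exact_mod_cast hgoal
        have h1 : minStatus T ≤ status T x := Nat.sInf_le ⟨x, rfl⟩
        omega
  -- conclude
  have hne : Nonempty V := ⟨u⟩
  obtain ⟨x, hx⟩ := Nat.sInf_mem (Set.range_nonempty (status T'))
  calc minStatus T < status T' x := main x
    _ = minStatus T' := hx
end

section
/- Let T be a tree of order n with matching number m, where 1 <= m <= floor(n/2). Then s(T) >= n + m - 2, with equality if and only if T is isomorphic to A_{n,m}, the tree obtained from the star S_{n-m+1} by attaching a pendant edge to each of m-1 non-central vertices of the star. -/
open SimpleGraph

variable {V : Type*}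

section Aux
variable {V : Type*} {W : Type*}

lemma iso_dist_le {G : SimpleGraph V} {H : SimpleGraph W} (f : G ≃g H) (u v : V) :
    H.dist (f u) (f v) ≤ G.dist u v := by
  by_cases hr : G.Reachable u v
  · obtain ⟨p, hp⟩ := hr.exists_walk_length_eq_dist
    calc H.dist (f u) (f v) ≤ (p.map f.toHom).length := SimpleGraph.dist_le _
      _ = G.dist u v := by rw [SimpleGraph.Walk.length_map, hp]
  · rw [SimpleGraph.dist_eq_zero_of_not_reachable hr,
      SimpleGraph.dist_eq_zero_of_not_reachable (fun hr' => hr (by simpa using hr'.map f.symm.toHom))]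

lemma iso_dist {G : SimpleGraph V} {H : SimpleGraph W} (f : G ≃g H) (u v : V) :
    H.dist (f u) (f v) = G.dist u v := by
  refine le_antisymm (iso_dist_le f u v) ?_
  have := iso_dist_le f.symm (f u) (f v)
  simpa using this

end Aux

section Aux2
variable {V : Type*} {W : Type*}

lemma iso_status [Fintype V] [Fintype W] {G : SimpleGraph V} {H : SimpleGraph W}
    (f : G ≃g H) (u : V) : status H (f u) = status G u := by
  unfold status
  rw [← Equiv.sum_comp f.toEquiv (fun w => H.dist (f u) w)]
  exact Finset.sum_congr rfl fun v _ => iso_dist f u v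

lemma matching_edge_unique {G : SimpleGraph V} {M : G.Subgraph} (hM : M.IsMatching)
    {e f : Sym2 V} (he : e ∈ M.edgeSet) (hf : f ∈ M.edgeSet) {v : V}
    (hve : v ∈ e) (hvf : v ∈ f) : e = f := by
  induction e with
  | h a b =>
    induction f with
    | h c d =>
      rw [SimpleGraph.Subgraph.mem_edgeSet] at he hf
      rw [Sym2.mem_iff] at hve hvf
      have key : ∀ {x y z : V}, M.Adj x y → M.Adj x z → y = z := by
        intro x y z h1 h2
        obtain ⟨w, _, hw2⟩ := hM (M.edge_vert h1)
        rw [hw2 y h1, hw2 z h2]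
      rcases hve with rfl | rfl <;> rcases hvf with rfl | rfl
      · rw [key he hf]
      · rw [key he hf.symm, Sym2.eq_swap]
      · rw [key he.symm hf, Sym2.eq_swap]
      · rw [key he.symm hf.symm]

lemma exists_max_matching [Fintype V] (G : SimpleGraph V) :
    ∃ M : G.Subgraph, M.IsMatching ∧
      M.edgeSet.ncard = sSup {k | ∃ M : G.Subgraph, M.IsMatching ∧ M.edgeSet.ncard = k} := by
  have hne : {k | ∃ M : G.Subgraph, M.IsMatching ∧ M.edgeSet.ncard = k}.Nonempty := by
    refine ⟨0, ⊥, ?_, ?_⟩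
    · intro v hv
      simp [SimpleGraph.Subgraph.verts_bot] at hv
    · simp
  have hbdd : BddAbove {k | ∃ M : G.Subgraph, M.IsMatching ∧ M.edgeSet.ncard = k} := by
    refine ⟨Nat.card (Sym2 V), ?_⟩
    rintro k ⟨M, _, rfl⟩
    rw [← Set.ncard_univ]
    exact Set.ncard_le_ncard (Set.subset_univ _) (Set.toFinite _)
  have := Nat.sSup_mem hne hbdd
  obtain ⟨M, hM, hcard⟩ := this
  exact ⟨M, hM, hcard⟩

end Aux2

section TreeLemmas
variable {V : Type*} {T : SimpleGraph V}

lemma tree_no_triangle (hT : T.IsTree) {u a b : V} (hab : T.Adj a b)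
    (ha : T.Adj u a) (hb : T.Adj u b) : False := by
  have hp1 : (hb.toWalk).IsPath := by
    simp [SimpleGraph.Walk.isPath_def, SimpleGraph.Adj.toWalk, hb.ne]
  have hp2 : (SimpleGraph.Walk.cons ha hab.toWalk).IsPath := by
    simp [SimpleGraph.Walk.isPath_def, SimpleGraph.Adj.toWalk, ha.ne, hb.ne, hab.ne]
  obtain ⟨P, _, hPuniq⟩ := hT.existsUnique_path u b
  have heq := (hPuniq _ hp1).trans (hPuniq _ hp2).symm
  have hlen := congrArg SimpleGraph.Walk.length heq
  simp [SimpleGraph.Adj.toWalk] at hlen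

lemma tree_parent (hT : T.IsTree) {u d : V} (hd : T.dist u d = 2) :
    ∃! w : V, T.Adj u w ∧ T.Adj w d := by
  have hud : u ≠ d := by
    rintro rfl
    rw [SimpleGraph.dist_self] at hd
    exact absurd hd (by norm_num)
  obtain ⟨p, hp⟩ := (hT.isConnected u d).exists_walk_length_eq_dist
  rw [hd] at hp
  obtain ⟨w, hw1, hw2⟩ : ∃ w : V, T.Adj u w ∧ T.Adj w d := by
    cases p with
    | nil => simp at hp
    | cons h q =>
      cases q with
      | nil => simp at hp
      | cons h' q' =>
        cases q' with
        | nil => exact ⟨_, h, h'⟩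
        | cons h'' q'' => simp [SimpleGraph.Walk.length_cons] at hp
  refine ⟨w, ⟨hw1, hw2⟩, ?_⟩
  rintro w' ⟨hw1', hw2'⟩
  have mk : ∀ {x : V}, T.Adj u x → T.Adj x d → Σ' (q : T.Walk u d), q.IsPath ∧ q.support = [u, x, d] := by
    intro x h1 h2
    refine ⟨SimpleGraph.Walk.cons h1 h2.toWalk, ?_, ?_⟩
    · have hxd : x ≠ d := h2.ne
      have hux : u ≠ x := h1.ne
      simp [SimpleGraph.Walk.isPath_def, SimpleGraph.Adj.toWalk, hux, hxd, hud]
    · simp [SimpleGraph.Adj.toWalk]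
  obtain ⟨q1, hq1, hs1⟩ := mk hw1' hw2'
  obtain ⟨q2, hq2, hs2⟩ := mk hw1 hw2
  obtain ⟨P, _, hPuniq⟩ := hT.existsUnique_path u d
  have heq := (hPuniq q1 hq1).trans (hPuniq q2 hq2).symm
  have := congrArg SimpleGraph.Walk.support heq
  rw [hs1, hs2] at this
  have : w = w' := by simpa using this.symm
  exact this.symm

lemma tree_no_dd (hT : T.IsTree) {u d1 d2 : V} (h1 : T.dist u d1 = 2)
    (h2 : T.dist u d2 = 2) : ¬ T.Adj d1 d2 := by
  intro hadj
  obtain ⟨w1, ⟨hw1u, hw1d⟩, -⟩ := tree_parent hT h1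
  obtain ⟨w2, ⟨hw2u, hw2d⟩, -⟩ := tree_parent hT h2
  have hdu : ∀ {d : V}, T.dist u d = 2 → u ≠ d := by
    rintro d hd rfl
    rw [SimpleGraph.dist_self] at hd; exact absurd hd (by norm_num)
  have hw1d2 : w1 ≠ d2 := by
    rintro rfl
    rw [SimpleGraph.dist_eq_one_iff_adj.mpr hw1u] at h2
    exact absurd h2 (by norm_num)
  have hq1 : (SimpleGraph.Walk.cons hw2u hw2d.toWalk).IsPath := by
    simp [SimpleGraph.Walk.isPath_def, SimpleGraph.Adj.toWalk, hw2u.ne, hw2d.ne, hdu h2]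
  have hq2 : (SimpleGraph.Walk.cons hw1u (SimpleGraph.Walk.cons hw1d hadj.toWalk)).IsPath := by
    have hud1 : u ≠ d1 := hdu h1
    have hud2 : u ≠ d2 := hdu h2
    have hw1d1 : w1 ≠ d1 := hw1d.ne
    simp [SimpleGraph.Walk.isPath_def, SimpleGraph.Adj.toWalk, hw1u.ne, hud1, hud2,
      hw1d1, hw1d2, hadj.ne]
  obtain ⟨P, _, hPuniq⟩ := hT.existsUnique_path u d2
  have heq := (hPuniq _ hq1).trans (hPuniq _ hq2).symm
  have hlen := congrArg SimpleGraph.Walk.length heq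
  simp [SimpleGraph.Adj.toWalk] at hlen

end TreeLemmas

section Counting
variable {V : Type*} {T : SimpleGraph V}

lemma matching_card_le [Fintype V] (hT : T.IsTree) {M : T.Subgraph} (hM : M.IsMatching) (u : V) :
    M.edgeSet.ncard ≤ {v | 2 ≤ T.dist u v}.ncard + 1 := by
  classical
  set S2 : Set V := {v | 2 ≤ T.dist u v} with hS2
  set E0 : Set (Sym2 V) := M.edgeSet ∩ {e | u ∈ e} with hE0
  set E' : Set (Sym2 V) := M.edgeSet \ {e | u ∈ e} with hE'
  have hsplit : M.edgeSet.ncard ≤ E'.ncard + E0.ncard := by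
    calc M.edgeSet.ncard = (E' ∪ E0).ncard := by rw [Set.diff_union_inter]
      _ ≤ _ := Set.ncard_union_le _ _
  have hE0card : E0.ncard ≤ 1 := by
    have hss : E0.Subsingleton := fun e he f hf =>
      matching_edge_unique hM he.1 hf.1 he.2 hf.2
    rcases hss.eq_empty_or_singleton with h | ⟨x, h⟩ <;> rw [h] <;> simp
  have hkey : ∀ e ∈ E', ∃ x, x ∈ e ∧ 2 ≤ T.dist u x := by
    have : ∀ a b : V, s(a, b) ∈ E' → ∃ x, x ∈ s(a, b) ∧ 2 ≤ T.dist u x := by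
      intro a b hab
      obtain ⟨he1, he2⟩ := hab
      rw [SimpleGraph.Subgraph.mem_edgeSet] at he1
      have hadj : T.Adj a b := M.adj_sub he1
      simp only [Set.mem_setOf_eq, Sym2.mem_iff, not_or] at he2
      obtain ⟨hua, hub⟩ := he2
      have hda : 1 ≤ T.dist u a := (hT.isConnected u a).pos_dist_of_ne hua
      have hdb : 1 ≤ T.dist u b := (hT.isConnected u b).pos_dist_of_ne hub
      by_contra hcon
      push_neg at hcon
      have ha2 := hcon a (by simp)
      have hb2 := hcon b (by simp)
      have ha1 : T.dist u a = 1 := by omega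
      have hb1 : T.dist u b = 1 := by omega
      exact tree_no_triangle hT hadj (SimpleGraph.dist_eq_one_iff_adj.mp ha1)
        (SimpleGraph.dist_eq_one_iff_adj.mp hb1)
    intro e he
    induction e with
    | h a b => exact this a b he
  set f : Sym2 V → V := fun e =>
    if he : ∃ x, x ∈ e ∧ 2 ≤ T.dist u x then he.choose else u with hf
  have hmem : ∀ e ∈ E', f e ∈ e ∧ f e ∈ S2 := by
    intro e he
    have hex := hkey e he
    rw [hf]
    simp only [dif_pos hex]
    exact ⟨hex.choose_spec.1, hex.choose_spec.2⟩
  have hE'card : E'.ncard ≤ S2.ncard := by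
    refine Set.ncard_le_ncard_of_injOn f (fun e he => (hmem e he).2) ?_ (Set.toFinite _)
    intro e1 h1 e2 h2 heq
    exact matching_edge_unique hM h1.1 h2.1 (hmem e1 h1).1 (heq ▸ (hmem e2 h2).1)
  omega

lemma status_decomp [Fintype V] (hT : T.IsTree) (u : V) :
    status T u = (Fintype.card V - 1) + {v | 2 ≤ T.dist u v}.ncard +
      ∑ v : V, (T.dist u v - (if 2 ≤ T.dist u v then 2 else 1)) := by
  classical
  have hg : ∀ v : V, v ≠ u → (if 2 ≤ T.dist u v then 2 else 1) ≤ T.dist u v := by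
    intro v hvne
    have h1 : 1 ≤ T.dist u v := (hT.isConnected u v).pos_dist_of_ne (Ne.symm hvne)
    split <;> omega
  have h1 : status T u = ∑ v ∈ Finset.univ.erase u, T.dist u v := by
    unfold status
    rw [← Finset.add_sum_erase Finset.univ _ (Finset.mem_univ u), SimpleGraph.dist_self,
      Nat.zero_add]
  have h0 : ∑ v : V, (T.dist u v - (if 2 ≤ T.dist u v then 2 else 1))
      = ∑ v ∈ Finset.univ.erase u, (T.dist u v - (if 2 ≤ T.dist u v then 2 else 1)) := by
    rw [← Finset.add_sum_erase Finset.univ _ (Finset.mem_univ u), SimpleGraph.dist_self]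
    norm_num
  rw [h1, h0]
  have h2 : ∀ v ∈ Finset.univ.erase u,
      T.dist u v = (if 2 ≤ T.dist u v then 2 else 1) +
        (T.dist u v - (if 2 ≤ T.dist u v then 2 else 1)) := by
    intro v hv
    have := hg v (Finset.ne_of_mem_erase hv)
    omega
  rw [Finset.sum_congr rfl h2, Finset.sum_add_distrib]
  congr 1
  have h3 : ∀ v ∈ Finset.univ.erase u,
      (if 2 ≤ T.dist u v then 2 else 1) = 1 + (if 2 ≤ T.dist u v then 1 else 0) := by
    intro v _; split <;> rfl
  rw [Finset.sum_congr rfl h3, Finset.sum_add_distrib, Finset.sum_const, Finset.sum_boole,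
    Finset.card_erase_of_mem (Finset.mem_univ u), Finset.card_univ]
  congr 1
  · simp
  have h4 : (Finset.univ.erase u).filter (fun v => 2 ≤ T.dist u v)
      = Finset.univ.filter (fun v => 2 ≤ T.dist u v) := by
    ext v
    by_cases hv : v = u
    · subst hv; simp [SimpleGraph.dist_self]
    · simp [hv]
  rw [Set.ncard_eq_toFinset_card', Set.toFinset_setOf, h4]
  simp

end Counting

section Structure
variable {V : Type*} {T : SimpleGraph V}

lemma iso_of_structure [Fintype V] (hT : T.IsTree) {n m : ℕ}
    (hn : Fintype.card V = n) (hm1 : 1 ≤ m) (hm2 : 2 * m ≤ n) (u : V)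
    (hdist : ∀ v : V, v ≠ u → T.dist u v = 1 ∨ T.dist u v = 2)
    (hD : {v | T.dist u v = 2}.ncard = m - 1)
    {M : T.Subgraph} (hM : M.IsMatching) (hMcard : M.edgeSet.ncard = m) :
    Nonempty (T ≃g treeA n m) := by
  classical
  set D : Set V := {v | T.dist u v = 2} with hDdef
  set N : Set V := {v | T.dist u v = 1} with hNdef
  have huN : u ∉ N := by simp [hNdef, SimpleGraph.dist_self]
  have huD : u ∉ D := by simp [hDdef, SimpleGraph.dist_self]
  have htri : ∀ v : V, v = u ∨ v ∈ N ∨ v ∈ D := by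
    intro v
    by_cases hv : v = u
    · exact Or.inl hv
    · rcases hdist v hv with h | h
      · exact Or.inr (Or.inl h)
      · exact Or.inr (Or.inr h)
  -- the parent function
  set p : V → V := fun d => if hd : T.dist u d = 2 then (tree_parent hT hd).choose else u
    with hpdef
  have hp_spec : ∀ d ∈ D, T.Adj u (p d) ∧ T.Adj (p d) d := by
    intro d hd
    have hd' : T.dist u d = 2 := hd
    simp only [hpdef, dif_pos hd']
    exact (tree_parent hT hd').choose_spec.1
  have hp_unique : ∀ d ∈ D, ∀ w, T.Adj u w → T.Adj w d → w = p d := by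
    intro d hd w hw1 hw2
    have hd' : T.dist u d = 2 := hd
    simp only [hpdef, dif_pos hd']
    exact (tree_parent hT hd').choose_spec.2 w ⟨hw1, hw2⟩
  have hpN : ∀ d ∈ D, p d ∈ N := by
    intro d hd
    exact SimpleGraph.dist_eq_one_iff_adj.mpr (hp_spec d hd).1
  -- edge classification
  have hclass : ∀ a b : V, T.Adj a b →
      (a = u ∧ b ∈ N) ∨ (b = u ∧ a ∈ N) ∨
      (b ∈ D ∧ a = p b) ∨ (a ∈ D ∧ b = p a) := by
    intro a b hab
    rcases htri a with ha | ha | ha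
    · subst ha
      exact Or.inl ⟨rfl, SimpleGraph.dist_eq_one_iff_adj.mpr hab⟩
    · rcases htri b with hb | hb | hb
      · subst hb
        exact Or.inr (Or.inl ⟨rfl, ha⟩)
      · exact (tree_no_triangle hT hab (SimpleGraph.dist_eq_one_iff_adj.mp ha)
          (SimpleGraph.dist_eq_one_iff_adj.mp hb)).elim
      · exact Or.inr (Or.inr (Or.inl ⟨hb,
          hp_unique b hb a (SimpleGraph.dist_eq_one_iff_adj.mp ha) hab⟩))
    · rcases htri b with hb | hb | hb
      · have hab' : T.Adj u a := hb ▸ hab.symm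
        have h1 : T.dist u a = 1 := SimpleGraph.dist_eq_one_iff_adj.mpr hab'
        have h2 : T.dist u a = 2 := ha
        omega
      · exact Or.inr (Or.inr (Or.inr ⟨ha,
          hp_unique a ha b (SimpleGraph.dist_eq_one_iff_adj.mp hb) hab.symm⟩))
      · exact absurd hab (tree_no_dd hT ha hb)
  set Nt : Set V := p '' D with hNtdef
  have hNtN : Nt ⊆ N := by
    rintro w ⟨d, hd, rfl⟩
    exact hpN d hd
  -- upper bound on matching size
  have hmNt : m ≤ Nt.ncard + 1 := by
    have hkey : ∀ e ∈ M.edgeSet, ∃ x, x ∈ e ∧ x ∈ ({u} ∪ Nt : Set V) := by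
      have : ∀ a b : V, s(a, b) ∈ M.edgeSet → ∃ x, x ∈ s(a, b) ∧ x ∈ ({u} ∪ Nt : Set V) := by
        intro a b hab
        rw [SimpleGraph.Subgraph.mem_edgeSet] at hab
        rcases hclass a b (M.adj_sub hab) with ⟨h1, _⟩ | ⟨h1, _⟩ | ⟨h1, h2⟩ | ⟨h1, h2⟩
        · exact ⟨a, by simp, Or.inl (by simp [h1])⟩
        · exact ⟨b, by simp, Or.inl (by simp [h1])⟩
        · exact ⟨a, by simp, Or.inr (h2 ▸ Set.mem_image_of_mem p h1)⟩
        · exact ⟨b, by simp, Or.inr (h2 ▸ Set.mem_image_of_mem p h1)⟩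
      intro e he
      induction e with
      | h a b => exact this a b he
    set f : Sym2 V → V := fun e =>
      if he : ∃ x, x ∈ e ∧ x ∈ ({u} ∪ Nt : Set V) then he.choose else u with hf
    have hmem : ∀ e ∈ M.edgeSet, f e ∈ e ∧ f e ∈ ({u} ∪ Nt : Set V) := by
      intro e he
      have hex := hkey e he
      rw [hf]
      simp only [dif_pos hex]
      exact ⟨hex.choose_spec.1, hex.choose_spec.2⟩
    have h1 : M.edgeSet.ncard ≤ ({u} ∪ Nt : Set V).ncard := by
      refine Set.ncard_le_ncard_of_injOn f (fun e he => (hmem e he).2) ?_ (Set.toFinite _)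
      intro e1 h1 e2 h2 heq
      exact matching_edge_unique hM h1 h2 (hmem e1 h1).1 (heq ▸ (hmem e2 h2).1)
    have h2 : ({u} ∪ Nt : Set V).ncard ≤ 1 + Nt.ncard := by
      calc ({u} ∪ Nt : Set V).ncard ≤ ({u} : Set V).ncard + Nt.ncard :=
            Set.ncard_union_le _ _
        _ = 1 + Nt.ncard := by rw [Set.ncard_singleton]
    omega
  have hNtle : Nt.ncard ≤ m - 1 :=
    le_trans (Set.ncard_image_le (Set.toFinite _)) (le_of_eq hD)
  have hNtcard : Nt.ncard = m - 1 := by omega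
  have hpinj : Set.InjOn p D := by
    refine Set.injOn_of_ncard_image_eq ?_ (Set.toFinite _)
    rw [← hNtdef, hNtcard, hD]
  -- cardinalities
  have hNDdisj : Disjoint N D := by
    rw [Set.disjoint_left]
    intro v hv1 hv2
    have h1 : T.dist u v = 1 := hv1
    have h2 : T.dist u v = 2 := hv2
    omega
  have huniv : (Set.univ : Set V) = insert u (N ∪ D) := by
    ext v
    simp only [Set.mem_univ, true_iff, Set.mem_insert_iff, Set.mem_union]
    rcases htri v with h | h | h
    · exact Or.inl h
    · exact Or.inr (Or.inl h)
    · exact Or.inr (Or.inr h)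
  have hcards : N.ncard + D.ncard + 1 = n := by
    have h1 : (Set.univ : Set V).ncard = n := by rw [Set.ncard_univ, Nat.card_eq_fintype_card, hn]
    rw [huniv] at h1
    rw [Set.ncard_insert_of_notMem (by
      simp only [Set.mem_union]
      rintro (h | h)
      · exact huN h
      · exact huD h) (Set.toFinite _)] at h1
    rw [Set.ncard_union_eq hNDdisj (Set.toFinite _) (Set.toFinite _)] at h1
    omega
  have hNcard : N.ncard = n - m := by omega
  set F : Set V := N \ Nt with hFdef
  have hFcard : F.ncard = n - 2 * m + 1 := by
    rw [hFdef, Set.ncard_diff hNtN (Set.toFinite _), hNcard, hNtcard]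
    omega
  have hNtfin : Fintype.card ↥Nt = m - 1 := by
    rw [← Nat.card_eq_fintype_card, Nat.card_coe_set_eq, hNtcard]
  have hFfin : Fintype.card ↥F = n - 2 * m + 1 := by
    rw [← Nat.card_eq_fintype_card, Nat.card_coe_set_eq, hFcard]
  set eNt : ↥Nt ≃ Fin (m - 1) := Fintype.equivFinOfCardEq hNtfin with heNt
  set eF : ↥F ≃ Fin (n - 2 * m + 1) := Fintype.equivFinOfCardEq hFfin with heF
  have hNtD : ∀ v ∈ Nt, v ∉ D := fun v hv => Set.disjoint_left.mp hNDdisj (hNtN hv)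
  set idx : V → ℕ := fun v =>
    if hv : v ∈ D then n - m + 1 + (eNt ⟨p v, Set.mem_image_of_mem p hv⟩).val
    else if hv2 : v ∈ Nt then 1 + (eNt ⟨v, hv2⟩).val
    else if hv3 : v = u then 0
    else m + (eF ⟨v, ⟨(hdist v hv3).resolve_right hv, hv2⟩⟩).val
    with hidx
  have hvalD : ∀ d (hd : d ∈ D),
      idx d = n - m + 1 + (eNt ⟨p d, Set.mem_image_of_mem p hd⟩).val := by
    intro d hd
    simp only [hidx, dif_pos hd]
  have hvalNt : ∀ w (hw : w ∈ Nt), idx w = 1 + (eNt ⟨w, hw⟩).val := by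
    intro w hw
    simp only [hidx, dif_neg (hNtD w hw), dif_pos hw]
  have hvalu : idx u = 0 := by
    simp only [hidx, dif_neg huD, dif_neg (fun h => huN (hNtN h)), dif_pos rfl]
    simp
  have hvalF : ∀ v (hv : v ∈ F), ∃ hv' : v ∈ F, idx v = m + (eF ⟨v, hv'⟩).val := by
    intro v hv
    have hv1 : v ∉ D := fun h => by
      have h1 : T.dist u v = 1 := hv.1
      have h2 : T.dist u v = 2 := h
      omega
    have hv2 : v ∉ Nt := hv.2
    have hv3 : v ≠ u := fun h => huN (h ▸ hv.1)
    refine ⟨⟨(hdist v hv3).resolve_right hv1, hv2⟩, ?_⟩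
    simp only [hidx, dif_neg hv1, dif_neg hv2, dif_neg hv3]
  -- bounds
  have hb : ∀ v : V, (v = u ∧ idx v = 0) ∨ (v ∈ Nt ∧ 1 ≤ idx v ∧ idx v ≤ m - 1) ∨
      (v ∈ F ∧ m ≤ idx v ∧ idx v ≤ n - m) ∨
      (v ∈ D ∧ n - m + 1 ≤ idx v ∧ idx v ≤ n - 1) := by
    intro v
    rcases htri v with h | h | h
    · exact Or.inl ⟨h, h ▸ hvalu⟩
    · by_cases hv : v ∈ Nt
      · refine Or.inr (Or.inl ⟨hv, ?_⟩)
        have h1 := hvalNt v hv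
        have h2 := (eNt ⟨v, hv⟩).isLt
        omega
      · have hvF : v ∈ F := ⟨h, hv⟩
        refine Or.inr (Or.inr (Or.inl ⟨hvF, ?_⟩))
        obtain ⟨hv', h1⟩ := hvalF v hvF
        have h2 := (eF ⟨v, hv'⟩).isLt
        omega
    · refine Or.inr (Or.inr (Or.inr ⟨h, ?_⟩))
      have h1 := hvalD v h
      have h2 := (eNt ⟨p v, Set.mem_image_of_mem p h⟩).isLt
      omega
  have hlt : ∀ v, idx v < n := by
    intro v
    rcases hb v with ⟨_, h⟩ | ⟨_, h⟩ | ⟨_, h⟩ | ⟨_, h⟩ <;> omega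
  -- region determination
  have r0 : ∀ v, idx v = 0 → v = u := by
    intro v hv
    rcases hb v with ⟨h, _⟩ | ⟨_, h⟩ | ⟨_, h⟩ | ⟨_, h⟩ <;> first | exact h | omega
  have rNt : ∀ v, 1 ≤ idx v → idx v ≤ m - 1 → v ∈ Nt := by
    intro v h1 h2
    rcases hb v with ⟨_, h⟩ | ⟨h, _⟩ | ⟨_, h⟩ | ⟨_, h⟩ <;> first | exact h | omega
  have rF : ∀ v, m ≤ idx v → idx v ≤ n - m → v ∈ F := by
    intro v h1 h2
    rcases hb v with ⟨_, h⟩ | ⟨_, h⟩ | ⟨h, _⟩ | ⟨_, h⟩ <;> first | exact h | omega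
  have rD : ∀ v, n - m + 1 ≤ idx v → v ∈ D := by
    intro v h1
    rcases hb v with ⟨_, h⟩ | ⟨_, h⟩ | ⟨_, h⟩ | ⟨h, _⟩ <;> first | exact h | omega
  have rN : ∀ v, 1 ≤ idx v → idx v ≤ n - m → v ∈ N := by
    intro v h1 h2
    rcases hb v with ⟨_, h⟩ | ⟨h, _⟩ | ⟨h, _⟩ | ⟨_, h⟩
    · omega
    · exact hNtN h
    · exact h.1
    · omega
  have bN : ∀ v ∈ N, 1 ≤ idx v ∧ idx v ≤ n - m := by
    intro v hv
    rcases hb v with ⟨h, _⟩ | ⟨_, h⟩ | ⟨_, h⟩ | ⟨h, _⟩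
    · exact absurd (h ▸ hv) huN
    · omega
    · omega
    · exact absurd hv (Set.disjoint_left.mp hNDdisj.symm h ).elim
  -- injectivity
  have hinj : Function.Injective idx := by
    intro x y hxy
    rcases hb x with ⟨hx, hx2⟩ | ⟨hx, hx2⟩ | ⟨hx, hx2⟩ | ⟨hx, hx2⟩
    · have : y = u := r0 y (by omega)
      rw [hx, this]
    · have hy : y ∈ Nt := rNt y (by omega) (by omega)
      have e1 := hvalNt x hx
      have e2 := hvalNt y hy
      have : (eNt ⟨x, hx⟩) = (eNt ⟨y, hy⟩) := Fin.ext (by omega)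
      exact congrArg Subtype.val (eNt.injective this)
    · have hy : y ∈ F := rF y (by omega) (by omega)
      obtain ⟨hx', e1⟩ := hvalF x hx
      obtain ⟨hy', e2⟩ := hvalF y hy
      have : (eF ⟨x, hx'⟩) = (eF ⟨y, hy'⟩) := Fin.ext (by omega)
      exact congrArg Subtype.val (eF.injective this)
    · have hy : y ∈ D := rD y (by omega)
      have e1 := hvalD x hx
      have e2 := hvalD y hy
      have : (eNt ⟨p x, Set.mem_image_of_mem p hx⟩) = (eNt ⟨p y, Set.mem_image_of_mem p hy⟩) :=
        Fin.ext (by omega)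
      exact hpinj hx hy (congrArg Subtype.val (eNt.injective this))
  have hbij : Function.Bijective (fun v => (⟨idx v, hlt v⟩ : Fin n)) := by
    rw [Fintype.bijective_iff_injective_and_card]
    refine ⟨fun x y h => hinj (by simpa [Fin.mk.injEq] using h), by simp [hn]⟩
  set φ : V ≃ Fin n := Equiv.ofBijective _ hbij with hφdef
  have hφ : ∀ v, ((φ v : Fin n) : ℕ) = idx v := fun v => rfl
  -- adjacency: relation implies adjacency
  have hrel : ∀ x y : V,
      ((((φ x : Fin n) : ℕ) = 0 ∧ 1 ≤ ((φ y : Fin n) : ℕ) ∧ ((φ y : Fin n) : ℕ) ≤ n - m) ∨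
       (1 ≤ ((φ x : Fin n) : ℕ) ∧ ((φ x : Fin n) : ℕ) ≤ m - 1 ∧
         ((φ y : Fin n) : ℕ) = n - m + ((φ x : Fin n) : ℕ))) → T.Adj x y := by
    intro x y hr
    rw [hφ, hφ] at hr
    rcases hr with ⟨h0, h1, h2⟩ | ⟨h1, h2, h3⟩
    · have hx : x = u := r0 x h0
      have hy : y ∈ N := rN y h1 h2
      rw [hx]
      exact SimpleGraph.dist_eq_one_iff_adj.mp hy
    · have hx : x ∈ Nt := rNt x h1 h2
      have hy : y ∈ D := rD y (by omega)
      have e1 := hvalD y hy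
      have e2 := hvalNt x hx
      have heq : (eNt ⟨p y, Set.mem_image_of_mem p hy⟩) = (eNt ⟨x, hx⟩) := Fin.ext (by omega)
      have hpx : p y = x := congrArg Subtype.val (eNt.injective heq)
      exact hpx ▸ (hp_spec y hy).2
  -- main adjacency iff
  refine ⟨⟨φ, ?_⟩⟩
  intro x y
  constructor
  · intro h
    rw [treeA, SimpleGraph.fromRel_adj] at h
    rcases h.2 with hr | hr
    · exact hrel x y hr
    · exact (hrel y x hr).symm
  · intro h
    rw [treeA, SimpleGraph.fromRel_adj]
    have hne : φ x ≠ φ y := fun hc => h.ne (φ.injective hc)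
    refine ⟨hne, ?_⟩
    rcases hclass x y h with ⟨hx, hy⟩ | ⟨hy, hx⟩ | ⟨hy, hx⟩ | ⟨hx, hy⟩
    · refine Or.inl (Or.inl ⟨?_, ?_⟩)
      · rw [hφ, hx, hvalu]
      · rw [hφ]
        exact bN y hy
    · refine Or.inr (Or.inl ⟨?_, ?_⟩)
      · rw [hφ, hy, hvalu]
      · rw [hφ]
        exact bN x hx
    · -- y ∈ D, x = p y
      have hxNt : x ∈ Nt := hx ▸ Set.mem_image_of_mem p hy
      refine Or.inl (Or.inr ⟨?_, ?_, ?_⟩)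
      · rw [hφ]
        have := hvalNt x hxNt
        have := (eNt ⟨x, hxNt⟩).isLt
        omega
      · rw [hφ]
        have := hvalNt x hxNt
        have := (eNt ⟨x, hxNt⟩).isLt
        omega
      · rw [hφ, hφ]
        have e1 := hvalD y hy
        have e2 := hvalNt x hxNt
        have heq : (eNt ⟨p y, Set.mem_image_of_mem p hy⟩) = (eNt ⟨x, hxNt⟩) := by
          congr 1
          exact Subtype.ext hx.symm
        rw [heq] at e1
        have hNtltD : m - 1 < n - m + 1 := by omega
        omega
    · -- x ∈ D, y = p x
      have hyNt : y ∈ Nt := hy ▸ Set.mem_image_of_mem p hx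
      refine Or.inr (Or.inr ⟨?_, ?_, ?_⟩)
      · rw [hφ]
        have := hvalNt y hyNt
        have := (eNt ⟨y, hyNt⟩).isLt
        omega
      · rw [hφ]
        have := hvalNt y hyNt
        have := (eNt ⟨y, hyNt⟩).isLt
        omega
      · rw [hφ, hφ]
        have e1 := hvalD x hx
        have e2 := hvalNt y hyNt
        have heq : (eNt ⟨p x, Set.mem_image_of_mem p hx⟩) = (eNt ⟨y, hyNt⟩) := by
          congr 1
          exact Subtype.ext hy.symm
        rw [heq] at e1
        omega

end Structure

section TreeACalc

lemma treeA_dist {n m : ℕ} (hm1 : 1 ≤ m) (hm2 : 2 * m ≤ n) (h0 : 0 < n) (v : Fin n) :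
    (treeA n m).dist ⟨0, h0⟩ v =
      if (v : ℕ) = 0 then 0 else if (v : ℕ) ≤ n - m then 1 else 2 := by
  by_cases hv0 : (v : ℕ) = 0
  · have hveq : v = ⟨0, h0⟩ := Fin.ext hv0
    rw [hveq, SimpleGraph.dist_self]
    simp
  by_cases hv1 : (v : ℕ) ≤ n - m
  · rw [if_neg hv0, if_pos hv1]
    refine SimpleGraph.dist_eq_one_iff_adj.mpr ?_
    rw [treeA, SimpleGraph.fromRel_adj]
    refine ⟨fun hc => hv0 (by rw [← hc]), Or.inl (Or.inl ⟨rfl, by omega, hv1⟩)⟩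
  · rw [if_neg hv0, if_neg hv1]
    push_neg at hv1
    have hvlt := v.isLt
    have him : (v : ℕ) - (n - m) < n := by omega
    have hmidval : ((⟨(v : ℕ) - (n - m), him⟩ : Fin n) : ℕ) = (v : ℕ) - (n - m) := rfl
    have hadj2 : (treeA n m).Adj ⟨(v : ℕ) - (n - m), him⟩ v := by
      rw [treeA, SimpleGraph.fromRel_adj]
      refine ⟨fun hc => ?_, Or.inl (Or.inr ⟨by omega, by omega, by omega⟩)⟩
      have := congrArg Fin.val hc
      rw [hmidval] at this
      omega
    have hadj1 : (treeA n m).Adj ⟨0, h0⟩ ⟨(v : ℕ) - (n - m), him⟩ := by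
      rw [treeA, SimpleGraph.fromRel_adj]
      refine ⟨fun hc => ?_, Or.inl (Or.inl ⟨rfl, by omega, by omega⟩)⟩
      have := congrArg Fin.val hc
      rw [hmidval] at this
      have h00 : ((⟨0, h0⟩ : Fin n) : ℕ) = 0 := rfl
      omega
    have hwalk : (treeA n m).Walk ⟨0, h0⟩ v := SimpleGraph.Walk.cons hadj1 hadj2.toWalk
    have hle : (treeA n m).dist ⟨0, h0⟩ v ≤ 2 :=
      SimpleGraph.dist_le (SimpleGraph.Walk.cons hadj1 hadj2.toWalk)
    have hne0 : (treeA n m).dist ⟨0, h0⟩ v ≠ 0 := by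
      rw [Ne, SimpleGraph.Reachable.dist_eq_zero_iff ⟨hwalk⟩]
      intro hc
      have := congrArg Fin.val hc
      have h00 : ((⟨0, h0⟩ : Fin n) : ℕ) = 0 := rfl
      omega
    have hne1 : (treeA n m).dist ⟨0, h0⟩ v ≠ 1 := by
      rw [Ne, SimpleGraph.dist_eq_one_iff_adj]
      intro hc
      rw [treeA, SimpleGraph.fromRel_adj] at hc
      have h00 : ((⟨0, h0⟩ : Fin n) : ℕ) = 0 := rfl
      rcases hc.2 with (⟨_, h, h'⟩ | ⟨h, _, _⟩) | (⟨h, _⟩ | ⟨_, _, h⟩) <;> omega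
    omega

lemma treeA_status {n m : ℕ} (hm1 : 1 ≤ m) (hm2 : 2 * m ≤ n) (h0 : 0 < n) :
    status (treeA n m) ⟨0, h0⟩ = n + m - 2 := by
  unfold status
  rw [Finset.sum_congr rfl (fun v _ => treeA_dist hm1 hm2 h0 v)]
  rw [Fin.sum_univ_eq_sum_range (fun i => if i = 0 then 0 else if i ≤ n - m then 1 else 2)]
  have hsplit : ∀ i ∈ Finset.range n,
      (if i = 0 then 0 else if i ≤ n - m then 1 else 2)
        = (if 1 ≤ i then 1 else 0) + (if n - m + 1 ≤ i then 1 else 0) := by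
    intro i _
    split_ifs <;> omega
  rw [Finset.sum_congr rfl hsplit, Finset.sum_add_distrib,
    Finset.sum_boole, Finset.sum_boole]
  have h1 : (Finset.range n).filter (fun i => 1 ≤ i) = Finset.Ico 1 n := by
    ext i; simp [Finset.mem_Ico]; omega
  have h2 : (Finset.range n).filter (fun i => n - m + 1 ≤ i) = Finset.Ico (n - m + 1) n := by
    ext i; simp [Finset.mem_Ico]; omega
  rw [h1, h2, Nat.card_Ico, Nat.card_Ico]
  simp
  omega

end TreeACalc


/-- Lower bound on the minimum status of a tree with given order and matching
number, with equality iff `T ≅ A_{n,m}`. -/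
theorem stmt3 [Fintype V] (T : SimpleGraph V) (n m : ℕ)
    (hn : Fintype.card V = n) (hT : T.IsTree)
    (hm : matchingNumber T = m) (hm1 : 1 ≤ m) (hm2 : 2 * m ≤ n) :
    n + m - 2 ≤ minStatus T ∧
      (minStatus T = n + m - 2 ↔ Nonempty (T ≃g treeA n m)) := by
  classical
  obtain ⟨M, hM, hMc⟩ := exists_max_matching T
  have hMcard : M.edgeSet.ncard = m := by
    rw [hMc, show sSup {k | ∃ M : T.Subgraph, M.IsMatching ∧ M.edgeSet.ncard = k}
      = matchingNumber T from rfl, hm]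
  have hn2 : 2 ≤ n := by omega
  have hVne : Nonempty V := by
    rw [← Fintype.card_pos_iff, hn]; omega
  have hlow : ∀ u : V, n + m - 2 ≤ status T u := by
    intro u
    have h1 := status_decomp hT u
    have h2 := matching_card_le hT hM u
    rw [hMcard] at h2
    rw [hn] at h1
    omega
  have hlb : n + m - 2 ≤ minStatus T := by
    apply le_csInf (Set.range_nonempty _)
    rintro k ⟨u, rfl⟩
    exact hlow u
  refine ⟨hlb, ?_, ?_⟩
  · intro heq
    obtain ⟨u, hu⟩ := Nat.sInf_mem (Set.range_nonempty (status T))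
    have hu' : status T u = n + m - 2 := by rw [hu]; exact heq
    clear hu
    have hu := hu'
    have h1 := status_decomp hT u
    have h2 := matching_card_le hT hM u
    rw [hMcard] at h2
    rw [hn, hu] at h1
    have hsum0 : ∑ v : V, (T.dist u v - (if 2 ≤ T.dist u v then 2 else 1)) = 0 := by
      have hge : m - 1 ≤ {v | 2 ≤ T.dist u v}.ncard := by omega
      omega
    have hpoint : ∀ v : V, T.dist u v - (if 2 ≤ T.dist u v then 2 else 1) = 0 := by
      intro v
      exact (Finset.sum_eq_zero_iff.mp hsum0) v (Finset.mem_univ v)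
    have hdist : ∀ v : V, v ≠ u → T.dist u v = 1 ∨ T.dist u v = 2 := by
      intro v hv
      have hpos : 1 ≤ T.dist u v := (hT.isConnected u v).pos_dist_of_ne (Ne.symm hv)
      have := hpoint v
      split_ifs at this <;> omega
    have hSeq : {v | 2 ≤ T.dist u v} = {v | T.dist u v = 2} := by
      ext v
      simp only [Set.mem_setOf_eq]
      have := hpoint v
      split_ifs at this <;> omega
    have hD : {v | T.dist u v = 2}.ncard = m - 1 := by
      rw [← hSeq]
      omega
    exact iso_of_structure hT hn hm1 hm2 u hdist hD hM hMcard
  · rintro ⟨F⟩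
    have h0n : 0 < n := by omega
    have hstat : status T (F.symm ⟨0, h0n⟩) = n + m - 2 := by
      have h := iso_status F (F.symm ⟨0, h0n⟩)
      rw [RelIso.apply_symm_apply] at h
      rw [← h, treeA_status hm1 hm2 h0n]
    have hle : minStatus T ≤ n + m - 2 := by
      rw [← hstat]
      exact Nat.sInf_le ⟨_, rfl⟩
    omega
end

section
/- For integers n, p, q with p + q + 2 <= n and p >= q >= 2, the minimum status of the dumbbell D_n(p,q) is strictly greater than the minimum status of D_n(p+1, q-1). -/
open SimpleGraph

variable {V : Type*}

section DumbbellProof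

namespace DB
set_option linter.unusedSectionVars false
set_option linter.unnecessarySeqFocus false
open Finset

lemma gauss_step : ∀ a : ℕ, (a-1)*a + 2*a = a*(a+1) := by
  intro a
  cases a with
  | zero => rfl
  | succ b => simp [Nat.succ_sub_one]; ring

lemma sum_dist (m : ℕ) : ∀ i ≤ m, 2 * ∑ j ∈ range m, Nat.dist i j
    = i*(i+1) + (m-1-i)*(m-i) := by
  induction m with
  | zero =>
      intro i hi
      simp at hi
      subst hi
      simp
  | succ m ih =>
      intro i hi
      rcases Nat.lt_succ_iff_lt_or_eq.mp (Nat.lt_succ_of_le hi) with h | h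
      · have h' : i ≤ m := by omega
        rw [Finset.sum_range_succ, Nat.mul_add, ih i h', Nat.dist_eq_sub_of_le h']
        have e0 : m - 1 - i = (m - i) - 1 := by omega
        have e1 : m + 1 - 1 - i = m - i := by omega
        have e2 : m + 1 - i = (m - i) + 1 := by omega
        rw [e0, e1, e2]
        linarith [gauss_step (m - i)]
      · subst h
        rw [Finset.sum_range_succ]
        have e : ∀ j ∈ range m, Nat.dist (m+1) j = Nat.dist m j + 1 := by
          intro j hj
          simp only [Finset.mem_range] at hj
          unfold Nat.dist
          omega
        rw [Finset.sum_congr rfl e, Finset.sum_add_distrib, Finset.sum_const,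
          Finset.card_range, smul_eq_mul, mul_one]
        have hd : Nat.dist (m+1) m = 1 := by unfold Nat.dist; omega
        rw [hd]
        have := ih m le_rfl
        have h2 : m - 1 - m = 0 := by omega
        rw [h2, Nat.zero_mul, Nat.add_zero] at this
        have e1 : m + 1 - 1 - (m+1) = 0 := by omega
        have e2 : m + 1 - (m+1) = 0 := by omega
        rw [e1, e2, Nat.zero_mul, Nat.add_zero]
        zify at this ⊢
        linear_combination this


lemma int_consec (x : ℤ) : 0 ≤ x * (x - 1) := by
  rcases le_or_gt 1 x with h | h
  · exact mul_nonneg (by omega) (by omega)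
  · have h1 : x ≤ 0 := by omega
    have := mul_nonneg (neg_nonneg.mpr h1) (by omega : (0:ℤ) ≤ 1 - x)
    nlinarith

lemma key (m p q i : ℕ) (hm : 2 ≤ m) (hq : 2 ≤ q) (hpq : q ≤ p) (hi : i < m)
    (u : ℕ) (hu : u = (m - 1 - (p - q))/2 - 1) :
    u*(u+1) + (m-1-u)*(m-u) + 2*((p+1)*(u+1) + (q-1)*(m-u)) + 2
      ≤ i*(i+1) + (m-1-i)*(m-i) + 2*(p*(i+1) + q*(m-i)) := by
  obtain ⟨c, rfl⟩ : ∃ c, p = q + c := ⟨p - q, by omega⟩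
  obtain ⟨Q, rfl⟩ : ∃ Q, q = Q + 2 := ⟨q - 2, by omega⟩
  have hum : u < m := by omega
  obtain ⟨a, ha⟩ : ∃ a, m = i + a + 1 := ⟨m - i - 1, by omega⟩
  obtain ⟨b, hb⟩ : ∃ b, m = u + b + 1 := ⟨m - u - 1, by omega⟩
  have e1 : m - i = a + 1 := by omega
  have e2 : m - 1 - i = a := by omega
  have e3 : m - u = b + 1 := by omega
  have e4 : m - 1 - u = b := by omega
  have e5 : Q + 2 - 1 = Q + 1 := by omega
  rw [e1, e2, e3, e4, e5]
  rcases (by omega :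
      (u = 0 ∧ i + a ≤ c + 1) ∨ (b = c + u + 2 ∧ i + a = c + 2*u + 2)
        ∨ (b = c + u + 3 ∧ i + a = c + 2*u + 3)) with ⟨h1, h2⟩ | ⟨h1, h2⟩ | ⟨h1, h2⟩
  · subst h1
    zify
    have g1 : (b:ℤ) = i + a := by omega
    have g2 : (0:ℤ) ≤ c + 1 - i - a := by omega
    have g3 : (1:ℤ) ≤ i + a := by omega
    have g4 : (0:ℤ) ≤ (i:ℤ) * ((i:ℤ) - 1) := int_consec _
    have g5 : (0:ℤ) ≤ (i:ℤ) * ((c:ℤ) + 1 - i - a) := mul_nonneg (by positivity) g2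
    nlinarith [g1, g3, g4, g5]
  · subst h1
    zify
    have g1 : (a:ℤ) = c + 2*u + 2 - i := by omega
    have ga : (a:ℤ) + 1 = c + 2*u + 3 - i := by omega
    have gp1 : (a:ℤ)*((a:ℤ)+1) = (c + 2*u + 2 - i)*(c + 2*u + 3 - i) := by rw [g1] at ga ⊢; rw [ga]
    have gp2 : ((Q:ℤ)+2)*((a:ℤ)+1) = ((Q:ℤ)+2)*(c + 2*u + 3 - i) := by rw [ga]
    have g3 : (0:ℤ) ≤ ((i:ℤ)-u-1)^2 := sq_nonneg _
    linarith [gp1, gp2, g3]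
  · subst h1
    zify
    have g1 : (a:ℤ) = c + 2*u + 3 - i := by omega
    have ga : (a:ℤ) + 1 = c + 2*u + 4 - i := by omega
    have gp1 : (a:ℤ)*((a:ℤ)+1) = (c + 2*u + 3 - i)*(c + 2*u + 4 - i) := by rw [g1] at ga ⊢; rw [ga]
    have gp2 : ((Q:ℤ)+2)*((a:ℤ)+1) = ((Q:ℤ)+2)*(c + 2*u + 4 - i) := by rw [ga]
    have g3 : (0:ℤ) ≤ ((i:ℤ)-u-1) * (((i:ℤ)-u-1) - 1) := int_consec _
    linarith [gp1, gp2, g3]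


/-- level of a vertex index -/
def lv (n p q j : ℕ) : ℕ := if j < n - p - q then j + 1 else if j < n - q then 0 else n - p - q + 1

variable {n p q : ℕ}

lemma adj_iff {a b : Fin n} : (dumbbell n p q).Adj a b ↔ a ≠ b ∧
    (((((a:ℕ)+1 = b ∧ (b:ℕ) < n-p-q) ∨ ((a:ℕ)=0 ∧ n-p-q ≤ (b:ℕ) ∧ (b:ℕ) < n-q) ∨ ((a:ℕ) = n-p-q-1 ∧ n-q ≤ (b:ℕ)))) ∨
     ((((b:ℕ)+1 = a ∧ (a:ℕ) < n-p-q) ∨ ((b:ℕ)=0 ∧ n-p-q ≤ (a:ℕ) ∧ (a:ℕ) < n-q) ∨ ((b:ℕ) = n-p-q-1 ∧ n-q ≤ (a:ℕ))))) := by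
  rw [dumbbell, SimpleGraph.fromRel_adj]

section hyps

variable (hn : p + q + 2 ≤ n) (hp : 1 ≤ p) (hq : 1 ≤ q)
include hn hp hq

lemma adj_succ {a b : Fin n} (hab : (a:ℕ)+1 = b) (hb : (b:ℕ) < n-p-q) :
    (dumbbell n p q).Adj a b := by
  rw [adj_iff]
  exact ⟨fun h => by simp [h] at hab, Or.inl (Or.inl ⟨hab, hb⟩)⟩

lemma adj_left {a b : Fin n} (ha : (a:ℕ) = 0) (hb1 : n-p-q ≤ (b:ℕ)) (hb2 : (b:ℕ) < n-q) :
    (dumbbell n p q).Adj a b := by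
  rw [adj_iff]
  refine ⟨fun h => ?_, Or.inl (Or.inr (Or.inl ⟨ha, hb1, hb2⟩))⟩
  subst h; omega

lemma adj_right {a b : Fin n} (ha : (a:ℕ) = n-p-q-1) (hb : n-q ≤ (b:ℕ)) :
    (dumbbell n p q).Adj a b := by
  rw [adj_iff]
  refine ⟨fun h => ?_, Or.inl (Or.inr (Or.inr ⟨ha, hb⟩))⟩
  subst h; omega

lemma not_adj_pendant {a b : Fin n} (ha : n-p-q ≤ (a:ℕ)) (hb : n-p-q ≤ (b:ℕ)) :
    ¬ (dumbbell n p q).Adj a b := by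
  rw [adj_iff]
  rintro ⟨hne, h⟩
  omega

lemma lev_lip {a b : Fin n} (h : (dumbbell n p q).Adj a b) :
    Nat.dist (lv n p q (a:ℕ)) (lv n p q (b:ℕ)) ≤ 1 := by
  rw [adj_iff] at h
  obtain ⟨hne, hr⟩ := h
  unfold lv Nat.dist
  split_ifs <;> omega

lemma walk_lb {a b : Fin n} (w : (dumbbell n p q).Walk a b) :
    Nat.dist (lv n p q (a:ℕ)) (lv n p q (b:ℕ)) ≤ w.length := by
  induction w with
  | nil => simp [Nat.dist_self]
  | @cons u v w h w' ih =>
      rw [SimpleGraph.Walk.length_cons]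
      calc Nat.dist (lv n p q (u:ℕ)) (lv n p q (w:ℕ))
          ≤ Nat.dist (lv n p q (u:ℕ)) (lv n p q (v:ℕ))
            + Nat.dist (lv n p q (v:ℕ)) (lv n p q (w:ℕ)) := Nat.dist.triangle_inequality _ _ _
        _ ≤ 1 + w'.length := Nat.add_le_add (lev_lip hn hp hq h) ih
        _ = w'.length + 1 := by omega

lemma reach_path : ∀ k, (hk : k < n - p - q) →
    (dumbbell n p q).Reachable ⟨k, by omega⟩ ⟨0, by omega⟩ := by
  intro k
  induction k with
  | zero => intro _; rfl
  | succ k ih =>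
      intro hk
      have hadj : (dumbbell n p q).Adj ⟨k, by omega⟩ ⟨k+1, by omega⟩ :=
        adj_succ hn hp hq rfl hk
      exact (hadj.symm.reachable).trans (ih (by omega))

lemma reach_zero (v : Fin n) : (dumbbell n p q).Reachable v ⟨0, by omega⟩ := by
  rcases lt_or_ge (v:ℕ) (n-p-q) with h | h
  · have : v = (⟨(v:ℕ), by omega⟩ : Fin n) := by ext; rfl
    rw [this]
    exact reach_path hn hp hq _ h
  rcases lt_or_ge (v:ℕ) (n-q) with h2 | h2
  · exact ((adj_left hn hp hq rfl h h2).symm.reachable)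
  · have hadj : (dumbbell n p q).Adj ⟨n-p-q-1, by omega⟩ v := adj_right hn hp hq rfl h2
    exact hadj.symm.reachable.trans (reach_path hn hp hq _ (by omega))

lemma conn : (dumbbell n p q).Connected := by
  have : Nonempty (Fin n) := ⟨⟨0, by omega⟩⟩
  exact ⟨fun u v => (reach_zero hn hp hq u).trans (reach_zero hn hp hq v).symm⟩

lemma dist_lb (u v : Fin n) :
    Nat.dist (lv n p q (u:ℕ)) (lv n p q (v:ℕ)) ≤ (dumbbell n p q).dist u v := by
  obtain ⟨w, hw⟩ := ((conn hn hp hq) u v).exists_walk_length_eq_dist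
  rw [← hw]
  exact walk_lb hn hp hq w


lemma dist_path_le' : ∀ d i, (h : i + d < n - p - q) →
    (dumbbell n p q).dist ⟨i + d, by omega⟩ ⟨i, by omega⟩ ≤ d := by
  intro d
  induction d with
  | zero => intro i h; simp
  | succ d ih =>
      intro i h
      have hadj : (dumbbell n p q).Adj ⟨i + d, by omega⟩ ⟨i + d + 1, by omega⟩ :=
        adj_succ hn hp hq rfl (by simp only [Fin.val_mk]; omega)
      calc (dumbbell n p q).dist ⟨i + (d+1), by omega⟩ ⟨i, by omega⟩
          ≤ (dumbbell n p q).dist ⟨i + (d+1), by omega⟩ ⟨i + d, by omega⟩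
            + (dumbbell n p q).dist ⟨i + d, by omega⟩ ⟨i, by omega⟩ :=
            (conn hn hp hq).dist_triangle
        _ ≤ 1 + d := by
            refine Nat.add_le_add ?_ (ih i (by omega))
            rw [SimpleGraph.dist_comm]
            exact le_of_eq (SimpleGraph.dist_eq_one_iff_adj.mpr hadj)
        _ = d + 1 := by omega

lemma dist_path_le (u v : Fin n) (hu : (u:ℕ) < n-p-q) (hv : (v:ℕ) < n-p-q) :
    (dumbbell n p q).dist u v ≤ Nat.dist (u:ℕ) (v:ℕ) := by
  rcases le_total (v:ℕ) (u:ℕ) with h | h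
  · have := dist_path_le' hn hp hq ((u:ℕ) - (v:ℕ)) (v:ℕ) (by omega)
    have e1 : (⟨(v:ℕ) + ((u:ℕ) - (v:ℕ)), by omega⟩ : Fin n) = u := by ext; simp; omega
    have e2 : (⟨(v:ℕ), by omega⟩ : Fin n) = v := by ext; rfl
    rw [e1, e2] at this
    rwa [Nat.dist_eq_sub_of_le_right h]
  · have := dist_path_le' hn hp hq ((v:ℕ) - (u:ℕ)) (u:ℕ) (by omega)
    have e1 : (⟨(u:ℕ) + ((v:ℕ) - (u:ℕ)), by omega⟩ : Fin n) = v := by ext; simp; omega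
    have e2 : (⟨(u:ℕ), by omega⟩ : Fin n) = u := by ext; rfl
    rw [e1, e2, SimpleGraph.dist_comm] at this
    rwa [Nat.dist_eq_sub_of_le h]

lemma dist_path_eq (u v : Fin n) (hu : (u:ℕ) < n-p-q) :
    (dumbbell n p q).dist u v = Nat.dist (lv n p q (u:ℕ)) (lv n p q (v:ℕ)) := by
  refine le_antisymm ?_ (dist_lb hn hp hq u v)
  have hlvu : lv n p q (u:ℕ) = (u:ℕ) + 1 := by unfold lv; split_ifs <;> omega
  rcases lt_or_ge (v:ℕ) (n-p-q) with h | h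
  · have hlvv : lv n p q (v:ℕ) = (v:ℕ) + 1 := by unfold lv; split_ifs <;> omega
    rw [hlvu, hlvv, Nat.dist_succ_succ]
    exact dist_path_le hn hp hq u v hu h
  rcases lt_or_ge (v:ℕ) (n-q) with h2 | h2
  · -- left pendant
    have hlvv : lv n p q (v:ℕ) = 0 := by unfold lv; split_ifs <;> omega
    rw [hlvu, hlvv, Nat.dist_zero_right]
    have z : Fin n := ⟨0, by omega⟩
    calc (dumbbell n p q).dist u v
        ≤ (dumbbell n p q).dist u ⟨0, by omega⟩ + (dumbbell n p q).dist ⟨0, by omega⟩ v :=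
          (conn hn hp hq).dist_triangle
      _ ≤ (u:ℕ) + 1 := by
          have h1 := dist_path_le hn hp hq u ⟨0, by omega⟩ hu (by simp; omega)
          have h2' : (dumbbell n p q).dist ⟨0, by omega⟩ v ≤ 1 :=
            le_of_eq (SimpleGraph.dist_eq_one_iff_adj.mpr (adj_left hn hp hq rfl h h2))
          simp only [Fin.val_mk] at h1
          rw [Nat.dist_eq_sub_of_le_right (by omega)] at h1
          omega
  · -- right pendant
    have hlvv : lv n p q (v:ℕ) = n-p-q+1 := by unfold lv; split_ifs <;> omega
    rw [hlvu, hlvv]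
    rw [Nat.dist_eq_sub_of_le (by omega)]
    calc (dumbbell n p q).dist u v
        ≤ (dumbbell n p q).dist u ⟨n-p-q-1, by omega⟩
          + (dumbbell n p q).dist ⟨n-p-q-1, by omega⟩ v :=
          (conn hn hp hq).dist_triangle
      _ ≤ (n-p-q+1) - ((u:ℕ)+1) := by
          have h1 := dist_path_le hn hp hq u ⟨n-p-q-1, by omega⟩ hu (by simp; omega)
          have h2' : (dumbbell n p q).dist ⟨n-p-q-1, by omega⟩ v ≤ 1 :=
            le_of_eq (SimpleGraph.dist_eq_one_iff_adj.mpr (adj_right hn hp hq rfl h2))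
          simp only [Fin.val_mk] at h1
          rw [Nat.dist_eq_sub_of_le (by omega)] at h1
          omega

lemma dist_pendant_ge_two (u v : Fin n) (hu : n-p-q ≤ (u:ℕ)) (hv : n-p-q ≤ (v:ℕ))
    (hne : u ≠ v) : 2 ≤ (dumbbell n p q).dist u v := by
  have h0 : (dumbbell n p q).dist u v ≠ 0 :=
    Nat.pos_iff_ne_zero.mp ((conn hn hp hq).pos_dist_of_ne hne)
  have h1 : (dumbbell n p q).dist u v ≠ 1 := by
    intro h
    exact not_adj_pendant hn hp hq hu hv (SimpleGraph.dist_eq_one_iff_adj.mp h)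
  omega


lemma status_path (u : Fin n) (hu : (u:ℕ) < n-p-q) :
    status (dumbbell n p q) u
      = (∑ j ∈ range (n-p-q), Nat.dist (u:ℕ) j) + p * ((u:ℕ)+1) + q * (n-p-q-(u:ℕ)) := by
  unfold status
  have hlvu : lv n p q (u:ℕ) = (u:ℕ) + 1 := by unfold lv; split_ifs <;> omega
  have e1 : ∀ v : Fin n, (dumbbell n p q).dist u v = Nat.dist ((u:ℕ)+1) (lv n p q (v:ℕ)) := by
    intro v; rw [dist_path_eq hn hp hq u v hu, hlvu]
  rw [Finset.sum_congr rfl (fun v _ => e1 v)]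
  rw [Fin.sum_univ_eq_sum_range (fun j => Nat.dist ((u:ℕ)+1) (lv n p q j)) n]
  have hsplit : range n = Finset.Ico 0 n := by rw [Finset.range_eq_Ico]
  rw [hsplit, ← Finset.sum_Ico_consecutive _ (by omega : 0 ≤ n-p-q) (by omega : n-p-q ≤ n),
    ← Finset.sum_Ico_consecutive _ (by omega : n-p-q ≤ n-q) (by omega : n-q ≤ n)]
  have t1 : ∑ j ∈ Finset.Ico 0 (n-p-q), Nat.dist ((u:ℕ)+1) (lv n p q j)
      = ∑ j ∈ range (n-p-q), Nat.dist (u:ℕ) j := by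
    rw [← Finset.range_eq_Ico]
    refine Finset.sum_congr rfl fun j hj => ?_
    simp only [Finset.mem_range] at hj
    have : lv n p q j = j + 1 := by unfold lv; split_ifs <;> omega
    rw [this, Nat.dist_succ_succ]
  have t2 : ∑ j ∈ Finset.Ico (n-p-q) (n-q), Nat.dist ((u:ℕ)+1) (lv n p q j)
      = p * ((u:ℕ)+1) := by
    have : ∀ j ∈ Finset.Ico (n-p-q) (n-q), Nat.dist ((u:ℕ)+1) (lv n p q j) = (u:ℕ)+1 := by
      intro j hj
      simp only [Finset.mem_Ico] at hj
      have : lv n p q j = 0 := by unfold lv; split_ifs <;> omega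
      rw [this, Nat.dist_zero_right]
    rw [Finset.sum_congr rfl this, Finset.sum_const, Nat.card_Ico, smul_eq_mul]
    congr 1
    omega
  have t3 : ∑ j ∈ Finset.Ico (n-q) n, Nat.dist ((u:ℕ)+1) (lv n p q j)
      = q * (n-p-q-(u:ℕ)) := by
    have : ∀ j ∈ Finset.Ico (n-q) n, Nat.dist ((u:ℕ)+1) (lv n p q j) = n-p-q-(u:ℕ) := by
      intro j hj
      simp only [Finset.mem_Ico] at hj
      have : lv n p q j = n-p-q+1 := by unfold lv; split_ifs <;> omega
      rw [this]
      unfold Nat.dist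
      omega
    rw [Finset.sum_congr rfl this, Finset.sum_const, Nat.card_Ico, smul_eq_mul]
    congr 1
    omega
  rw [t1, t2, t3]
  ring

lemma status_left_ge (v : Fin n) (h1 : n-p-q ≤ (v:ℕ)) (h2 : (v:ℕ) < n-q) :
    status (dumbbell n p q) ⟨0, by omega⟩ ≤ status (dumbbell n p q) v := by
  unfold status
  have hG : ∀ a b : Fin n, True := fun _ _ => trivial
  set z : Fin n := ⟨0, by omega⟩ with hz
  have hzv : z ≠ v := by
    intro h
    have : (z:ℕ) = (v:ℕ) := by rw [h]
    simp [hz] at this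
    omega
  have hzmem : z ∈ (univ : Finset (Fin n)).erase v :=
    Finset.mem_erase.mpr ⟨hzv, Finset.mem_univ z⟩
  have split1 : ∀ f : Fin n → ℕ, ∑ w : Fin n, f w = f v + (f z + ∑ w ∈ ((univ : Finset (Fin n)).erase v).erase z, f w) := by
    intro f
    rw [Finset.add_sum_erase _ f hzmem, Finset.add_sum_erase _ f (Finset.mem_univ v)]
  rw [split1 (fun w => (dumbbell n p q).dist z w), split1 (fun w => (dumbbell n p q).dist v w)]
  have hdzz : (dumbbell n p q).dist z z = 0 := by simp
  have hdvv : (dumbbell n p q).dist v v = 0 := by simp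
  have hcomm : (dumbbell n p q).dist z v = (dumbbell n p q).dist v z := SimpleGraph.dist_comm ..
  rw [hdzz, hdvv, hcomm]
  have hsum : ∑ w ∈ ((univ : Finset (Fin n)).erase v).erase z, (dumbbell n p q).dist z w
      ≤ ∑ w ∈ ((univ : Finset (Fin n)).erase v).erase z, (dumbbell n p q).dist v w := by
    refine Finset.sum_le_sum fun w hw => ?_
    have hwv : w ≠ v := Finset.mem_erase.mp (Finset.mem_erase.mp hw).2 |>.1
    have hdz : (dumbbell n p q).dist z w = Nat.dist 1 (lv n p q (w:ℕ)) := by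
      have := dist_path_eq hn hp hq z w (by simp [hz]; omega)
      have hl : lv n p q ((z:ℕ)) = 1 := by simp [hz]; unfold lv; split_ifs <;> omega
      rwa [hl] at this
    rcases lt_or_ge (w:ℕ) (n-p-q) with hw1 | hw1
    · have hlw : lv n p q (w:ℕ) = (w:ℕ)+1 := by unfold lv; split_ifs <;> omega
      have lb := dist_lb hn hp hq v w
      have hlv : lv n p q ((v:ℕ)) = 0 := by unfold lv; split_ifs <;> omega
      rw [hlv, hlw, Nat.dist_zero_left] at lb
      rw [hdz, hlw]
      unfold Nat.dist
      omega
    rcases lt_or_ge (w:ℕ) (n-q) with hw2 | hw2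
    · have hlw : lv n p q (w:ℕ) = 0 := by unfold lv; split_ifs <;> omega
      have hge := dist_pendant_ge_two hn hp hq v w (by omega) (by omega) (fun h => hwv h.symm)
      rw [hdz, hlw]
      unfold Nat.dist
      omega
    · have hlw : lv n p q (w:ℕ) = n-p-q+1 := by unfold lv; split_ifs <;> omega
      have lb := dist_lb hn hp hq v w
      have hlv : lv n p q ((v:ℕ)) = 0 := by unfold lv; split_ifs <;> omega
      rw [hlv, hlw, Nat.dist_zero_left] at lb
      rw [hdz, hlw]
      unfold Nat.dist
      omega
  omega

lemma status_right_ge (v : Fin n) (h2 : n-q ≤ (v:ℕ)) :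
    status (dumbbell n p q) ⟨n-p-q-1, by omega⟩ ≤ status (dumbbell n p q) v := by
  unfold status
  have hG : ∀ a b : Fin n, True := fun _ _ => trivial
  set z : Fin n := ⟨n-p-q-1, by omega⟩ with hz
  have hzv : z ≠ v := by
    intro h
    have : (z:ℕ) = (v:ℕ) := by rw [h]
    simp [hz] at this
    omega
  have hzmem : z ∈ (univ : Finset (Fin n)).erase v :=
    Finset.mem_erase.mpr ⟨hzv, Finset.mem_univ z⟩
  have split1 : ∀ f : Fin n → ℕ, ∑ w : Fin n, f w = f v + (f z + ∑ w ∈ ((univ : Finset (Fin n)).erase v).erase z, f w) := by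
    intro f
    rw [Finset.add_sum_erase _ f hzmem, Finset.add_sum_erase _ f (Finset.mem_univ v)]
  rw [split1 (fun w => (dumbbell n p q).dist z w), split1 (fun w => (dumbbell n p q).dist v w)]
  have hdzz : (dumbbell n p q).dist z z = 0 := by simp
  have hdvv : (dumbbell n p q).dist v v = 0 := by simp
  have hcomm : (dumbbell n p q).dist z v = (dumbbell n p q).dist v z := SimpleGraph.dist_comm ..
  rw [hdzz, hdvv, hcomm]
  have hsum : ∑ w ∈ ((univ : Finset (Fin n)).erase v).erase z, (dumbbell n p q).dist z w
      ≤ ∑ w ∈ ((univ : Finset (Fin n)).erase v).erase z, (dumbbell n p q).dist v w := by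
    refine Finset.sum_le_sum fun w hw => ?_
    have hwv : w ≠ v := Finset.mem_erase.mp (Finset.mem_erase.mp hw).2 |>.1
    have hdz : (dumbbell n p q).dist z w = Nat.dist (n-p-q) (lv n p q (w:ℕ)) := by
      have := dist_path_eq hn hp hq z w (by simp [hz]; omega)
      have hl : lv n p q ((z:ℕ)) = n-p-q := by simp [hz]; unfold lv; split_ifs <;> omega
      rwa [hl] at this
    have hlv : lv n p q ((v:ℕ)) = n-p-q+1 := by unfold lv; split_ifs <;> omega
    rcases lt_or_ge (w:ℕ) (n-p-q) with hw1 | hw1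
    · have hlw : lv n p q (w:ℕ) = (w:ℕ)+1 := by unfold lv; split_ifs <;> omega
      have lb := dist_lb hn hp hq v w
      rw [hlv, hlw] at lb
      rw [hdz, hlw]
      unfold Nat.dist at lb ⊢
      omega
    rcases lt_or_ge (w:ℕ) (n-q) with hw2 | hw2
    · have hlw : lv n p q (w:ℕ) = 0 := by unfold lv; split_ifs <;> omega
      have lb := dist_lb hn hp hq v w
      rw [hlv, hlw, Nat.dist_zero_right] at lb
      rw [hdz, hlw]
      unfold Nat.dist
      omega
    · have hlw : lv n p q (w:ℕ) = n-p-q+1 := by unfold lv; split_ifs <;> omega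
      have hge := dist_pendant_ge_two hn hp hq v w (by omega) (by omega) (fun h => hwv h.symm)
      rw [hdz, hlw]
      unfold Nat.dist
      omega
  omega
end hyps
end DB

end DumbbellProof

/-- `s(D_n(p,q)) > s(D_n(p+1,q-1))` when `p ≥ q ≥ 2` and `p + q + 2 ≤ n`. -/
theorem stmt4 (n p q : ℕ) (h1 : p + q + 2 ≤ n) (h2 : q ≤ p) (h3 : 2 ≤ q) :
    minStatus (dumbbell n (p + 1) (q - 1)) < minStatus (dumbbell n p q) := by
  have hn' : (p+1) + (q-1) + 2 ≤ n := by omega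
  have hp' : 1 ≤ p + 1 := by omega
  have hq' : 1 ≤ q - 1 := by omega
  have hp1 : 1 ≤ p := by omega
  have hq1 : 1 ≤ q := by omega
  have hm2 : 2 ≤ n - p - q := by omega
  have hmeq : n - (p+1) - (q-1) = n - p - q := by omega
  set m := n - p - q with hm
  set u : ℕ := (m - 1 - (p - q))/2 - 1 with hudef
  have hum : u < m := by omega
  have hun : u < n := by omega
  -- status of ⟨u⟩ in the primed graph
  have hstat' := DB.status_path hn' hp' hq' (⟨u, hun⟩ : Fin n)
    (by simp only [Fin.val_mk]; omega)
  rw [hmeq] at hstat'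
  simp only [Fin.val_mk] at hstat'
  -- key comparison against any path vertex of the unprimed graph
  have hpath : ∀ w : Fin n, (w:ℕ) < m →
      status (dumbbell n (p+1) (q-1)) ⟨u, hun⟩ < status (dumbbell n p q) w := by
    intro w hw
    have hstat := DB.status_path h1 hp1 hq1 w hw
    rw [← hm] at hstat
    have hA := DB.sum_dist m u (by omega)
    have hB := DB.sum_dist m (w:ℕ) (by omega)
    have hk := DB.key m p q (w:ℕ) hm2 h3 h2 hw u hudef
    omega
  -- minStatus of primed graph is at most status at ⟨u⟩
  have hle : minStatus (dumbbell n (p+1) (q-1))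
      ≤ status (dumbbell n (p+1) (q-1)) ⟨u, hun⟩ := Nat.sInf_le ⟨⟨u, hun⟩, rfl⟩
  -- minStatus of unprimed graph is attained
  obtain ⟨v₀, hv₀⟩ := Nat.sInf_mem (Set.range_nonempty (h := ⟨⟨0, by omega⟩⟩)
    (status (dumbbell n p q)))
  have hlt : status (dumbbell n (p+1) (q-1)) ⟨u, hun⟩ < status (dumbbell n p q) v₀ := by
    rcases lt_or_ge (v₀:ℕ) m with hv | hv
    · exact hpath v₀ hv
    rcases lt_or_ge (v₀:ℕ) (n-q) with hv2 | hv2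
    · exact lt_of_lt_of_le (hpath ⟨0, by omega⟩ (by simp only [Fin.val_mk]; omega))
        (DB.status_left_ge h1 hp1 hq1 v₀ hv hv2)
    · exact lt_of_lt_of_le (hpath ⟨m-1, by omega⟩ (by simp only [Fin.val_mk]; omega))
        (DB.status_right_ge h1 hp1 hq1 v₀ hv2)
  calc minStatus (dumbbell n (p+1) (q-1)) ≤ _ := hle
    _ < status (dumbbell n p q) v₀ := hlt
    _ = minStatus (dumbbell n p q) := hv₀
end

section
/- Let G be a connected graph on n >= 4 vertices with matching number m, where 1 <= m <= floor(n/2). Then s(G) <= m(n - m). -/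
open SimpleGraph

variable {V : Type*}

section auxiliary

variable {T G : SimpleGraph V}

lemma tree_path_length (hT : T.IsTree) {a b : V} (p : T.Walk a b) (hp : p.IsPath) :
    p.length = T.dist a b := by
  classical
  obtain ⟨q, hq⟩ := (hT.isConnected a b).exists_walk_length_eq_dist
  have huniq := hT.existsUnique_path a b
  obtain ⟨r, _, hr⟩ := huniq
  have h1 : p = r := hr p hp
  have h2 : q.bypass = r := hr q.bypass q.bypass_isPath
  have h3 : q.bypass.length ≤ q.length := q.length_bypass_le
  have h5 : p.length = q.bypass.length := by rw [h1, h2]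
  have h4 : T.dist a b ≤ p.length := dist_le p
  omega

lemma path_getVert_inj {a b : V} {p : G.Walk a b} (hp : p.IsPath) {i j : ℕ}
    (hi : i ≤ p.length) (hj : j ≤ p.length) (h : p.getVert i = p.getVert j) : i = j := by
  induction p generalizing i j with
  | nil => simp at hi hj; omega
  | cons hadj q ih =>
    rw [Walk.cons_isPath_iff] at hp
    match i, j with
    | 0, 0 => rfl
    | 0, j+1 =>
      exfalso
      apply hp.2
      rw [Walk.getVert_zero, Walk.getVert_cons_succ] at h
      rw [Walk.mem_support_iff_exists_getVert]
      exact ⟨j, h.symm, by simpa using hj⟩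
    | i+1, 0 =>
      exfalso
      apply hp.2
      rw [Walk.getVert_zero, Walk.getVert_cons_succ] at h
      rw [Walk.mem_support_iff_exists_getVert]
      exact ⟨i, h, by simpa using hi⟩
    | i+1, j+1 =>
      rw [Walk.getVert_cons_succ, Walk.getVert_cons_succ] at h
      have := ih hp.1 (by simpa using hi) (by simpa using hj) h
      omega

lemma dist_getVert_le (hc : G.Connected) {a b : V} (p : G.Walk a b) {i j : ℕ} (hij : i ≤ j) :
    G.dist (p.getVert i) (p.getVert j) ≤ j - i := by
  induction j with
  | zero =>
    have : i = 0 := by omega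
    subst this; simp
  | succ j ih =>
    rcases Nat.lt_or_ge i (j+1) with hlt | hge
    · have h1 : G.dist (p.getVert i) (p.getVert j) ≤ j - i := ih (by omega)
      have h2 : G.dist (p.getVert j) (p.getVert (j+1)) ≤ 1 := by
        rcases Nat.lt_or_ge j p.length with hj | hj
        · exact (dist_le (Walk.cons (p.adj_getVert_succ hj) Walk.nil)).trans (by simp)
        · rw [p.getVert_of_length_le hj, p.getVert_of_length_le (by omega),
            SimpleGraph.dist_self]
          omega
      calc G.dist (p.getVert i) (p.getVert (j+1))
          ≤ G.dist (p.getVert i) (p.getVert j) + G.dist (p.getVert j) (p.getVert (j+1)) :=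
            hc.dist_triangle
        _ ≤ j + 1 - i := by omega
    · have : i = j + 1 := by omega
      subst this; simp

lemma dist_le_of_le (h : T ≤ G) (hT : T.Connected) (u v : V) : G.dist u v ≤ T.dist u v := by
  obtain ⟨q, hq⟩ := (hT u v).exists_walk_length_eq_dist
  calc G.dist u v ≤ (q.mapLe h).length := dist_le _
    _ = T.dist u v := by simp [hq]

lemma exists_spanning_tree [Fintype V] (G : SimpleGraph V) (hG : G.Connected) :
    ∃ T : SimpleGraph V, T ≤ G ∧ T.IsTree := by
  classical
  generalize hk : G.edgeSet.ncard = k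
  induction k using Nat.strong_induction_on generalizing G with
  | _ k ih =>
  by_cases hac : G.IsAcyclic
  · exact ⟨G, le_rfl, ⟨hG, hac⟩⟩
  · rw [isAcyclic_iff_forall_edge_isBridge] at hac
    push_neg at hac
    obtain ⟨e, he, hbr⟩ := hac
    induction e with
    | _ u v =>
    have hadj : G.Adj u v := he
    rw [isBridge_iff] at hbr
    push_neg at hbr
    have hruv : (G \ fromEdgeSet {s(u, v)}).Reachable u v := hbr
    set G' : SimpleGraph V := G \ fromEdgeSet {s(u, v)} with hG'
    have hle : G' ≤ G := sdiff_le
    have hstep : ∀ a c : V, G.Adj a c → G'.Reachable a c := by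
      intro a c hac'
      by_cases hec : s(a, c) = s(u, v)
      · rw [Sym2.eq_iff] at hec
        rcases hec with ⟨rfl, rfl⟩ | ⟨rfl, rfl⟩
        · exact hruv
        · exact hruv.symm
      · have hadj' : G'.Adj a c := by
          rw [hG', sdiff_adj]
          refine ⟨hac', ?_⟩
          rw [fromEdgeSet_adj]
          simp only [Set.mem_singleton_iff]
          tauto
        exact ⟨Walk.cons hadj' Walk.nil⟩
    have hreach : ∀ a b : V, G.Reachable a b → G'.Reachable a b := by
      intro a b hab
      obtain ⟨w⟩ := hab
      induction w with
      | nil => exact Reachable.refl _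
      | cons h p ihp => exact (hstep _ _ h).trans ihp
    have hG'conn : G'.Connected := by
      rw [connected_iff]
      exact ⟨fun a b => hreach a b (hG a b), hG.nonempty⟩
    have hssub : G'.edgeSet ⊂ G.edgeSet := by
      refine ⟨edgeSet_mono hle, fun hsub => ?_⟩
      have h1 : s(u, v) ∈ G.edgeSet := he
      have h2 : s(u, v) ∉ G'.edgeSet := by
        rw [mem_edgeSet, hG', sdiff_adj]
        rintro ⟨-, hf⟩
        apply hf
        rw [fromEdgeSet_adj]
        exact ⟨rfl, hadj.ne⟩
      exact h2 (hsub h1)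
    have hlt : G'.edgeSet.ncard < k := by
      rw [← hk]
      exact Set.ncard_lt_ncard hssub (Set.toFinite _)
    obtain ⟨T, hT1, hT2⟩ := ih _ hlt G' hG'conn rfl
    exact ⟨T, hT1.trans hle, hT2⟩

lemma exists_gate {x y : V} (P : T.Walk x y) {v s : V} (Q : T.Walk v s) (hQ : Q.IsPath)
    (hs : s ∈ P.support) :
    ∃ (w : V) (q : T.Walk v w), ∃ (_ : w ∈ P.support), q.IsPath ∧
      q.support ⊆ Q.support ∧ (∀ z ∈ q.support, z ∈ P.support → z = w) := by
  induction Q with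
  | @nil u =>
    exact ⟨u, Walk.nil, hs, Walk.IsPath.nil, by simp, by
      intro z hz _; simpa using hz⟩
  | @cons a a' b hadj p ih =>
    by_cases hv : a ∈ P.support
    · exact ⟨a, Walk.nil, hv, Walk.IsPath.nil, by simp, by intro z hz _; simpa using hz⟩
    · rw [Walk.cons_isPath_iff] at hQ
      obtain ⟨w, q, hw, hq, hsub, hgate⟩ := ih hQ.1 hs
      refine ⟨w, Walk.cons hadj q, hw, ?_, ?_, ?_⟩
      · rw [Walk.cons_isPath_iff]
        exact ⟨hq, fun hmem => hQ.2 (hsub hmem)⟩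
      · rw [Walk.support_cons, Walk.support_cons]
        exact List.cons_subset_cons _ hsub
      · intro z hz hzP
        rw [Walk.support_cons, List.mem_cons] at hz
        rcases hz with rfl | hz
        · exact absurd hzP hv
        · exact hgate z hz hzP

lemma tree_ecc (hT : T.IsTree) {x y : V} (P : T.Walk x y) (hP : P.IsPath)
    (hdiam : ∀ a b : V, T.dist a b ≤ P.length) (v : V) :
    T.dist (P.getVert (P.length / 2)) v ≤ P.length - P.length / 2 := by
  classical
  set d := P.length with hd
  set c := d / 2 with hc
  obtain ⟨Q0⟩ := hT.isConnected v x
  have hQ : Q0.bypass.IsPath := Q0.bypass_isPath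
  obtain ⟨w, q, hw, hq, -, hgate⟩ := exists_gate P Q0.bypass hQ P.start_mem_support
  set k := (P.takeUntil w hw).length with hk
  have hkd : k ≤ d := P.length_takeUntil_le hw
  have hlen2 : (P.takeUntil w hw).length + (P.dropUntil w hw).length = d := by
    have h := congrArg Walk.length (P.take_spec hw)
    rw [Walk.length_append] at h
    exact h
  have hwk : P.getVert k = w := by
    conv_lhs => rw [← P.take_spec hw]
    rw [Walk.getVert_append]
    simp [← hk]
  have htu : (P.takeUntil w hw).IsPath := hP.takeUntil hw
  have hdu : (P.dropUntil w hw).IsPath := hP.dropUntil hw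
  -- q avoids P except at w; and the two pieces of P start at w
  have haux : ∀ {z : V} (r : T.Walk w z), r.IsPath → r.support ⊆ P.support →
      (q.append r).IsPath := by
    intro z r hr hrP
    rw [Walk.isPath_def, Walk.support_append, List.nodup_append]
    refine ⟨hq.support_nodup, List.Nodup.of_cons (by rw [← r.support_eq_cons]; exact hr.support_nodup), ?_⟩
    intro a ha b hatail hab
    subst hab
    have haw : a = w := hgate a ha (hrP (List.tail_subset _ hatail))
    subst haw
    have : r.support = a :: r.support.tail := r.support_eq_cons
    have hnd := hr.support_nodup
    rw [this] at hnd
    exact (List.nodup_cons.mp hnd).1 hatail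
  have hq1 : (q.append (P.takeUntil w hw).reverse).IsPath := by
    refine haux _ htu.reverse ?_
    intro z hz
    rw [Walk.support_reverse, List.mem_reverse] at hz
    exact P.support_takeUntil_subset hw hz
  have hq2 : (q.append (P.dropUntil w hw)).IsPath := by
    exact haux _ hdu (P.support_dropUntil_subset hw)
  have hd1 : T.dist v x = q.length + k := by
    have h := tree_path_length hT _ hq1
    rw [Walk.length_append, Walk.length_reverse] at h
    omega
  have hd2 : T.dist v y = q.length + (d - k) := by
    have h := tree_path_length hT _ hq2
    rw [Walk.length_append] at h
    omega
  have h1 : q.length + k ≤ d := hd1 ▸ hdiam v x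
  have h2 : q.length + (d - k) ≤ d := hd2 ▸ hdiam v y
  have h4 : T.dist w v ≤ q.length := by
    rw [SimpleGraph.dist_comm]
    exact dist_le q
  have h5 : T.dist (P.getVert c) w ≤ (k - c) + (c - k) := by
    rcases le_or_gt c k with hck | hck
    · have := dist_getVert_le hT.isConnected P hck
      rw [hwk] at this
      omega
    · have := dist_getVert_le hT.isConnected P (le_of_lt hck)
      rw [hwk, dist_comm] at this
      omega
  have h3 : T.dist (P.getVert c) v ≤ T.dist (P.getVert c) w + T.dist w v :=
    hT.isConnected.dist_triangle
  omega

lemma key_arith (d : ℕ) :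
    (∑ j ∈ Finset.range (d+1), ((j - d/2) + (d/2 - j))) + (d - d/2)*(d - d/2)
      ≤ (d - d/2)*(d+1) := by
  set c := d / 2 with hc
  set D := d - d / 2 with hD
  have hsplit : ∑ j ∈ Finset.range (d+1), ((j - c) + (c - j))
      = (∑ j ∈ Finset.range (c+1), ((j - c) + (c - j)))
        + ∑ j ∈ Finset.Ico (c+1) (d+1), ((j - c) + (c - j)) := by
    rw [Finset.range_eq_Ico, ← Finset.sum_Ico_consecutive _ (by omega : 0 ≤ c + 1) (by omega : c + 1 ≤ d + 1)]
    rw [Finset.range_eq_Ico]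
  have hS1 : ∑ j ∈ Finset.range (c+1), ((j - c) + (c - j)) = ∑ j ∈ Finset.range (c+1), j := by
    rw [← Finset.sum_range_reflect (fun j => j) (c+1)]
    apply Finset.sum_congr rfl
    intro j hj
    rw [Finset.mem_range] at hj
    omega
  have hS2 : ∑ j ∈ Finset.Ico (c+1) (d+1), ((j - c) + (c - j))
      = ∑ i ∈ Finset.range D, (i + 1) := by
    rw [Finset.sum_Ico_eq_sum_range]
    have hDd : d + 1 - (c + 1) = D := by omega
    rw [hDd]
    apply Finset.sum_congr rfl
    intro i _
    omega
  have hS2' : ∑ i ∈ Finset.range D, (i + 1) = ∑ i ∈ Finset.range (D+1), i := by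
    rw [Finset.sum_range_succ' (fun i => i) D]
    simp
  have hg1 : (∑ i ∈ Finset.range (c+1), i) * 2 = (c+1) * c := Finset.sum_range_id_mul_two (c+1)
  have hg2 : (∑ i ∈ Finset.range (D+1), i) * 2 = (D+1) * D := Finset.sum_range_id_mul_two (D+1)
  have hcD : (D = c ∧ d = 2*c) ∨ (D = c + 1 ∧ d = 2*c+1) := by omega
  rw [hsplit, hS1, hS2, hS2']
  rcases hcD with ⟨h1, h2⟩ | ⟨h1, h2⟩ <;> (rw [h1] at hg2; rw [h1, h2]; nlinarith [hg1, hg2])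

lemma matching_le [Fintype V] {x y : V} (P : G.Walk x y) (hP : P.IsPath) :
    P.length - P.length / 2 ≤ matchingNumber G := by
  classical
  set d := P.length with hd
  set D := d - d / 2 with hD
  set f : ℕ → V := P.getVert with hf
  have hinj : ∀ i j : ℕ, i ≤ d → j ≤ d → f i = f j → i = j := fun i j hi hj h =>
    path_getVert_inj hP hi hj h
  have hDd : ∀ i : ℕ, i < D → 2*i + 1 ≤ d := by omega
  set M : G.Subgraph :=
    { verts := {v | ∃ i, i < 2*D ∧ f i = v}
      Adj := fun a b => ∃ i, i < D ∧ ((f (2*i) = a ∧ f (2*i+1) = b) ∨ (f (2*i) = b ∧ f (2*i+1) = a))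
      adj_sub := by
        rintro a b ⟨i, hi, h⟩
        have hadj : G.Adj (f (2*i)) (f (2*i+1)) := P.adj_getVert_succ (by omega)
        rcases h with ⟨rfl, rfl⟩ | ⟨rfl, rfl⟩
        · exact hadj
        · exact hadj.symm
      edge_vert := by
        rintro a b ⟨i, hi, h⟩
        rcases h with ⟨rfl, -⟩ | ⟨-, rfl⟩
        · exact ⟨2*i, by omega, rfl⟩
        · exact ⟨2*i+1, by omega, rfl⟩
      symm := by
        constructor
        rintro a b ⟨i, hi, h⟩
        exact ⟨i, hi, h.symm⟩ } with hM
  have hmatch : M.IsMatching := by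
    rintro v ⟨i, hi, rfl⟩
    rcases Nat.even_or_odd i with ⟨t, ht⟩ | ⟨t, ht⟩
    · refine ⟨f (2*t+1), ⟨t, by omega, Or.inl ⟨by rw [ht]; ring_nf, rfl⟩⟩, ?_⟩
      rintro w ⟨j, hj, h⟩
      rcases h with ⟨hj1, rfl⟩ | ⟨rfl, hj2⟩
      · have : 2*j = i := hinj _ _ (by omega) (by omega) hj1
        have : j = t := by omega
        subst this; rfl
      · exfalso
        have : 2*j + 1 = i := hinj _ _ (by omega) (by omega) hj2
        omega
    · refine ⟨f (2*t), ⟨t, by omega, Or.inr ⟨rfl, by rw [ht]⟩⟩, ?_⟩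
      rintro w ⟨j, hj, h⟩
      rcases h with ⟨hj1, rfl⟩ | ⟨rfl, hj2⟩
      · exfalso
        have : 2*j = i := hinj _ _ (by omega) (by omega) hj1
        omega
      · have : 2*j + 1 = i := hinj _ _ (by omega) (by omega) hj2
        have : j = t := by omega
        subst this; rfl
  have hedge : M.edgeSet = ↑((Finset.range D).image (fun i => s(f (2*i), f (2*i+1)))) := by
    ext e
    induction e with
    | _ a b =>
      rw [Subgraph.mem_edgeSet]
      simp only [Finset.coe_image, Set.mem_image, Finset.mem_coe, Finset.mem_range]
      constructor
      · rintro ⟨i, hi, h⟩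
        refine ⟨i, hi, ?_⟩
        rw [Sym2.eq_iff]
        tauto
      · rintro ⟨i, hi, h⟩
        rw [Sym2.eq_iff] at h
        exact ⟨i, hi, h⟩
  have hcard : M.edgeSet.ncard = D := by
    rw [hedge, Set.ncard_coe_finset, Finset.card_image_of_injOn, Finset.card_range]
    intro i hi j hj h
    rw [Finset.mem_coe, Finset.mem_range] at hi hj
    rw [Sym2.eq_iff] at h
    rcases h with ⟨h1, -⟩ | ⟨h1, h2⟩
    · have := hinj _ _ (by omega) (by omega) h1
      omega
    · have := hinj _ _ (by omega) (by omega) h1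
      omega
  have hmem : D ∈ {k | ∃ M : G.Subgraph, M.IsMatching ∧ M.edgeSet.ncard = k} :=
    ⟨M, hmatch, hcard⟩
  have hbdd : BddAbove {k | ∃ M : G.Subgraph, M.IsMatching ∧ M.edgeSet.ncard = k} := by
    refine ⟨Fintype.card (Sym2 V), ?_⟩
    rintro k ⟨N, -, rfl⟩
    calc N.edgeSet.ncard ≤ (Set.univ : Set (Sym2 V)).ncard :=
          Set.ncard_le_ncard (Set.subset_univ _) Set.finite_univ
      _ = Fintype.card (Sym2 V) := by rw [Set.ncard_univ, Nat.card_eq_fintype_card]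
  exact le_csSup hbdd hmem

end auxiliary

/-- Upper bound on the minimum status of a connected graph with given order and
matching number. -/
theorem stmt6 [Fintype V] (G : SimpleGraph V) (n m : ℕ)
    (hn : Fintype.card V = n) (h4 : 4 ≤ n) (hG : G.Connected)
    (hm : matchingNumber G = m) (hm1 : 1 ≤ m) (hm2 : 2 * m ≤ n) :
    minStatus G ≤ m * (n - m) := by
  classical
  have hne : Nonempty V := by
    rw [← Fintype.card_pos_iff]
    omega
  obtain ⟨T, hTle, hT⟩ := exists_spanning_tree G hG
  obtain ⟨⟨x, y⟩, -, hmax⟩ := Finset.exists_max_image (Finset.univ : Finset (V × V))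
    (fun p => T.dist p.1 p.2) ⟨(Classical.arbitrary V, Classical.arbitrary V), Finset.mem_univ _⟩
  obtain ⟨W, hW⟩ := (hT.isConnected x y).exists_walk_length_eq_dist
  set P := W.bypass with hPdef
  have hP : P.IsPath := W.bypass_isPath
  have hPlen : P.length = T.dist x y := by
    have h1 : T.dist x y ≤ P.length := dist_le P
    have h2 : P.length ≤ W.length := W.length_bypass_le
    omega
  have hdiam : ∀ a b : V, T.dist a b ≤ P.length := by
    intro a b
    rw [hPlen]
    exact hmax (a, b) (Finset.mem_univ _)
  set d := P.length with hd
  set c := d / 2 with hc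
  set D := d - d / 2 with hD
  set u := P.getVert c with hu
  -- d ≥ 1
  have hd1 : 1 ≤ d := by
    obtain ⟨a, b, hab⟩ := Fintype.exists_pair_of_one_lt_card (by omega : 1 < Fintype.card V)
    have := hT.isConnected.pos_dist_of_ne hab
    have := hdiam a b
    omega
  -- eccentricity bound
  have hecc : ∀ v : V, G.dist u v ≤ D := fun v =>
    (dist_le_of_le hTle hT.isConnected u v).trans (tree_ecc hT P hP hdiam v)
  -- distances to path vertices
  have hpd : ∀ j : ℕ, G.dist u (P.getVert j) ≤ (j - c) + (c - j) := by
    intro j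
    have hGT := dist_le_of_le hTle hT.isConnected u (P.getVert j)
    have hT' : T.dist u (P.getVert j) ≤ (j - c) + (c - j) := by
      rw [hu]
      rcases le_or_gt c j with h | h
      · have := dist_getVert_le hT.isConnected P h
        omega
      · have h1 := dist_getVert_le hT.isConnected P (le_of_lt h)
        rw [SimpleGraph.dist_comm] at h1
        omega
    omega
  set S : Finset V := (Finset.range (d+1)).image P.getVert with hS
  have hinj : ∀ i ∈ Finset.range (d+1), ∀ j ∈ Finset.range (d+1),
      P.getVert i = P.getVert j → i = j := by
    intro i hi j hj h
    rw [Finset.mem_range] at hi hj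
    exact path_getVert_inj hP (by omega) (by omega) h
  have hScard : S.card = d + 1 := by
    rw [hS, Finset.card_image_of_injOn, Finset.card_range]
    intro i hi j hj h
    rw [Finset.mem_coe] at hi hj
    exact hinj i hi j hj h
  have hSn : d + 1 ≤ n := by
    rw [← hn, ← hScard]
    exact Finset.card_le_card (Finset.subset_univ S)
  have hsplit : status G u = ∑ v ∈ Finset.univ \ S, G.dist u v + ∑ v ∈ S, G.dist u v := by
    rw [status, Finset.sum_sdiff (Finset.subset_univ S)]
  have hbound1 : ∑ v ∈ S, G.dist u v ≤ ∑ j ∈ Finset.range (d+1), ((j - c) + (c - j)) := by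
    rw [hS, Finset.sum_image hinj]
    exact Finset.sum_le_sum fun j _ => hpd j
  have hbound2 : ∑ v ∈ Finset.univ \ S, G.dist u v ≤ (n - (d+1)) * D := by
    have hcard2 : (Finset.univ \ S).card = n - (d+1) := by
      rw [Finset.card_sdiff_of_subset (Finset.subset_univ S), Finset.card_univ, hn, hScard]
    calc ∑ v ∈ Finset.univ \ S, G.dist u v ≤ (Finset.univ \ S).card • D :=
          Finset.sum_le_card_nsmul _ _ _ (fun v _ => hecc v)
      _ = (n - (d+1)) * D := by rw [hcard2, smul_eq_mul]
  have hkey := key_arith d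
  rw [← hD] at hkey
  rw [← hc] at hkey
  have hstat : status G u + D * D ≤ D * n := by
    obtain ⟨e, he⟩ : ∃ e, n = (d+1) + e := ⟨n - (d+1), by omega⟩
    have heq : (n - (d+1)) * D = e * D := by
      rw [he]
      congr 1
      omega
    have hDn : D * ((d+1) + e) = D * (d+1) + e * D := by ring
    rw [he, hDn]
    rw [heq] at hbound2
    omega
  have hDm : D ≤ m := by
    rw [← hm]
    have hlen : (P.mapLe hTle).length = P.length := by
      simp [Walk.mapLe]
    have := matching_le (P.mapLe hTle) (hP.mapLe hTle)
    rw [hlen] at this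
    exact this
  have hfinal : status G u ≤ m * (n - m) := by
    obtain ⟨a, ha⟩ : ∃ a, m = D + a := ⟨m - D, by omega⟩
    obtain ⟨b, hb⟩ : ∃ b, n = 2 * m + b := ⟨n - 2 * m, by omega⟩
    have hnm : n - m = D + a + b := by omega
    rw [hnm, ha]
    rw [hb, ha] at hstat
    nlinarith [hstat]
  calc minStatus G ≤ status G u := Nat.sInf_le (Set.mem_range_self u)
    _ ≤ m * (n - m) := hfinal
end

section
/- Let T be a tree with order n and domination number gamma, where 1 <= gamma <= floor(n/2). Then s(T) >= n + gamma - 2, with equality if and only if T is isomorphic to A_{n,gamma}. -/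
open SimpleGraph

variable {V : Type*}

private lemma aux_count (k n : ℕ) :
    ∑ i ∈ Finset.range n, (if k ≤ i then 1 else 0) = n - k := by
  induction n with
  | zero => simp
  | succ m ih => rw [Finset.sum_range_succ, ih]; split <;> omega

lemma domNumber_le_finsetCard [Fintype V] (G : SimpleGraph V) (s : Finset V)
    (hs : ∀ v ∉ s, ∃ u ∈ s, G.Adj u v) : domNumber G ≤ s.card :=
  Nat.sInf_le ⟨↑s, by simpa using hs, Set.ncard_coe_finset s⟩

lemma two_le_dist {G : SimpleGraph V} (h : G.Connected) {u v : V} (hne : u ≠ v)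
    (hadj : ¬ G.Adj u v) : 2 ≤ G.dist u v := by
  have h0 : G.dist u v ≠ 0 := Nat.pos_iff_ne_zero.mp (h.pos_dist_of_ne hne)
  have h1 : G.dist u v ≠ 1 := fun hh => hadj (SimpleGraph.dist_eq_one_iff_adj.mp hh)
  omega

lemma iso_dist_eq {W : Type*} {G : SimpleGraph V} {H : SimpleGraph W} (φ : G ≃g H) (u v : V)
    (hr : G.Reachable u v) : H.dist (φ u) (φ v) = G.dist u v := by
  obtain ⟨p, hp⟩ := hr.exists_walk_length_eq_dist
  have h1 : H.dist (φ u) (φ v) ≤ G.dist u v := by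
    have := SimpleGraph.dist_le (p.map φ.toHom)
    rwa [SimpleGraph.Walk.length_map, hp] at this
  have hr2 : H.Reachable (φ u) (φ v) := ⟨p.map φ.toHom⟩
  obtain ⟨q, hq⟩ := hr2.exists_walk_length_eq_dist
  have h2 := SimpleGraph.dist_le (q.map φ.symm.toHom)
  rw [SimpleGraph.Walk.length_map, hq] at h2
  have e1 : φ.symm.toHom (φ u) = u := φ.symm_apply_apply u
  have e2 : φ.symm.toHom (φ v) = v := φ.symm_apply_apply v
  rw [e1, e2] at h2
  omega

lemma exists_mid {G : SimpleGraph V} {u f : V} (h : G.dist u f = 2) :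
    ∃ x, G.Adj u x ∧ G.Adj x f := by
  obtain ⟨p, hp⟩ := SimpleGraph.exists_walk_of_dist_ne_zero (by omega : G.dist u f ≠ 0)
  rw [h] at hp
  cases p with
  | nil => simp at hp
  | cons hadj q =>
    cases q with
    | nil => simp at hp
    | cons hadj' q' =>
      simp [SimpleGraph.Walk.length_cons] at hp
      have := q'.eq_of_length_eq_zero (SimpleGraph.Walk.nil_iff_length_eq.mp hp)
      subst this
      exact ⟨_, hadj, hadj'⟩

lemma treeA_adj {n m : ℕ} (x y : Fin n) : (treeA n m).Adj x y ↔ x ≠ y ∧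
    (((x : ℕ) = 0 ∧ 1 ≤ (y : ℕ) ∧ (y : ℕ) ≤ n - m) ∨
     (1 ≤ (x : ℕ) ∧ (x : ℕ) ≤ m - 1 ∧ (y : ℕ) = n - m + (x : ℕ)) ∨
     ((y : ℕ) = 0 ∧ 1 ≤ (x : ℕ) ∧ (x : ℕ) ≤ n - m) ∨
     (1 ≤ (y : ℕ) ∧ (y : ℕ) ≤ m - 1 ∧ (x : ℕ) = n - m + (y : ℕ))) := by
  rw [treeA, SimpleGraph.fromRel_adj]
  tauto

lemma treeA_dist_s7 {n γ : ℕ} (h1 : 1 ≤ γ) (h2 : 2 * γ ≤ n) (w : Fin n) :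
    (treeA n γ).dist ⟨0, by omega⟩ w =
      if (w : ℕ) = 0 then 0 else if (w : ℕ) ≤ n - γ then 1 else 2 := by
  set z0 : Fin n := ⟨0, by omega⟩ with hz0
  by_cases h0 : (w : ℕ) = 0
  · have : w = z0 := Fin.ext (by simp [hz0, h0])
    rw [this, SimpleGraph.dist_self]
    simp [h0, hz0]
  · by_cases hle : (w : ℕ) ≤ n - γ
    · rw [if_neg h0, if_pos hle]
      rw [SimpleGraph.dist_eq_one_iff_adj, treeA_adj]
      exact ⟨fun h => h0 (by rw [← h]), Or.inl ⟨rfl, by omega, hle⟩⟩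
    · rw [if_neg h0, if_neg hle]
      have hw := w.isLt
      set a : Fin n := ⟨(w : ℕ) - (n - γ), by omega⟩ with ha
      have hadj1 : (treeA n γ).Adj z0 a := by
        rw [treeA_adj]
        refine ⟨fun h => ?_, Or.inl ⟨rfl, by simp [ha]; omega, by simp [ha]; omega⟩⟩
        · have := congrArg Fin.val h
          simp [hz0, ha] at this
          omega
      have hadj2 : (treeA n γ).Adj a w := by
        rw [treeA_adj]
        refine ⟨fun h => ?_, Or.inr (Or.inl ⟨by simp [ha]; omega, by simp [ha]; omega,
          by simp [ha]; omega⟩)⟩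
        · have := congrArg Fin.val h
          simp [ha] at this
          omega
      have hwalk : (treeA n γ).dist z0 w ≤ 2 := by
        have := SimpleGraph.dist_le (SimpleGraph.Walk.cons hadj1
          (SimpleGraph.Walk.cons hadj2 SimpleGraph.Walk.nil))
        simpa using this
      have hne1 : (treeA n γ).dist z0 w ≠ 1 := by
        intro hh
        have hadj := SimpleGraph.dist_eq_one_iff_adj.mp hh
        rw [treeA_adj] at hadj
        obtain ⟨-, h | h | h | h⟩ := hadj <;> simp [hz0] at h <;> omega
      have hne0 : (treeA n γ).dist z0 w ≠ 0 := by
        intro hh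
        rw [SimpleGraph.dist_eq_zero_iff_eq_or_not_reachable] at hh
        obtain h | h := hh
        · exact h0 (by rw [← h])
        · exact h ⟨SimpleGraph.Walk.cons hadj1 (SimpleGraph.Walk.cons hadj2 SimpleGraph.Walk.nil)⟩
      omega


lemma treeA_status_s7 {n γ : ℕ} (h1 : 1 ≤ γ) (h2 : 2 * γ ≤ n) :
    status (treeA n γ) ⟨0, by omega⟩ = n + γ - 2 := by
  unfold status
  have hpt : ∀ w : Fin n, (treeA n γ).dist ⟨0, by omega⟩ w =
      (if 1 ≤ (w : ℕ) then 1 else 0) + (if n - γ + 1 ≤ (w : ℕ) then 1 else 0) := by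
    intro w
    rw [treeA_dist_s7 h1 h2 w]
    rcases Nat.lt_or_ge (w : ℕ) 1 with h | h
    · rw [if_pos (by omega : (w : ℕ) = 0), if_neg (by omega), if_neg (by omega)]
    · rcases le_or_gt (w : ℕ) (n - γ) with h' | h'
      · rw [if_neg (by omega), if_pos h', if_pos h, if_neg (by omega)]
      · rw [if_neg (by omega), if_neg (by omega), if_pos h, if_pos (by omega)]
  rw [Finset.sum_congr rfl fun w _ => hpt w, Finset.sum_add_distrib]
  rw [Fin.sum_univ_eq_sum_range (fun i => if 1 ≤ i then 1 else 0),
    Fin.sum_univ_eq_sum_range (fun i => if n - γ + 1 ≤ i then 1 else 0),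
    aux_count, aux_count]
  omega

set_option maxHeartbeats 1000000 in
/-- Lower bound on the minimum status of a tree with given order and domination
number, with equality iff `T ≅ A_{n,γ}`. -/
theorem stmt7 [Fintype V] (T : SimpleGraph V) (n γ : ℕ)
    (hn : Fintype.card V = n) (hT : T.IsTree)
    (hγ : domNumber T = γ) (h1 : 1 ≤ γ) (h2 : 2 * γ ≤ n) :
    n + γ - 2 ≤ minStatus T ∧
      (minStatus T = n + γ - 2 ↔ Nonempty (T ≃g treeA n γ)) := by
  classical
  have hconn : T.Connected := hT.isConnected
  have hn2 : 2 ≤ n := by omega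
  haveI hnv : Nonempty V := by
    refine Fintype.card_pos_iff.mp ?_
    omega
  set d : V → ℕ := fun u => (Finset.univ.filter (fun v => T.Adj u v)).card with hd
  have hsum : ∀ u : V,
      (∑ v : V, (if v = u then 0 else if T.Adj u v then 1 else 2)) + d u + 2 = 2 * n := by
    intro u
    have hpt : ∀ v : V, (if v = u then 0 else if T.Adj u v then 1 else 2)
        + ((if T.Adj u v then 1 else 0) + (if v = u then 2 else 0)) = 2 := by
      intro v
      by_cases hv1 : v = u
      · subst hv1; simp [T.irrefl]
      · by_cases hv2 : T.Adj u v <;> simp [hv1, hv2]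
    have hbig : (∑ v : V, ((if v = u then 0 else if T.Adj u v then 1 else 2)
        + ((if T.Adj u v then 1 else 0) + (if v = u then 2 else 0)))) = 2 * n := by
      rw [Finset.sum_congr rfl (fun v _ => hpt v), Finset.sum_const, Finset.card_univ, hn,
        smul_eq_mul, mul_comm]
    rw [Finset.sum_add_distrib, Finset.sum_add_distrib] at hbig
    have e1 : ∑ v : V, (if T.Adj u v then 1 else 0) = d u := by
      rw [hd]
      rw [← Finset.sum_filter (fun v => T.Adj u v) (fun _ => (1 : ℕ))]
      simp
    have e2 : ∑ v : V, (if v = u then (2 : ℕ) else 0) = 2 := by simp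
    rw [e1, e2] at hbig
    omega
  have hdom : ∀ u : V, d u + γ ≤ n := by
    intro u
    have hles : domNumber T ≤ (Finset.univ.filter (fun v => ¬ T.Adj u v)).card := by
      apply domNumber_le_finsetCard
      intro v hv
      refine ⟨u, by simp [T.irrefl], ?_⟩
      simpa using hv
    have hcards : (Finset.univ.filter (fun v => ¬ T.Adj u v)).card + d u = n := by
      rw [hd]
      rw [add_comm, Finset.card_filter_add_card_filter_not, Finset.card_univ, hn]
    omega
  have hfle : ∀ u v : V, (if v = u then 0 else if T.Adj u v then 1 else 2) ≤ T.dist u v := by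
    intro u v
    by_cases hv1 : v = u
    · simp [hv1]
    · by_cases hv2 : T.Adj u v
      · rw [if_neg hv1, if_pos hv2, SimpleGraph.dist_eq_one_iff_adj.mpr hv2]
      · rw [if_neg hv1, if_neg hv2]
        exact two_le_dist hconn (fun h => hv1 h.symm) hv2
  have hstatus_ge : ∀ u : V, 2 * n ≤ status T u + d u + 2 := by
    intro u
    have := Finset.sum_le_sum (fun v (_ : v ∈ Finset.univ) => hfle u v)
    have h2' := hsum u
    unfold status
    omega
  have part1 : ∀ u : V, n + γ - 2 ≤ status T u := by
    intro u
    have := hstatus_ge u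
    have := hdom u
    omega
  have conj1 : n + γ - 2 ≤ minStatus T := by
    apply le_csInf (Set.range_nonempty _)
    rintro x ⟨u, rfl⟩
    exact part1 u
  refine ⟨conj1, ?_, ?_⟩
  · -- equality → iso
    intro hmin
    obtain ⟨u, hu'⟩ := Nat.sInf_mem (Set.range_nonempty (status T))
    have hu : status T u = n + γ - 2 := by rw [hu']; exact hmin
    have hdu : d u = n - γ := by
      have hA := hstatus_ge u
      have hB := hdom u
      rw [hu] at hA
      omega
    have hsf : (∑ v : V, (if v = u then 0 else if T.Adj u v then 1 else 2))
        = ∑ v : V, T.dist u v := by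
      have hC := hsum u
      rw [hdu] at hC
      unfold status at hu
      omega
    have hdist : ∀ v : V, T.dist u v = (if v = u then 0 else if T.Adj u v then 1 else 2) := by
      by_contra hcon
      push_neg at hcon
      obtain ⟨v, hv⟩ := hcon
      have hlt : (if v = u then 0 else if T.Adj u v then 1 else 2) < T.dist u v :=
        lt_of_le_of_ne (hfle u v) (fun h => hv h.symm)
      have := Finset.sum_lt_sum (fun i (_ : i ∈ Finset.univ) => hfle u i)
        ⟨v, Finset.mem_univ v, hlt⟩
      omega
    set N : Finset V := Finset.univ.filter (fun v => T.Adj u v) with hN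
    set F : Finset V := Finset.univ.filter (fun v => v ≠ u ∧ ¬ T.Adj u v) with hF
    have hNcard : N.card = n - γ := hdu
    have huN : u ∉ N := by simp [hN]
    have huF : u ∉ F := by simp [hF]
    have hNF : Disjoint N F := by
      rw [Finset.disjoint_left]
      intro a ha ha'
      rw [hN, Finset.mem_filter] at ha
      rw [hF, Finset.mem_filter] at ha'
      exact ha'.2.2 ha.2
    have huniv : (Finset.univ : Finset V) = insert u (N ∪ F) := by
      ext v
      simp only [Finset.mem_univ, true_iff, Finset.mem_insert, Finset.mem_union, hN, hF,
        Finset.mem_filter, Finset.mem_univ, true_and]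
      by_cases hv : v = u
      · exact Or.inl hv
      · by_cases ha : T.Adj u v
        · exact Or.inr (Or.inl ha)
        · exact Or.inr (Or.inr ⟨hv, ha⟩)
    have hFcard : F.card = γ - 1 := by
      have h3 := congrArg Finset.card huniv
      rw [Finset.card_univ, hn, Finset.card_insert_of_notMem
        (by simp only [Finset.mem_union]; rintro (h | h); exacts [huN h, huF h]),
        Finset.card_union_of_disjoint hNF, hNcard] at h3
      omega
    have hF2 : ∀ f ∈ F, T.dist u f = 2 := by
      intro f hf
      rw [hF, Finset.mem_filter] at hf
      rw [hdist f, if_neg hf.2.1, if_neg hf.2.2]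
    have hmid2 : ∀ f ∈ F, ∃ x, T.Adj u x ∧ T.Adj x f := fun f hf => exists_mid (hF2 f hf)
    choose p hp1 hp2 using hmid2
    have hpN : ∀ f (hf : f ∈ F), p f hf ∈ N := by
      intro f hf
      rw [hN, Finset.mem_filter]
      exact ⟨Finset.mem_univ _, hp1 f hf⟩
    set S : Finset V := F.attach.image (fun f => p f.1 f.2) with hS
    have hpS : ∀ f (hf : f ∈ F), p f hf ∈ S := fun f hf =>
      Finset.mem_image.mpr ⟨⟨f, hf⟩, Finset.mem_attach _ _, rfl⟩
    have hSN : S ⊆ N := by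
      intro x hx
      obtain ⟨⟨f, hf⟩, -, rfl⟩ := Finset.mem_image.mp hx
      exact hpN f hf
    have huS : u ∉ S := fun h => huN (hSN h)
    have hScard_le : S.card ≤ γ - 1 := by
      calc S.card ≤ F.attach.card := Finset.card_image_le
      _ = γ - 1 := by rw [Finset.card_attach, hFcard]
    have hdomset : ∀ v ∉ insert u S, ∃ w ∈ insert u S, T.Adj w v := by
      intro v hv
      by_cases hadj : T.Adj u v
      · exact ⟨u, Finset.mem_insert_self u S, hadj⟩
      · have hvu : v ≠ u := by
          intro he
          subst he
          exact hv (Finset.mem_insert_self _ _)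
        have hvF : v ∈ F := by
          rw [hF, Finset.mem_filter]
          exact ⟨Finset.mem_univ _, hvu, hadj⟩
        exact ⟨p v hvF, Finset.mem_insert_of_mem (hpS v hvF), hp2 v hvF⟩
    have hdomS : γ ≤ S.card + 1 := by
      have h := domNumber_le_finsetCard T (insert u S) hdomset
      rw [hγ, Finset.card_insert_of_notMem huS] at h
      exact h
    have hScard : S.card = γ - 1 := by omega
    have hpinj : ∀ f1 (hf1 : f1 ∈ F) f2 (hf2 : f2 ∈ F), p f1 hf1 = p f2 hf2 → f1 = f2 := by
      have hinj' := Finset.injOn_of_card_image_eq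
        (f := fun f : {x // x ∈ F} => p f.1 f.2) (s := F.attach)
        (by rw [Finset.card_attach, hFcard, ← hS, hScard])
      intro f1 hf1 f2 hf2 heq
      have := hinj' (Finset.mem_coe.mpr (Finset.mem_attach _ ⟨f1, hf1⟩))
        (Finset.mem_coe.mpr (Finset.mem_attach _ ⟨f2, hf2⟩)) heq
      exact congrArg Subtype.val this
    have hScardtype : Fintype.card {x // x ∈ S} = γ - 1 := by
      rw [Fintype.card_coe, hScard]
    have hRcardtype : Fintype.card {x // x ∈ N \ S} = n - 2 * γ + 1 := by
      rw [Fintype.card_coe, Finset.card_sdiff_of_subset hSN, hNcard, hScard]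
      omega
    set eS := Fintype.equivFinOfCardEq hScardtype with heS
    set eR := Fintype.equivFinOfCardEq hRcardtype with heR
    set φ : V → Fin n := fun v =>
      if hv1 : v = u then ⟨0, by omega⟩
      else if hv2 : v ∈ S then ⟨1 + (eS ⟨v, hv2⟩).val, by have := (eS ⟨v, hv2⟩).isLt; omega⟩
      else if hv3 : v ∈ N then
        ⟨γ + (eR ⟨v, Finset.mem_sdiff.mpr ⟨hv3, hv2⟩⟩).val,
          by have := (eR ⟨v, Finset.mem_sdiff.mpr ⟨hv3, hv2⟩⟩).isLt; omega⟩
      else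
        have hvF : v ∈ F := Finset.mem_filter.mpr ⟨Finset.mem_univ v, hv1,
          fun had => hv3 (Finset.mem_filter.mpr ⟨Finset.mem_univ v, had⟩)⟩
        ⟨n - γ + 1 + (eS ⟨p v hvF, hpS v hvF⟩).val,
          by have := (eS ⟨p v hvF, hpS v hvF⟩).isLt; omega⟩
      with hφ
    have hφu : (φ u).val = 0 := by
      simp [hφ]
    have hφS : ∀ v (h : v ∈ S), (φ v).val = 1 + (eS ⟨v, h⟩).val := by
      intro v h
      have hvu : v ≠ u := fun e => huS (e ▸ h)
      simp [hφ, hvu, h]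
    have hφR : ∀ v (h3 : v ∈ N) (h2' : v ∉ S),
        (φ v).val = γ + (eR ⟨v, Finset.mem_sdiff.mpr ⟨h3, h2'⟩⟩).val := by
      intro v h3 h2'
      have hvu : v ≠ u := fun e => huN (e ▸ h3)
      simp [hφ, hvu, h2', h3]
    have hφF : ∀ v (h : v ∈ F), (φ v).val = n - γ + 1 + (eS ⟨p v h, hpS v h⟩).val := by
      intro v h
      have hprops : v ≠ u ∧ ¬ T.Adj u v := by
        rw [hF, Finset.mem_filter] at h
        exact h.2
      have hvN : v ∉ N := by
        rw [hN, Finset.mem_filter]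
        rintro ⟨-, hh⟩
        exact hprops.2 hh
      have hvS : v ∉ S := fun hh => hvN (hSN hh)
      simp [hφ, hprops.1, hvS, hvN]
    have hrS : ∀ v (h : v ∈ S), 1 ≤ (φ v).val ∧ (φ v).val ≤ γ - 1 := by
      intro v h
      rw [hφS v h]
      have := (eS ⟨v, h⟩).isLt
      omega
    have hrR : ∀ v (h3 : v ∈ N) (hs : v ∉ S), γ ≤ (φ v).val ∧ (φ v).val ≤ n - γ := by
      intro v h3 hs
      rw [hφR v h3 hs]
      have := (eR ⟨v, Finset.mem_sdiff.mpr ⟨h3, hs⟩⟩).isLt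
      omega
    have hrN : ∀ v (h : v ∈ N), 1 ≤ (φ v).val ∧ (φ v).val ≤ n - γ := by
      intro v h
      by_cases hs : v ∈ S
      · have := hrS v hs; omega
      · have := hrR v h hs; omega
    have hrF : ∀ v (h : v ∈ F), n - γ + 1 ≤ (φ v).val ∧ (φ v).val ≤ n - 1 := by
      intro v h
      rw [hφF v h]
      have := (eS ⟨p v h, hpS v h⟩).isLt
      omega
    have hclass : ∀ v : V, v = u ∨ v ∈ S ∨ (v ∈ N ∧ v ∉ S) ∨ v ∈ F := by
      intro v
      by_cases hc1 : v = u
      · exact Or.inl hc1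
      by_cases hc2 : v ∈ S
      · exact Or.inr (Or.inl hc2)
      by_cases hc3 : v ∈ N
      · exact Or.inr (Or.inr (Or.inl ⟨hc3, hc2⟩))
      refine Or.inr (Or.inr (Or.inr ?_))
      rw [hF, Finset.mem_filter]
      refine ⟨Finset.mem_univ _, hc1, fun had => hc3 ?_⟩
      rw [hN, Finset.mem_filter]
      exact ⟨Finset.mem_univ _, had⟩
    have hφ0 : ∀ v, (φ v).val = 0 → v = u := by
      intro v h0
      rcases hclass v with rfl | hv | ⟨hv, hv'⟩ | hv
      · rfl
      · have := hrS v hv; omega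
      · have := hrR v hv hv'; omega
      · have := hrF v hv; omega
    have hinj : Function.Injective φ := by
      intro a b hab
      have hval : (φ a).val = (φ b).val := congrArg Fin.val hab
      rcases hclass a with rfl | ha | ⟨ha, ha'⟩ | ha <;>
        rcases hclass b with rfl | hb | ⟨hb, hb'⟩ | hb
      · rfl
      · exfalso; rw [hφu] at hval; have := hrS b hb; omega
      · exfalso; rw [hφu] at hval; have := hrR b hb hb'; omega
      · exfalso; rw [hφu] at hval; have := hrF b hb; omega
      · exfalso; rw [hφu] at hval; have := hrS a ha; omega
      · rw [hφS a ha, hφS b hb] at hval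
        have heq : eS ⟨a, ha⟩ = eS ⟨b, hb⟩ := Fin.ext (by omega)
        exact congrArg Subtype.val (eS.injective heq)
      · exfalso; have := hrS a ha; have := hrR b hb hb'; omega
      · exfalso; have := hrS a ha; have := hrF b hb; omega
      · exfalso; rw [hφu] at hval; have := hrR a ha ha'; omega
      · exfalso; have := hrR a ha ha'; have := hrS b hb; omega
      · rw [hφR a ha ha', hφR b hb hb'] at hval
        have heq : eR ⟨a, Finset.mem_sdiff.mpr ⟨ha, ha'⟩⟩
            = eR ⟨b, Finset.mem_sdiff.mpr ⟨hb, hb'⟩⟩ := Fin.ext (by omega)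
        exact congrArg Subtype.val (eR.injective heq)
      · exfalso; have := hrR a ha ha'; have := hrF b hb; omega
      · exfalso; rw [hφu] at hval; have := hrF a ha; omega
      · exfalso; have := hrF a ha; have := hrS b hb; omega
      · exfalso; have := hrF a ha; have := hrR b hb hb'; omega
      · rw [hφF a ha, hφF b hb] at hval
        have heq : eS ⟨p a ha, hpS a ha⟩ = eS ⟨p b hb, hpS b hb⟩ := Fin.ext (by omega)
        exact hpinj a ha b hb (congrArg Subtype.val (eS.injective heq))
    have hbij : Function.Bijective φ :=
      (Fintype.bijective_iff_injective_and_card φ).mpr ⟨hinj, by rw [hn, Fintype.card_fin]⟩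
    set E0 : Finset (Sym2 V) :=
      N.image (fun w => s(u, w)) ∪ F.attach.image (fun f => s(p f.1 f.2, f.1)) with hE0
    have hdisjE : Disjoint (N.image fun w => s(u, w))
        (F.attach.image fun f => s(p f.1 f.2, f.1)) := by
      rw [Finset.disjoint_left]
      rintro e he1 he2
      obtain ⟨w, hw, rfl⟩ := Finset.mem_image.mp he1
      obtain ⟨⟨f, hf⟩, -, heq⟩ := Finset.mem_image.mp he2
      rw [Sym2.eq_iff] at heq
      rcases heq with ⟨h1', h2'⟩ | ⟨h1', h2'⟩
      · exact huN (h1' ▸ hpN f hf)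
      · exact huF (h2' ▸ hf)
    have hcard1 : (N.image fun w => s(u, w)).card = n - γ := by
      rw [Finset.card_image_of_injOn, hNcard]
      intro w hw w' hw' heq
      rw [Sym2.eq_iff] at heq
      rcases heq with ⟨-, h⟩ | ⟨h1', h2'⟩
      · exact h
      · exfalso; exact huN (h1' ▸ Finset.mem_coe.mp hw')
    have hcard2 : (F.attach.image fun f => s(p f.1 f.2, f.1)).card = γ - 1 := by
      rw [Finset.card_image_of_injOn, Finset.card_attach, hFcard]
      rintro ⟨f, hf⟩ - ⟨g, hg⟩ - heq
      rw [Sym2.eq_iff] at heq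
      rcases heq with ⟨hp', hf'⟩ | ⟨hp', hf'⟩
      · exact Subtype.ext hf'
      · exfalso
        have hp'' : p f hf = g := by simpa using hp'
        have hgN : g ∈ N := by rw [← hp'']; exact hpN f hf
        exact Finset.disjoint_left.mp hNF hgN hg
    have hE0card : E0.card = n - 1 := by
      rw [hE0, Finset.card_union_of_disjoint hdisjE, hcard1, hcard2]
      omega
    have hE0sub : E0 ⊆ T.edgeFinset := by
      intro e he
      rw [hE0, Finset.mem_union] at he
      rw [SimpleGraph.mem_edgeFinset]
      rcases he with h | h
      · obtain ⟨w, hw, rfl⟩ := Finset.mem_image.mp h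
        rw [hN, Finset.mem_filter] at hw
        exact hw.2
      · obtain ⟨⟨f, hf⟩, -, rfl⟩ := Finset.mem_image.mp h
        exact hp2 f hf
    have hTedge : T.edgeFinset.card = n - 1 := by
      have h := hT.card_edgeFinset
      rw [hn] at h
      omega
    have hE0eq : E0 = T.edgeFinset :=
      Finset.eq_of_subset_of_card_le hE0sub (by rw [hTedge, hE0card])
    have hAdjChar : ∀ a b : V, T.Adj a b ↔ s(a, b) ∈ E0 := by
      intro a b
      rw [hE0eq, SimpleGraph.mem_edgeFinset]
      exact (SimpleGraph.mem_edgeSet T).symm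
    have hAdj2 : ∀ a b : V, T.Adj a b ↔
        ((a = u ∧ b ∈ N) ∨ (b = u ∧ a ∈ N) ∨ (∃ hf : b ∈ F, a = p b hf)
          ∨ (∃ hf : a ∈ F, b = p a hf)) := by
      intro a b
      rw [hAdjChar a b, hE0, Finset.mem_union]
      constructor
      · rintro (h | h)
        · obtain ⟨w, hw, heq⟩ := Finset.mem_image.mp h
          rw [Sym2.eq_iff] at heq
          rcases heq with ⟨h1', h2'⟩ | ⟨h1', h2'⟩
          · exact Or.inl ⟨h1'.symm, h2' ▸ hw⟩
          · exact Or.inr (Or.inl ⟨h1'.symm, h2' ▸ hw⟩)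
        · obtain ⟨⟨f, hf⟩, -, heq⟩ := Finset.mem_image.mp h
          rw [Sym2.eq_iff] at heq
          rcases heq with ⟨h1', h2'⟩ | ⟨h1', h2'⟩
          · subst h2'
            exact Or.inr (Or.inr (Or.inl ⟨hf, h1'.symm⟩))
          · subst h2'
            exact Or.inr (Or.inr (Or.inr ⟨hf, h1'.symm⟩))
      · rintro (⟨rfl, hb⟩ | ⟨rfl, ha⟩ | ⟨hf, rfl⟩ | ⟨hf, rfl⟩)
        · exact Or.inl (Finset.mem_image.mpr ⟨b, hb, rfl⟩)
        · exact Or.inl (Finset.mem_image.mpr ⟨a, ha, Sym2.eq_swap⟩)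
        · exact Or.inr (Finset.mem_image.mpr ⟨⟨b, hf⟩, Finset.mem_attach _ _, rfl⟩)
        · exact Or.inr (Finset.mem_image.mpr ⟨⟨a, hf⟩, Finset.mem_attach _ _, Sym2.eq_swap⟩)
    have hstar : ∀ b' (hb' : b' ∈ N), (treeA n γ).Adj (φ u) (φ b') := by
      intro b' hb'
      rw [treeA_adj]
      have hr := hrN b' hb'
      refine ⟨fun hh => ?_, Or.inl ⟨hφu, hr.1, hr.2⟩⟩
      have := congrArg Fin.val hh
      rw [hφu] at this
      omega
    have hpend : ∀ f (hf : f ∈ F), (treeA n γ).Adj (φ (p f hf)) (φ f) := by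
      intro f hf
      rw [treeA_adj]
      have e1 := hφS (p f hf) (hpS f hf)
      have e2 := hφF f hf
      have hlt := (eS ⟨p f hf, hpS f hf⟩).isLt
      refine ⟨fun hh => ?_, Or.inr (Or.inl ⟨by omega, by omega, by omega⟩)⟩
      have := congrArg Fin.val hh
      omega
    have hforward : ∀ a b : V, T.Adj a b → (treeA n γ).Adj (φ a) (φ b) := by
      intro a b hab
      rcases (hAdj2 a b).mp hab with ⟨rfl, hb⟩ | ⟨rfl, ha⟩ | ⟨hf, rfl⟩ | ⟨hf, rfl⟩
      · exact hstar b hb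
      · exact (hstar a ha).symm
      · exact hpend b hf
      · exact (hpend a hf).symm
    have hback1 : ∀ a b : V,
        ((((φ a : Fin n) : ℕ) = 0 ∧ 1 ≤ ((φ b : Fin n) : ℕ) ∧ ((φ b : Fin n) : ℕ) ≤ n - γ) ∨
         (1 ≤ ((φ a : Fin n) : ℕ) ∧ ((φ a : Fin n) : ℕ) ≤ γ - 1 ∧
           ((φ b : Fin n) : ℕ) = n - γ + ((φ a : Fin n) : ℕ))) → T.Adj a b := by
      intro a b h
      rcases h with ⟨h0, hb1, hb2⟩ | ⟨ha1, ha2, hb3⟩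
      · have hau : a = u := hφ0 a h0
        subst hau
        rcases hclass b with rfl | hb | ⟨hb, -⟩ | hb
        · exfalso; rw [hφu] at hb1; omega
        · exact (hAdj2 a b).mpr (Or.inl ⟨rfl, hSN hb⟩)
        · exact (hAdj2 a b).mpr (Or.inl ⟨rfl, hb⟩)
        · exfalso; have := hrF b hb; omega
      · have haS : a ∈ S := by
          rcases hclass a with rfl | h' | ⟨hN', hS'⟩ | h'
          · exfalso; rw [hφu] at ha1; omega
          · exact h'
          · exfalso; have := hrR a hN' hS'; omega
          · exfalso; have := hrF a h'; omega
        have hbF : b ∈ F := by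
          rcases hclass b with rfl | h' | ⟨hN', hS'⟩ | h'
          · exfalso; rw [hφu] at hb3; have := hrS a haS; omega
          · exfalso; have := hrS b h'; have := hrS a haS; omega
          · exfalso; have := hrR b hN' hS'; have := hrS a haS; omega
          · exact h'
        have e1 := hφF b hbF
        have e2 := hφS a haS
        have heq : eS ⟨p b hbF, hpS b hbF⟩ = eS ⟨a, haS⟩ := Fin.ext (by omega)
        have hpa := congrArg Subtype.val (eS.injective heq)
        exact (hAdj2 a b).mpr (Or.inr (Or.inr (Or.inl ⟨hbF, hpa.symm⟩)))
    refine ⟨⟨Equiv.ofBijective φ hbij, ?_⟩⟩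
    intro a b
    constructor
    · intro h
      rw [show (Equiv.ofBijective φ hbij) a = φ a from rfl,
        show (Equiv.ofBijective φ hbij) b = φ b from rfl, treeA_adj] at h
      obtain ⟨-, h | h | h | h⟩ := h
      · exact hback1 a b (Or.inl h)
      · exact hback1 a b (Or.inr h)
      · exact (hback1 b a (Or.inl h)).symm
      · exact (hback1 b a (Or.inr h)).symm
    · exact hforward a b
  · -- iso → equality
    rintro ⟨ψ⟩
    set z0 : Fin n := ⟨0, by omega⟩ with hz0
    set u0 := ψ.symm z0 with hu0
    have key : status T u0 = n + γ - 2 := by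
      unfold status
      have hptw : ∀ v : V, T.dist u0 v = (treeA n γ).dist z0 (ψ v) := by
        intro v
        rw [← iso_dist_eq ψ u0 v (hconn.preconnected u0 v)]
        congr 1
        exact ψ.apply_symm_apply z0
      rw [Finset.sum_congr rfl (fun v _ => hptw v)]
      have hcomp : ∑ v : V, (treeA n γ).dist z0 (ψ v) = ∑ w : Fin n, (treeA n γ).dist z0 w :=
        Equiv.sum_comp ψ.toEquiv (fun w => (treeA n γ).dist z0 w)
      rw [hcomp]
      have := treeA_status_s7 h1 h2 (n := n) (γ := γ)
      unfold status at this
      convert this using 2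
    have hle : minStatus T ≤ n + γ - 2 := by
      rw [← key]
      exact Nat.sInf_le ⟨u0, rfl⟩
    omega
end
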